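/- arXiv:1302.2755 — 7 statements merged into one kernel-verified Lean document; each statement's English description precedes it below -/
import Mathlib

section
/- Let λ ≤ 0 be a real number. Then for all x, y ∈ (0,1), M_λ(m(x), m(y)) ≤ m(M_λ(x, y)). -/
open Real Set Filter

/-- Complete elliptic integral of the first kind. -/
noncomputable def K (r : ℝ) : ℝ :=
  ∫ θ in (0:ℝ)..(π/2), 1 / Real.sqrt (1 - r^2 * Real.sin θ ^ 2)

/-- Complete elliptic integral of the second kind. -/
noncomputable def E (r : ℝ) : ℝ :=
  ∫ θ in (0:ℝ)..(π/2), Real.sqrt (1 - r^2 * Real.sin θ ^ 2)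

/-- Complementary complete elliptic integral of the first kind: `K'(r) = K(√(1-r²))`. -/
noncomputable def K' (r : ℝ) : ℝ := K (Real.sqrt (1 - r^2))

/-- Complementary complete elliptic integral of the second kind: `E'(r) = E(√(1-r²))`. -/
noncomputable def E' (r : ℝ) : ℝ := E (Real.sqrt (1 - r^2))

/-- The special function `m(r) = (2/π) r'² K(r) K'(r)` (here `r'² = 1 - r²`). -/
noncomputable def m (r : ℝ) : ℝ := (2/π) * (1 - r^2) * K r * K' r

/-- The power mean of order `lam`: `M_λ(x,y)`. -/
noncomputable def pmean (lam x y : ℝ) : ℝ :=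
  if lam = 0 then Real.sqrt (x * y) else ((x ^ lam + y ^ lam) / 2) ^ (1 / lam)

open intervalIntegral MeasureTheory
section basics

lemma q_pos {r : ℝ} (hr : r^2 < 1) (θ : ℝ) : 0 < 1 - r^2 * Real.sin θ ^ 2 := by
  nlinarith [sq_nonneg (Real.sin θ), Real.sin_sq_le_one θ, sq_nonneg r,
    mul_le_mul_of_nonneg_left (Real.sin_sq_le_one θ) (sq_nonneg r)]

lemma q_cont (r : ℝ) : Continuous fun θ : ℝ => 1 - r^2 * Real.sin θ ^ 2 := by
  continuity

lemma sqrt_q_pos {r : ℝ} (hr : r^2 < 1) (θ : ℝ) :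
    0 < Real.sqrt (1 - r^2 * Real.sin θ ^ 2) := Real.sqrt_pos.2 (q_pos hr θ)

lemma sqrt_q_cont (r : ℝ) : Continuous fun θ : ℝ => Real.sqrt (1 - r^2 * Real.sin θ ^ 2) :=
  (q_cont r).sqrt

lemma invsqrt_q_cont {r : ℝ} (hr : r^2 < 1) :
    Continuous fun θ : ℝ => 1 / Real.sqrt (1 - r^2 * Real.sin θ ^ 2) :=
  continuous_const.div (sqrt_q_cont r) fun θ => (sqrt_q_pos hr θ).ne'

lemma E_intble {r : ℝ} : IntervalIntegrable
    (fun θ : ℝ => Real.sqrt (1 - r^2 * Real.sin θ ^ 2)) volume 0 (π/2) :=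
  (sqrt_q_cont r).intervalIntegrable _ _

lemma K_intble {r : ℝ} (hr : r^2 < 1) : IntervalIntegrable
    (fun θ : ℝ => 1 / Real.sqrt (1 - r^2 * Real.sin θ ^ 2)) volume 0 (π/2) :=
  (invsqrt_q_cont hr).intervalIntegrable _ _

lemma pi_half_pos : (0:ℝ) < π/2 := by positivity

lemma E_pos {r : ℝ} (hr : r^2 < 1) : 0 < E r := by
  have h : (1:ℝ) ≤ E r := by
    have : (1:ℝ) = ∫ θ in (0:ℝ)..(π/2), Real.cos θ := by
      simp
    rw [this, E]
    apply intervalIntegral.integral_mono_on pi_half_pos.le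
      (Real.continuous_cos.intervalIntegrable _ _) E_intble
    intro θ hθ
    rw [show (1:ℝ) - r^2*Real.sin θ^2 = Real.cos θ^2 + (1 - r^2)*Real.sin θ^2 by
      nlinarith [Real.sin_sq_add_cos_sq θ]]
    calc Real.cos θ = Real.sqrt (Real.cos θ ^ 2) := by
          rw [Real.sqrt_sq (Real.cos_nonneg_of_mem_Icc ⟨by linarith [hθ.1, Real.pi_pos], hθ.2⟩)]
      _ ≤ _ := Real.sqrt_le_sqrt (by nlinarith [sq_nonneg (Real.sin θ)])
  linarith

lemma E_le_K {r : ℝ} (hr : r^2 < 1) : E r ≤ K r := by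
  rw [E, K]
  apply intervalIntegral.integral_mono_on pi_half_pos.le E_intble (K_intble hr)
  intro θ _
  have hq := q_pos hr θ
  have h1 : (1 - r^2 * Real.sin θ ^ 2) ≤ 1 := by nlinarith [sq_nonneg r, sq_nonneg (Real.sin θ)]
  have hs := Real.sqrt_pos.2 hq
  calc Real.sqrt (1-r^2*Real.sin θ^2) ≤ 1 := Real.sqrt_le_one.2 h1
    _ ≤ 1 / Real.sqrt (1-r^2*Real.sin θ^2) :=
        one_le_one_div hs (Real.sqrt_le_one.2 h1)

lemma K_pos {r : ℝ} (hr : r^2 < 1) : 0 < K r := lt_of_lt_of_le (E_pos hr) (E_le_K hr)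

lemma sq_lt_one_of_mem {r : ℝ} (hr : r ∈ Ioo (0:ℝ) 1) : r^2 < 1 := by nlinarith [hr.1, hr.2]

lemma comp_mem {r : ℝ} (hr : r ∈ Ioo (0:ℝ) 1) : Real.sqrt (1 - r^2) ∈ Ioo (0:ℝ) 1 := by
  have h1 : (0:ℝ) < 1 - r^2 := by nlinarith [hr.1, hr.2]
  constructor
  · exact Real.sqrt_pos.2 h1
  · have h2 := Real.sqrt_lt_sqrt (show (0:ℝ) ≤ 1 - r^2 by linarith) (show 1 - r^2 < 1 by nlinarith [hr.1])
    simpa using h2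

lemma comp_sq {r : ℝ} (hr : r^2 < 1) : (Real.sqrt (1 - r^2))^2 = 1 - r^2 :=
  Real.sq_sqrt (by linarith)

lemma K'_pos {r : ℝ} (hr : r ∈ Ioo (0:ℝ) 1) : 0 < K' r := by
  rw [K']
  exact K_pos (by rw [comp_sq (sq_lt_one_of_mem hr)]; nlinarith [hr.1])

lemma E'_pos {r : ℝ} (hr : r ∈ Ioo (0:ℝ) 1) : 0 < E' r := by
  rw [E']
  exact E_pos (by rw [comp_sq (sq_lt_one_of_mem hr)]; nlinarith [hr.1])

lemma E'_le_K' {r : ℝ} (hr : r ∈ Ioo (0:ℝ) 1) : E' r ≤ K' r := by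
  rw [E', K']
  exact E_le_K (by rw [comp_sq (sq_lt_one_of_mem hr)]; nlinarith [hr.1])

lemma m_pos {r : ℝ} (hr : r ∈ Ioo (0:ℝ) 1) : 0 < m r := by
  have := K_pos (sq_lt_one_of_mem hr)
  have := K'_pos hr
  have : (0:ℝ) < 1 - r^2 := by nlinarith [hr.1, hr.2]
  have := Real.pi_pos
  rw [m]; positivity

end basics

section scratch
variable {r : ℝ}

lemma q_pos' {x : ℝ} (hx : x^2 < 1) (θ : ℝ) : 0 < 1 - x^2 * Real.sin θ ^ 2 := by
  nlinarith [Real.sin_sq_le_one θ, sq_nonneg x,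
    mul_le_mul_of_nonneg_left (Real.sin_sq_le_one θ) (sq_nonneg x)]

lemma hasDerivAt_sqrt_q (θ : ℝ) {x : ℝ} (hx : x^2 < 1) :
    HasDerivAt (fun y : ℝ => Real.sqrt (1 - y^2 * Real.sin θ ^ 2))
      (-(x * Real.sin θ^2) / Real.sqrt (1 - x^2 * Real.sin θ ^ 2)) x := by
  have hq := q_pos' hx θ
  have h1 : HasDerivAt (fun y : ℝ => 1 - y^2 * Real.sin θ ^ 2)
      (-(2 * x * Real.sin θ ^ 2)) x := by
    simpa using ((hasDerivAt_pow 2 x).mul_const (Real.sin θ^2)).const_sub 1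
  have h2 := (Real.hasDerivAt_sqrt hq.ne').comp x h1
  refine h2.congr_deriv (Eq.symm ?_)
  have hs : Real.sqrt (1 - x^2*Real.sin θ^2) ≠ 0 := (Real.sqrt_pos.2 hq).ne'
  field_simp

lemma hasDerivAt_inv_sqrt_q (θ : ℝ) {x : ℝ} (hx : x^2 < 1) :
    HasDerivAt (fun y : ℝ => 1 / Real.sqrt (1 - y^2 * Real.sin θ ^ 2))
      (x * Real.sin θ^2 / (Real.sqrt (1 - x^2 * Real.sin θ ^ 2) * (1 - x^2 * Real.sin θ ^ 2))) x := by
  have hq := q_pos' hx θ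
  have hs : Real.sqrt (1 - x^2*Real.sin θ^2) ≠ 0 := (Real.sqrt_pos.2 hq).ne'
  have h2 := ((hasDerivAt_sqrt_q θ hx).inv hs)
  have hsq : Real.sqrt (1 - x^2*Real.sin θ^2) * Real.sqrt (1 - x^2*Real.sin θ^2)
      = 1 - x^2*Real.sin θ^2 := Real.mul_self_sqrt hq.le
  convert h2 using 1
  · rfl
  · rfl
  · funext y; rw [one_div]; rfl
  · rw [Real.sq_sqrt hq.le]
    field_simp

end scratch

section param
variable {r : ℝ}

lemma ball_abs_le {r : ℝ} (hr : |r| < 1) :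
    ∀ x ∈ Metric.ball r ((1-|r|)/2), |x| ≤ (1+|r|)/2 := by
  intro x hx
  rw [Metric.mem_ball, Real.dist_eq] at hx
  have : |x| - |r| ≤ |x - r| := by
    simpa using abs_sub_abs_le_abs_sub x r
  linarith

lemma qx_lb {x θ : ℝ} (hb : |x| ≤ (1+|r|)/2) (hr : |r| < 1) :
    1 - ((1+|r|)/2)^2 ≤ 1 - x^2 * Real.sin θ ^ 2 := by
  have h1 : x^2 ≤ ((1+|r|)/2)^2 := by nlinarith [abs_nonneg x, sq_abs x]
  nlinarith [Real.sin_sq_le_one θ, sq_nonneg x,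
    mul_le_mul_of_nonneg_left (Real.sin_sq_le_one θ) (sq_nonneg x)]

lemma b_lt_one {r : ℝ} (hr : |r| < 1) : (1+|r|)/2 < 1 := by linarith

lemma b_sq_lt_one {r : ℝ} (hr : |r| < 1) : ((1+|r|)/2)^2 < 1 := by
  nlinarith [abs_nonneg r]

lemma sq_lt_one_of_abs_le {x r : ℝ} (hr : |r| < 1) (h : |x| ≤ (1+|r|)/2) : x^2 < 1 := by
  nlinarith [abs_nonneg x, sq_abs x, abs_nonneg r]

lemma hasDerivAt_E_int {r : ℝ} (hr : r^2 < 1) :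
    HasDerivAt (fun x : ℝ => ∫ θ in (0:ℝ)..(π/2), Real.sqrt (1 - x^2 * Real.sin θ ^ 2))
      (∫ θ in (0:ℝ)..(π/2),
        -(r * Real.sin θ^2) / Real.sqrt (1 - r^2 * Real.sin θ ^ 2)) r := by
  have habs : |r| < 1 := (sq_lt_one_iff_abs_lt_one r).1 hr
  set b := (1+|r|)/2 with hbdef
  have hqb : (0:ℝ) < 1 - b^2 := by rw [hbdef]; have := b_sq_lt_one habs; linarith
  have key := intervalIntegral.hasDerivAt_integral_of_dominated_loc_of_deriv_le
    (F := fun x θ => Real.sqrt (1 - x^2 * Real.sin θ ^ 2))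
    (F' := fun x θ => -(x * Real.sin θ^2) / Real.sqrt (1 - x^2 * Real.sin θ ^ 2))
    (x₀ := r) (a := (0:ℝ)) (b := π/2) (μ := volume)
    (bound := fun _ => b / Real.sqrt (1 - b^2))
    (Metric.ball_mem_nhds r (show (0:ℝ) < (1-|r|)/2 by linarith))
    ?_ ?_ ?_ ?_ ?_ ?_
  · exact key.2
  · filter_upwards with x
    exact (Continuous.sqrt (by continuity)).aestronglyMeasurable
  · exact (Continuous.sqrt (by continuity)).intervalIntegrable _ _
  · exact ((Continuous.div (by continuity) (Continuous.sqrt (by continuity))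
      (fun θ => (Real.sqrt_pos.2 (q_pos' hr θ)).ne'))).aestronglyMeasurable
  · apply ae_of_all
    intro θ _ x hx
    have hxb := ball_abs_le habs x hx
    have hq0 : 0 < 1 - x^2*Real.sin θ^2 :=
      lt_of_lt_of_le hqb (qx_lb hxb habs)
    rw [Real.norm_eq_abs, abs_div, abs_neg, abs_mul, abs_of_nonneg (Real.sqrt_nonneg _),
      abs_of_nonneg (sq_nonneg (Real.sin θ)) ]
    apply div_le_div₀ (by positivity)
      (by nlinarith [Real.sin_sq_le_one θ, abs_nonneg x, sq_abs (Real.sin θ)])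
      (Real.sqrt_pos.2 hqb)
      (Real.sqrt_le_sqrt (qx_lb hxb habs))
  · exact intervalIntegrable_const
  · apply ae_of_all
    intro θ _ x hx
    exact hasDerivAt_sqrt_q θ (sq_lt_one_of_abs_le habs (ball_abs_le habs x hx))

end param

lemma hasDerivAt_K_int {r : ℝ} (hr : r^2 < 1) :
    HasDerivAt (fun x : ℝ => ∫ θ in (0:ℝ)..(π/2), 1 / Real.sqrt (1 - x^2 * Real.sin θ ^ 2))
      (∫ θ in (0:ℝ)..(π/2),
        r * Real.sin θ^2 / (Real.sqrt (1 - r^2 * Real.sin θ ^ 2) * (1 - r^2 * Real.sin θ ^ 2))) r := by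
  have habs : |r| < 1 := (sq_lt_one_iff_abs_lt_one r).1 hr
  set b := (1+|r|)/2 with hbdef
  have hqb : (0:ℝ) < 1 - b^2 := by rw [hbdef]; have := b_sq_lt_one habs; linarith
  have key := intervalIntegral.hasDerivAt_integral_of_dominated_loc_of_deriv_le
    (F := fun x θ => 1 / Real.sqrt (1 - x^2 * Real.sin θ ^ 2))
    (F' := fun x θ => x * Real.sin θ^2 / (Real.sqrt (1 - x^2 * Real.sin θ ^ 2) * (1 - x^2 * Real.sin θ ^ 2)))
    (x₀ := r) (a := (0:ℝ)) (b := π/2) (μ := volume)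
    (bound := fun _ => b / (Real.sqrt (1 - b^2) * (1 - b^2)))
    (Metric.ball_mem_nhds r (show (0:ℝ) < (1-|r|)/2 by linarith))
    ?_ ?_ ?_ ?_ ?_ ?_
  · exact key.2
  · filter_upwards [Metric.ball_mem_nhds r (show (0:ℝ) < (1-|r|)/2 by linarith)] with x hx
    have hx2 : x^2 < 1 := sq_lt_one_of_abs_le habs (ball_abs_le habs x hx)
    exact (continuous_const.div (Continuous.sqrt (by continuity))
      (fun θ => (Real.sqrt_pos.2 (q_pos' hx2 θ)).ne')).aestronglyMeasurable
  · exact (continuous_const.div (Continuous.sqrt (by continuity))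
      (fun θ => (Real.sqrt_pos.2 (q_pos' hr θ)).ne')).intervalIntegrable _ _
  · apply Continuous.aestronglyMeasurable
    apply Continuous.div (by continuity)
      ((Continuous.sqrt (by continuity)).mul (by continuity))
    intro θ
    have hq := q_pos' hr θ
    exact (mul_pos (Real.sqrt_pos.2 hq) hq).ne'
  · apply ae_of_all
    intro θ _ x hx
    have hxb := ball_abs_le habs x hx
    have hlb := qx_lb (r := r) (θ := θ) hxb habs
    have hq0 : 0 < 1 - x^2*Real.sin θ^2 := lt_of_lt_of_le hqb hlb
    rw [Real.norm_eq_abs, abs_div, abs_mul,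
      abs_of_nonneg (sq_nonneg (Real.sin θ)),
      abs_of_nonneg (by positivity : (0:ℝ) ≤ Real.sqrt (1 - x^2*Real.sin θ^2) * (1 - x^2*Real.sin θ^2))]
    apply div_le_div₀ (by positivity)
      (by nlinarith [Real.sin_sq_le_one θ, abs_nonneg x, sq_abs (Real.sin θ)])
      (by positivity)
    exact mul_le_mul (Real.sqrt_le_sqrt hlb) hlb hqb.le (Real.sqrt_nonneg _)
  · exact intervalIntegrable_const
  · apply ae_of_all
    intro θ _ x hx
    exact hasDerivAt_inv_sqrt_q θ (sq_lt_one_of_abs_le habs (ball_abs_le habs x hx))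

section identities
variable {r : ℝ}

lemma E_deriv_integral_eq (hr0 : r ≠ 0) (hr : r^2 < 1) :
    (∫ θ in (0:ℝ)..(π/2), -(r * Real.sin θ^2) / Real.sqrt (1 - r^2 * Real.sin θ ^ 2))
      = (E r - K r)/r := by
  have h : ∀ θ : ℝ, -(r * Real.sin θ^2) / Real.sqrt (1 - r^2 * Real.sin θ ^ 2)
      = r⁻¹ * (Real.sqrt (1 - r^2 * Real.sin θ ^ 2) - 1 / Real.sqrt (1 - r^2 * Real.sin θ ^ 2)) := by
    intro θ
    have hq := q_pos hr θ
    have hs : Real.sqrt (1 - r^2*Real.sin θ^2) ≠ 0 := (Real.sqrt_pos.2 hq).ne'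
    have hsq : Real.sqrt (1 - r^2*Real.sin θ^2) * Real.sqrt (1 - r^2*Real.sin θ^2)
        = 1 - r^2*Real.sin θ^2 := Real.mul_self_sqrt hq.le
    field_simp
    linear_combination -hsq
  simp only [h]
  rw [intervalIntegral.integral_const_mul,
    intervalIntegral.integral_sub E_intble (K_intble hr)]
  rw [E, K]; field_simp

lemma hasDerivAt_phi (hr : r^2 < 1) (θ : ℝ) :
    HasDerivAt (fun t : ℝ => Real.sin t * Real.cos t / Real.sqrt (1 - r^2 * Real.sin t ^ 2))
      (Real.cos θ^2 / Real.sqrt (1 - r^2 * Real.sin θ ^ 2)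
        - (1 - r^2) * Real.sin θ^2 / (Real.sqrt (1 - r^2 * Real.sin θ ^ 2) * (1 - r^2 * Real.sin θ ^ 2))) θ := by
  have hq := q_pos hr θ
  have hs : Real.sqrt (1 - r^2*Real.sin θ^2) ≠ 0 := (Real.sqrt_pos.2 hq).ne'
  have hnum : HasDerivAt (fun t => Real.sin t * Real.cos t)
      (Real.cos θ * Real.cos θ + Real.sin θ * (-Real.sin θ)) θ :=
    (Real.hasDerivAt_sin θ).mul (Real.hasDerivAt_cos θ)
  have hq' : HasDerivAt (fun t : ℝ => 1 - r^2 * Real.sin t ^ 2)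
      (-(r^2 * (2 * Real.sin θ * Real.cos θ))) θ := by
    have h1 : HasDerivAt (fun t : ℝ => Real.sin t ^ 2) (2 * Real.sin θ * Real.cos θ) θ := by
      simpa [mul_comm] using ((Real.hasDerivAt_sin θ).fun_pow 2)
    simpa using (h1.const_mul (r^2)).const_sub 1
  have hsqrt : HasDerivAt (fun t : ℝ => Real.sqrt (1 - r^2 * Real.sin t ^ 2))
      (1 / (2 * Real.sqrt (1 - r^2 * Real.sin θ ^ 2)) * -(r^2 * (2 * Real.sin θ * Real.cos θ))) θ :=
    (Real.hasDerivAt_sqrt hq.ne').comp θ hq'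
  have hdiv := hnum.div hsqrt hs
  refine hdiv.congr_deriv (Eq.symm ?_)
  have hc : Real.cos θ ^ 2 = 1 - Real.sin θ ^ 2 := by
    nlinarith [Real.sin_sq_add_cos_sq θ]
  have hu : Real.sqrt (1 - r^2*Real.sin θ^2) ^ 2 = 1 - r^2*Real.sin θ^2 := Real.sq_sqrt hq.le
  set u := Real.sqrt (1 - r^2*Real.sin θ^2) with hudef
  rw [← hu]
  have hu0 : u ≠ 0 := hs
  field_simp
  linear_combination ((u^2 * (2*u^2 - 1 + r^2) - (1 - r^2)*(1-Real.sin θ^2)*2*u^2) + ((3:ℝ)*u^2 + (-3:ℝ)*u^2*r^2 + (-2:ℝ)*u^2*Real.sin θ^2 + (2:ℝ)*u^2*Real.sin θ^2*r^2 + (-2:ℝ)*u^4 + (-2:ℝ)*u^4*Real.sin θ^2*r^2)) * hc + ((2:ℝ)*u^4*Real.sin θ^2) * hu + ((2:ℝ)*u^4*r^2*Real.sin θ^2 - r^2*Real.sin θ^2) * hc + (Real.sin θ^2 - (2:ℝ)*u^4*Real.sin θ^2) * hu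

lemma K_deriv_integral_eq (hr : r ∈ Ioo (0:ℝ) 1) :
    (∫ θ in (0:ℝ)..(π/2),
        r * Real.sin θ^2 / (Real.sqrt (1 - r^2 * Real.sin θ ^ 2) * (1 - r^2 * Real.sin θ ^ 2)))
      = (E r - (1-r^2) * K r)/(r*(1-r^2)) := by
  have hr2 : r^2 < 1 := sq_lt_one_of_mem hr
  have hr0 : (0:ℝ) < r := hr.1
  have hrho : (0:ℝ) < 1 - r^2 := by linarith
  have hden : ∀ θ : ℝ, Real.sqrt (1 - r^2*Real.sin θ^2) * (1 - r^2*Real.sin θ^2) ≠ 0 := by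
    intro θ; have hq := q_pos hr2 θ; positivity
  have c1 : Continuous fun θ : ℝ => Real.cos θ^2 / Real.sqrt (1 - r^2*Real.sin θ^2) :=
    (Real.continuous_cos.pow 2).div (sqrt_q_cont r) fun θ => (sqrt_q_pos hr2 θ).ne'
  have c2 : Continuous fun θ : ℝ =>
      (1-r^2) * Real.sin θ^2 / (Real.sqrt (1 - r^2*Real.sin θ^2) * (1 - r^2*Real.sin θ^2)) :=
    (continuous_const.mul (Real.continuous_sin.pow 2)).div
      ((sqrt_q_cont r).mul (q_cont r)) hden
  have h0 : (∫ θ in (0:ℝ)..(π/2),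
      (Real.cos θ^2 / Real.sqrt (1 - r^2*Real.sin θ^2)
        - (1-r^2) * Real.sin θ^2 / (Real.sqrt (1 - r^2*Real.sin θ^2) * (1 - r^2*Real.sin θ^2)))) = 0 := by
    rw [intervalIntegral.integral_eq_sub_of_hasDerivAt (fun θ _ => hasDerivAt_phi hr2 θ)
      ((c1.sub c2).intervalIntegrable _ _)]
    simp
  rw [intervalIntegral.integral_sub (c1.intervalIntegrable _ _) (c2.intervalIntegrable _ _)] at h0
  have hcos_int : (∫ θ in (0:ℝ)..(π/2), Real.cos θ^2 / Real.sqrt (1 - r^2*Real.sin θ^2))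
      = (r^2)⁻¹ * (E r - (1-r^2) * K r) := by
    have hpt : ∀ θ : ℝ, Real.cos θ^2 / Real.sqrt (1 - r^2*Real.sin θ^2)
        = (r^2)⁻¹ * (Real.sqrt (1 - r^2*Real.sin θ^2)
            - (1-r^2) * (1 / Real.sqrt (1 - r^2*Real.sin θ^2))) := by
      intro θ
      have hq := q_pos hr2 θ
      have hs : Real.sqrt (1 - r^2*Real.sin θ^2) ≠ 0 := (sqrt_q_pos hr2 θ).ne'
      have hu : Real.sqrt (1 - r^2*Real.sin θ^2) ^ 2 = 1 - r^2*Real.sin θ^2 := Real.sq_sqrt hq.le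
      have hc : Real.cos θ ^ 2 = 1 - Real.sin θ ^ 2 := by nlinarith [Real.sin_sq_add_cos_sq θ]
      field_simp
      linear_combination (r^2) * hc - hu
    simp only [hpt]
    rw [intervalIntegral.integral_const_mul,
      intervalIntegral.integral_sub E_intble (((K_intble hr2)).const_mul (1-r^2)),
      intervalIntegral.integral_const_mul]
    rw [E, K]
  have h1 : (∫ θ in (0:ℝ)..(π/2),
      (1-r^2) * Real.sin θ^2 / (Real.sqrt (1 - r^2*Real.sin θ^2) * (1 - r^2*Real.sin θ^2)))
      = (r^2)⁻¹ * (E r - (1-r^2) * K r) := by linarith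
  have hpt2 : ∀ θ : ℝ, r * Real.sin θ^2 / (Real.sqrt (1 - r^2*Real.sin θ^2) * (1 - r^2*Real.sin θ^2))
      = (r/(1-r^2)) * ((1-r^2) * Real.sin θ^2 / (Real.sqrt (1 - r^2*Real.sin θ^2) * (1 - r^2*Real.sin θ^2))) := by
    intro θ
    have h := hden θ
    have hρ : (1:ℝ) - r^2 ≠ 0 := hrho.ne'
    field_simp
  simp only [hpt2]
  rw [intervalIntegral.integral_const_mul, h1]
  field_simp

lemma hasDerivAt_K_c (hr : r ∈ Ioo (0:ℝ) 1) :
    HasDerivAt K ((E r - (1-r^2) * K r)/(r*(1-r^2))) r := by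
  have h := hasDerivAt_K_int (sq_lt_one_of_mem hr)
  rw [K_deriv_integral_eq hr] at h
  exact h

lemma hasDerivAt_E_c (hr : r ∈ Ioo (0:ℝ) 1) :
    HasDerivAt E ((E r - K r)/r) r := by
  have h := hasDerivAt_E_int (sq_lt_one_of_mem hr)
  rw [E_deriv_integral_eq hr.1.ne' (sq_lt_one_of_mem hr)] at h
  exact h

lemma hasDerivAt_comp_sqrt (hr : r ∈ Ioo (0:ℝ) 1) :
    HasDerivAt (fun x : ℝ => Real.sqrt (1 - x^2)) (-r / Real.sqrt (1-r^2)) r := by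
  have hρ : (0:ℝ) < 1 - r^2 := by nlinarith [hr.1, hr.2]
  have h1 : HasDerivAt (fun x : ℝ => 1 - x^2) (-(2*r)) r := by
    simpa using (hasDerivAt_pow 2 r).const_sub 1
  have h2 := (Real.hasDerivAt_sqrt hρ.ne').comp r h1
  refine h2.congr_deriv (Eq.symm ?_)
  have hs : Real.sqrt (1-r^2) ≠ 0 := (Real.sqrt_pos.2 hρ).ne'
  field_simp

lemma hasDerivAt_K'_c (hr : r ∈ Ioo (0:ℝ) 1) :
    HasDerivAt K' (-(E' r - r^2 * K' r)/(r*(1-r^2))) r := by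
  have hρ : (0:ℝ) < 1 - r^2 := by nlinarith [hr.1, hr.2]
  have hs := comp_mem hr
  have h := (hasDerivAt_K_c hs).comp r (hasDerivAt_comp_sqrt hr)
  have hKK : K' = K ∘ fun x : ℝ => Real.sqrt (1 - x^2) := rfl
  rw [hKK]
  refine h.congr_deriv (Eq.symm ?_)
  rw [comp_sq (sq_lt_one_of_mem hr)]
  have hEs : E (Real.sqrt (1-r^2)) = E' r := rfl
  have hKs : K (Real.sqrt (1-r^2)) = K' r := rfl
  simp only [hEs, hKs]
  have hs0 : Real.sqrt (1-r^2) ≠ 0 := (Real.sqrt_pos.2 hρ).ne'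
  have hu : Real.sqrt (1-r^2) * Real.sqrt (1-r^2) = 1 - r^2 := Real.mul_self_sqrt hρ.le
  have hr0 : r ≠ 0 := hr.1.ne'
  have hu2 : Real.sqrt (1-r^2) ^ 2 = 1 - r^2 := Real.sq_sqrt hρ.le
  field_simp
  ring_nf
  have hKc : (K ∘ fun x : ℝ => Real.sqrt (1 - x^2)) r = K (Real.sqrt (1-r^2)) := rfl
  linear_combination (r^4 * Real.sqrt (1-r^2)^2) * hKs + (-(r^2*E' r) + r^4*K' r) * hu2 + (r^4 * Real.sqrt (1-r^2)^2) * hKc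

lemma hasDerivAt_E'_c (hr : r ∈ Ioo (0:ℝ) 1) :
    HasDerivAt E' (-(r * (E' r - K' r))/(1-r^2)) r := by
  have hρ : (0:ℝ) < 1 - r^2 := by nlinarith [hr.1, hr.2]
  have hs := comp_mem hr
  have h := (hasDerivAt_E_c hs).comp r (hasDerivAt_comp_sqrt hr)
  have hEE : E' = E ∘ fun x : ℝ => Real.sqrt (1 - x^2) := rfl
  rw [hEE]
  refine h.congr_deriv (Eq.symm ?_)
  have hEs : E (Real.sqrt (1-r^2)) = E' r := rfl
  have hKs : K (Real.sqrt (1-r^2)) = K' r := rfl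
  simp only [hEs, hKs]
  have hs0 : Real.sqrt (1-r^2) ≠ 0 := (Real.sqrt_pos.2 hρ).ne'
  have hr0 : r ≠ 0 := hr.1.ne'
  have hu2 : Real.sqrt (1-r^2) ^ 2 = 1 - r^2 := Real.sq_sqrt hρ.le
  field_simp
  ring_nf
  rw [show (E ∘ fun x : ℝ => Real.sqrt (1 - x^2)) r = E' r from rfl, hu2]
  ring

lemma hasDerivAt_m_c (hr : r ∈ Ioo (0:ℝ) 1) :
    HasDerivAt m ((2/(π*r)) * (K' r * E r - K r * E' r - K r * K' r)) r := by
  have hρ : (0:ℝ) < 1 - r^2 := by nlinarith [hr.1, hr.2]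
  have hπ := Real.pi_pos
  have hr0 : r ≠ 0 := hr.1.ne'
  have h1 : HasDerivAt (fun x : ℝ => (2/π) * (1 - x^2)) ((2/π) * (-(2*r))) r := by
    simpa using ((hasDerivAt_pow 2 r).const_sub 1).const_mul (2/π)
  have h := (h1.mul (hasDerivAt_K_c hr)).mul (hasDerivAt_K'_c hr)
  have hm : m = fun x : ℝ => (2/π) * (1 - x^2) * K x * K' x := rfl
  rw [hm]
  refine h.congr_deriv (Eq.symm ?_)
  simp only [Pi.mul_apply]
  field_simp
  ring_nf

noncomputable def Nf (r : ℝ) : ℝ := K' r * E r - K r * E' r - K r * K' r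
noncomputable def Df (r : ℝ) : ℝ := (1 - r^2) * K r * K' r
noncomputable def Gf (r : ℝ) : ℝ := Nf r / Df r

lemma Df_pos (hr : r ∈ Ioo (0:ℝ) 1) : 0 < Df r := by
  have h1 := K_pos (sq_lt_one_of_mem hr)
  have h2 := K'_pos hr
  have h3 : (0:ℝ) < 1 - r^2 := by nlinarith [hr.1, hr.2]
  rw [Df]; positivity

lemma Nf_neg (hr : r ∈ Ioo (0:ℝ) 1) : Nf r < 0 := by
  have h1 := K_pos (sq_lt_one_of_mem hr)
  have h2 := K'_pos hr
  have h3 := E_le_K (sq_lt_one_of_mem hr)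
  have h4 := E'_pos hr
  rw [Nf]
  nlinarith

lemma hasDerivAt_Gf (hr : r ∈ Ioo (0:ℝ) 1) :
    ∃ v, HasDerivAt Gf v r ∧ v ≤ 0 := by
  have hρ : (0:ℝ) < 1 - r^2 := by nlinarith [hr.1, hr.2]
  have hr0 : (0:ℝ) < r := hr.1
  have hK := hasDerivAt_K_c hr
  have hK' := hasDerivAt_K'_c hr
  have hE := hasDerivAt_E_c hr
  have hE' := hasDerivAt_E'_c hr
  have hN : HasDerivAt Nf
      ((-(E' r - r^2 * K' r)/(r*(1-r^2)) * E r + K' r * ((E r - K r)/r)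
        - ((E r - (1-r^2) * K r)/(r*(1-r^2)) * E' r + K r * (-(r * (E' r - K' r))/(1-r^2))))
        - ((E r - (1-r^2) * K r)/(r*(1-r^2)) * K' r + K r * (-(E' r - r^2 * K' r)/(r*(1-r^2))))) r :=
    ((hK'.mul hE).sub (hK.mul hE')).sub (hK.mul hK')
  have h1 : HasDerivAt (fun x : ℝ => 1 - x^2) (-(2*r)) r := by
    simpa using (hasDerivAt_pow 2 r).const_sub 1
  have hD : HasDerivAt Df
      ((-(2*r) * K r + (1 - r^2) * ((E r - (1-r^2) * K r)/(r*(1-r^2)))) * K' r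
        + (1 - r^2) * K r * (-(E' r - r^2 * K' r)/(r*(1-r^2)))) r :=
    (h1.mul hK).mul hK'
  have hDne : Df r ≠ 0 := (Df_pos hr).ne'
  refine ⟨_, hN.div hD hDne, ?_⟩
  have key : ((-(E' r - r^2 * K' r)/(r*(1-r^2)) * E r + K' r * ((E r - K r)/r)
        - ((E r - (1-r^2) * K r)/(r*(1-r^2)) * E' r + K r * (-(r * (E' r - K' r))/(1-r^2))))
        - ((E r - (1-r^2) * K r)/(r*(1-r^2)) * K' r + K r * (-(E' r - r^2 * K' r)/(r*(1-r^2))))) * Df r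
      - Nf r * ((-(2*r) * K r + (1 - r^2) * ((E r - (1-r^2) * K r)/(r*(1-r^2)))) * K' r
        + (1 - r^2) * K r * (-(E' r - r^2 * K' r)/(r*(1-r^2))))
      = -(((K' r * (K r - E r))^2 + (K r * E' r)^2 + 2*(r * K r * K' r)^2)/r) := by
    rw [Nf, Df]
    field_simp
    ring
  rw [div_eq_mul_inv]
  apply mul_nonpos_of_nonpos_of_nonneg _ (by positivity)
  rw [key]
  have h2 : (0:ℝ) ≤ ((K' r * (K r - E r))^2 + (K r * E' r)^2 + 2*(r * K r * K' r)^2) := by positivity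
  have := div_nonneg h2 hr0.le
  linarith

lemma Gf_anti : AntitoneOn Gf (Ioo (0:ℝ) 1) := by
  apply antitoneOn_of_deriv_nonpos (convex_Ioo 0 1)
  · intro x hx
    obtain ⟨v, hv, _⟩ := hasDerivAt_Gf hx
    exact hv.continuousAt.continuousWithinAt
  · intro x hx
    rw [interior_Ioo] at hx
    obtain ⟨v, hv, _⟩ := hasDerivAt_Gf hx
    exact hv.differentiableAt.differentiableWithinAt
  · intro x hx
    rw [interior_Ioo] at hx
    obtain ⟨v, hv, hv0⟩ := hasDerivAt_Gf hx
    rw [hv.deriv]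
    exact hv0

lemma m_anti : AntitoneOn m (Ioo (0:ℝ) 1) := by
  apply antitoneOn_of_deriv_nonpos (convex_Ioo 0 1)
  · intro x hx
    exact (hasDerivAt_m_c hx).continuousAt.continuousWithinAt
  · intro x hx
    rw [interior_Ioo] at hx
    exact (hasDerivAt_m_c hx).differentiableAt.differentiableWithinAt
  · intro x hx
    rw [interior_Ioo] at hx
    rw [(hasDerivAt_m_c hx).deriv]
    have hN := Nf_neg hx
    rw [Nf] at hN
    have hπ := Real.pi_pos
    have hx0 := hx.1
    apply mul_nonpos_of_nonneg_of_nonpos (by positivity) hN.le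

lemma hasDerivAt_f {t : ℝ} (ht : t < 0) :
    HasDerivAt (fun u : ℝ => Real.log (m (Real.exp u))) (Gf (Real.exp t)) t := by
  have hr : Real.exp t ∈ Ioo (0:ℝ) 1 := ⟨Real.exp_pos t, Real.exp_lt_one_iff.2 ht⟩
  have h1 := (hasDerivAt_m_c hr).comp t (Real.hasDerivAt_exp t)
  have h2 := (Real.hasDerivAt_log (m_pos hr).ne').comp t h1
  refine h2.congr_deriv (Eq.symm ?_)
  rw [Gf, Nf, Df, m]
  have hπ := Real.pi_pos
  have h3 := Real.exp_pos t
  have h4 : (0:ℝ) < 1 - Real.exp t^2 := by nlinarith [hr.2, h3]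
  have h5 := K_pos (sq_lt_one_of_mem hr)
  have h6 := K'_pos hr
  field_simp

lemma sqrt_eq_exp_half {x y : ℝ} (hx : 0 < x) (hy : 0 < y) :
    Real.sqrt (x * y) = Real.exp ((Real.log x + Real.log y)/2) := by
  have h : x * y = Real.exp ((Real.log x + Real.log y)/2) ^ 2 := by
    rw [sq, ← Real.exp_add]
    rw [show (Real.log x + Real.log y)/2 + (Real.log x + Real.log y)/2
        = Real.log x + Real.log y from by ring]
    rw [Real.exp_add, Real.exp_log hx, Real.exp_log hy]
  rw [h, Real.sqrt_sq (Real.exp_pos _).le]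

lemma gg_lemma {x y : ℝ} (hx : x ∈ Ioo (0:ℝ) 1) (hy : y ∈ Ioo (0:ℝ) 1) (hxy : x < y) :
    Real.sqrt (m x * m y) ≤ m (Real.sqrt (x * y)) := by
  set f : ℝ → ℝ := fun u => Real.log (m (Real.exp u)) with hfdef
  set s := Real.log x with hs
  set t := Real.log y with ht
  have hst : s < t := Real.log_lt_log hx.1 hxy
  have ht0 : t < 0 := Real.log_neg hy.1 hy.2
  set c := (s + t)/2 with hc
  have hsc : s < c := by rw [hc]; linarith
  have hct : c < t := by rw [hc]; linarith
  have hc0 : c < 0 := by linarith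
  have hderiv : ∀ u : ℝ, u < 0 → HasDerivAt f (Gf (Real.exp u)) u := fun u hu => hasDerivAt_f hu
  have hcont1 : ContinuousOn f (Icc s c) := by
    intro u hu
    exact (hderiv u (by linarith [hu.2])).continuousAt.continuousWithinAt
  have hcont2 : ContinuousOn f (Icc c t) := by
    intro u hu
    exact (hderiv u (by linarith [hu.2])).continuousAt.continuousWithinAt
  obtain ⟨ξ₁, hξ₁, hsl1⟩ := exists_hasDerivAt_eq_slope f (fun u => Gf (Real.exp u)) hsc hcont1
    (fun u hu => hderiv u (by linarith [hu.2]))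
  obtain ⟨ξ₂, hξ₂, hsl2⟩ := exists_hasDerivAt_eq_slope f (fun u => Gf (Real.exp u)) hct hcont2
    (fun u hu => hderiv u (by linarith [hu.2]))
  have hξ₁0 : ξ₁ < 0 := by linarith [hξ₁.2]
  have hξ₂0 : ξ₂ < 0 := by linarith [hξ₂.2]
  have hle : Gf (Real.exp ξ₂) ≤ Gf (Real.exp ξ₁) := by
    apply Gf_anti ⟨Real.exp_pos _, Real.exp_lt_one_iff.2 hξ₁0⟩
      ⟨Real.exp_pos _, Real.exp_lt_one_iff.2 hξ₂0⟩
    exact (Real.exp_lt_exp.2 (by linarith [hξ₁.2, hξ₂.1])).le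
  rw [hsl1] at hle
  rw [hsl2] at hle
  have hcs : c - s = (t - s)/2 := by rw [hc]; ring
  have htc : t - c = (t - s)/2 := by rw [hc]; ring
  have hmid : f s + f t ≤ 2 * f c := by
    rw [hcs] at hle; rw [htc] at hle
    have h2 : (0:ℝ) < (t - s)/2 := by linarith
    rw [div_le_div_iff₀ h2 h2] at hle
    nlinarith
  -- translate back
  have hfs : f s = Real.log (m x) := by rw [hfdef]; simp only; rw [hs, Real.exp_log hx.1]
  have hft : f t = Real.log (m y) := by rw [hfdef]; simp only; rw [ht, Real.exp_log hy.1]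
  have hec : Real.exp c = Real.sqrt (x * y) := (sqrt_eq_exp_half hx.1 hy.1).symm
  have hfc : f c = Real.log (m (Real.sqrt (x * y))) := by rw [hfdef]; simp only; rw [hec]
  rw [hfs, hft, hfc] at hmid
  have hsxy : Real.sqrt (x*y) ∈ Ioo (0:ℝ) 1 := by
    constructor
    · exact Real.sqrt_pos.2 (mul_pos hx.1 hy.1)
    · rw [show (1:ℝ) = Real.sqrt 1 from (Real.sqrt_one).symm]
      exact Real.sqrt_lt_sqrt (mul_pos hx.1 hy.1).le (by nlinarith [hx.1, hx.2, hy.1, hy.2])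
  have hmx := m_pos hx
  have hmy := m_pos hy
  have hmc := m_pos hsxy
  calc Real.sqrt (m x * m y) = Real.exp ((Real.log (m x) + Real.log (m y))/2) :=
        sqrt_eq_exp_half hmx hmy
    _ ≤ Real.exp (Real.log (m (Real.sqrt (x*y)))) := Real.exp_le_exp.2 (by linarith)
    _ = m (Real.sqrt (x*y)) := Real.exp_log hmc

lemma gg_full {x y : ℝ} (hx : x ∈ Ioo (0:ℝ) 1) (hy : y ∈ Ioo (0:ℝ) 1) :
    Real.sqrt (m x * m y) ≤ m (Real.sqrt (x * y)) := by
  rcases lt_trichotomy x y with h | h | h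
  · exact gg_lemma hx hy h
  · subst h
    rw [Real.sqrt_mul_self (m_pos hx).le, Real.sqrt_mul_self hx.1.le]
  · rw [mul_comm (m x), mul_comm x]
    exact gg_lemma hy hx h

lemma pmean_le_sqrt {lam x y : ℝ} (hlam : lam ≤ 0) (hx : 0 < x) (hy : 0 < y) :
    pmean lam x y ≤ Real.sqrt (x * y) := by
  rw [pmean]
  rcases eq_or_lt_of_le hlam with h | h
  · rw [← h]; simp
  · rw [if_neg h.ne]
    have hxl : (0:ℝ) < x ^ lam := Real.rpow_pos_of_pos hx lam
    have hyl : (0:ℝ) < y ^ lam := Real.rpow_pos_of_pos hy lam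
    have hP : (0:ℝ) < (x*y) ^ lam := Real.rpow_pos_of_pos (mul_pos hx hy) lam
    have hgm : ((x*y) ^ lam) ^ ((1:ℝ)/2) ≤ (x ^ lam + y ^ lam)/2 := by
      rw [Real.mul_rpow hx.le hy.le, ← Real.sqrt_eq_rpow]
      rw [show Real.sqrt (x^lam * y^lam) = Real.sqrt (x^lam) * Real.sqrt (y^lam) from
        Real.sqrt_mul hxl.le _]
      nlinarith [sq_nonneg (Real.sqrt (x^lam) - Real.sqrt (y^lam)),
        Real.sq_sqrt hxl.le, Real.sq_sqrt hyl.le,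
        Real.sqrt_nonneg (x^lam), Real.sqrt_nonneg (y^lam)]
    have h1 : ((x ^ lam + y ^ lam) / 2) ^ ((1:ℝ)/lam)
        ≤ (((x*y) ^ lam) ^ ((1:ℝ)/2)) ^ ((1:ℝ)/lam) := by
      apply Real.rpow_le_rpow_of_nonpos (Real.rpow_pos_of_pos hP _) hgm
      apply div_nonpos_of_nonneg_of_nonpos zero_le_one h.le
    refine h1.trans_eq ?_
    rw [← Real.rpow_mul hP.le, ← Real.rpow_mul (mul_pos hx hy).le,
      show lam * (1/2 * (1/lam)) = 1/2 from by field_simp [h.ne], Real.sqrt_eq_rpow]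

lemma pmean_pos {lam x y : ℝ} (hx : 0 < x) (hy : 0 < y) : 0 < pmean lam x y := by
  rw [pmean]
  split_ifs
  · exact Real.sqrt_pos.2 (mul_pos hx hy)
  · apply Real.rpow_pos_of_pos
    have := Real.rpow_pos_of_pos hx lam
    have := Real.rpow_pos_of_pos hy lam
    linarith

theorem stmt_0 (lam : ℝ) (hlam : lam ≤ 0) :
    ∀ x ∈ Set.Ioo (0:ℝ) 1, ∀ y ∈ Set.Ioo (0:ℝ) 1,
      pmean lam (m x) (m y) ≤ m (pmean lam x y) := by
  intro x hx y hy
  have hmx := m_pos hx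
  have hmy := m_pos hy
  have h1 : pmean lam (m x) (m y) ≤ Real.sqrt (m x * m y) := pmean_le_sqrt hlam hmx hmy
  have h2 : Real.sqrt (m x * m y) ≤ m (Real.sqrt (x * y)) := gg_full hx hy
  have hsxy : Real.sqrt (x*y) ∈ Ioo (0:ℝ) 1 := by
    constructor
    · exact Real.sqrt_pos.2 (mul_pos hx.1 hy.1)
    · rw [show (1:ℝ) = Real.sqrt 1 from (Real.sqrt_one).symm]
      exact Real.sqrt_lt_sqrt (mul_pos hx.1 hy.1).le (by nlinarith [hx.1, hx.2, hy.1, hy.2])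
  have hpm : pmean lam x y ∈ Ioo (0:ℝ) 1 := by
    constructor
    · exact pmean_pos hx.1 hy.1
    · exact lt_of_le_of_lt (pmean_le_sqrt hlam hx.1 hy.1) hsxy.2
  have h3 : m (Real.sqrt (x * y)) ≤ m (pmean lam x y) :=
    m_anti hpm hsxy (pmean_le_sqrt hlam hx.1 hy.1)
  linarith
end identities
end

section
/- Let λ be a real number. If M_λ(m(x), m(y)) ≤ m(M_λ(x, y)) holds for all x, y ∈ (0,1), then λ ≤ 0. -/
open Real Set Filter

section Aux

lemma cont_integrand {r : ℝ} (h : ∀ θ : ℝ, 0 < 1 - r^2 * Real.sin θ ^ 2) :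
    Continuous (fun θ : ℝ => 1 / Real.sqrt (1 - r^2 * Real.sin θ ^ 2)) := by
  apply Continuous.div continuous_const
  · fun_prop
  · intro θ; exact (Real.sqrt_pos.mpr (h θ)).ne'

lemma K_nonneg (r : ℝ) : 0 ≤ K r := by
  apply intervalIntegral.integral_nonneg (by positivity)
  intro θ _; positivity

lemma K_ge {r : ℝ} (h : r^2 < 1) : π/2 ≤ K r := by
  have hpos : ∀ θ : ℝ, 0 < 1 - r^2 * Real.sin θ ^ 2 := by
    intro θ; nlinarith [Real.sin_sq_le_one θ, sq_nonneg r, sq_nonneg (r * Real.sin θ)]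
  have h1 : (π/2 : ℝ) = ∫ θ in (0:ℝ)..(π/2), (1:ℝ) := by simp
  rw [h1, K]
  apply intervalIntegral.integral_mono_on (by positivity) intervalIntegrable_const
    ((cont_integrand hpos).intervalIntegrable _ _)
  intro θ _
  rw [le_div_iff₀ (Real.sqrt_pos.mpr (hpos θ)), one_mul]
  exact Real.sqrt_le_one.mpr (by nlinarith [sq_nonneg (r * Real.sin θ)])

lemma K_le_two {r : ℝ} (h1 : r^2 ≤ 1/4) : K r ≤ 2 := by
  have hpos : ∀ θ : ℝ, 0 < 1 - r^2 * Real.sin θ ^ 2 := by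
    intro θ; nlinarith [Real.sin_sq_le_one θ, sq_nonneg r, sq_nonneg (r * Real.sin θ)]
  have hb : K r ≤ ∫ _θ in (0:ℝ)..(π/2), (1 / Real.sqrt (3/4) : ℝ) := by
    apply intervalIntegral.integral_mono_on (by positivity)
      ((cont_integrand hpos).intervalIntegrable _ _) intervalIntegrable_const
    intro θ _
    apply one_div_le_one_div_of_le (by positivity)
    apply Real.sqrt_le_sqrt
    nlinarith [Real.sin_sq_le_one θ, sq_nonneg r, sq_nonneg (r * Real.sin θ)]
  rw [intervalIntegral.integral_const] at hb
  have hs : Real.sqrt (3/4) ^ 2 = 3/4 := Real.sq_sqrt (by norm_num)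
  have hs0 : 0 < Real.sqrt (3/4) := Real.sqrt_pos.mpr (by norm_num)
  have hpi : π < 3.15 := Real.pi_lt_d2
  have : (π/2 - 0) • (1 / Real.sqrt (3/4) : ℝ) ≤ 2 := by
    rw [smul_eq_mul, mul_one_div, div_le_iff₀ hs0]
    nlinarith
  linarith [hb, this]

lemma Kp_ge {y : ℝ} (h0 : 0 < y) (h1 : y ≤ 1/2) :
    Real.log (1/y) ≤ K (Real.sqrt (1 - y^2)) := by
  have hy2 : (0:ℝ) ≤ 1 - y^2 := by nlinarith
  have hw2 : Real.sqrt (1 - y^2) ^ 2 = 1 - y^2 := Real.sq_sqrt hy2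
  have hpos : ∀ θ : ℝ, 0 < 1 - Real.sqrt (1-y^2)^2 * Real.sin θ ^ 2 := by
    intro θ; rw [hw2]
    nlinarith [Real.sin_sq_le_one θ, sq_nonneg (Real.sin θ)]
  have hπ : (3:ℝ) < π := Real.pi_gt_three
  have hπ2 : (0:ℝ) < π/2 := by linarith
  have hden : ∀ t ∈ uIcc (0:ℝ) (π/2), 0 < y + π/2 - t := by
    intro t ht
    rw [uIcc_of_le hπ2.le] at ht
    have := ht.2; linarith
  have hgcont : ContinuousOn (fun θ : ℝ => 1/(y + π/2 - θ)) (uIcc (0:ℝ) (π/2)) := by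
    apply ContinuousOn.div continuousOn_const (by fun_prop)
    intro t ht; exact (hden t ht).ne'
  have hgint : IntervalIntegrable (fun θ : ℝ => 1/(y + π/2 - θ)) MeasureTheory.volume 0 (π/2) :=
    hgcont.intervalIntegrable
  have hint : ∫ θ in (0:ℝ)..(π/2), 1/(y + π/2 - θ)
      = Real.log (y + π/2) - Real.log y := by
    have hd : ∀ t ∈ uIcc (0:ℝ) (π/2),
        HasDerivAt (fun s => -Real.log (y + π/2 - s)) (1/(y + π/2 - t)) t := by
      intro t ht
      have h1 : HasDerivAt (fun s : ℝ => y + π/2 - s) (-1) t := by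
        simpa using (hasDerivAt_id t).const_sub (y + π/2)
      have h2 := (h1.log (hden t ht).ne').neg
      refine h2.congr_deriv ?_
      field_simp
    have := intervalIntegral.integral_eq_sub_of_hasDerivAt hd hgint
    rw [this]
    have : y + π/2 - π/2 = y := by ring
    rw [this]
    ring_nf
  have hmono : ∫ θ in (0:ℝ)..(π/2), 1/(y + π/2 - θ)
      ≤ K (Real.sqrt (1 - y^2)) := by
    apply intervalIntegral.integral_mono_on hπ2.le hgint
      ((cont_integrand hpos).intervalIntegrable _ _)
    intro θ hθ
    have hcos : 0 ≤ Real.cos θ := Real.cos_nonneg_of_mem_Icc ⟨by linarith [hθ.1], hθ.2⟩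
    have hcosle : Real.cos θ ≤ π/2 - θ := by
      rw [← Real.sin_pi_div_two_sub]
      exact Real.sin_le (by linarith [hθ.2])
    have hsq : 1 - Real.sqrt (1-y^2)^2 * Real.sin θ ^ 2 ≤ (y + π/2 - θ)^2 := by
      rw [hw2]
      nlinarith [Real.sin_sq_add_cos_sq θ, Real.sin_sq_le_one θ, sq_nonneg (Real.sin θ)]
    have hsqrt : Real.sqrt (1 - Real.sqrt (1-y^2)^2 * Real.sin θ ^ 2) ≤ y + π/2 - θ := by
      calc Real.sqrt (1 - Real.sqrt (1-y^2)^2 * Real.sin θ ^ 2)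
          ≤ Real.sqrt ((y + π/2 - θ)^2) := Real.sqrt_le_sqrt hsq
        _ = y + π/2 - θ := Real.sqrt_sq (by nlinarith [hθ.1, hθ.2, hcos, hcosle])
    exact one_div_le_one_div_of_le (Real.sqrt_pos.mpr (hpos θ)) hsqrt
  have hlog : Real.log (1/y) ≤ Real.log (y + π/2) - Real.log y := by
    rw [one_div, Real.log_inv]
    have : (0:ℝ) ≤ Real.log (y + π/2) := Real.log_nonneg (by linarith)
    linarith
  linarith [hmono, hlog, hint.ge, hint.le]

lemma Kp_le {z : ℝ} (h0 : 0 < z) (h1 : z ≤ 1/2) :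
    K (Real.sqrt (1 - z^2)) ≤ 2 * (1 + Real.log (1/z)) := by
  have hz2 : (0:ℝ) ≤ 1 - z^2 := by nlinarith
  have hw2 : Real.sqrt (1 - z^2) ^ 2 = 1 - z^2 := Real.sq_sqrt hz2
  have hpos : ∀ θ : ℝ, 0 < 1 - Real.sqrt (1-z^2)^2 * Real.sin θ ^ 2 := by
    intro θ; rw [hw2]
    nlinarith [Real.sin_sq_le_one θ, sq_nonneg (Real.sin θ)]
  have hπ : (3:ℝ) < π := Real.pi_gt_three
  have hπ4 : π < 4 := by
    have := Real.pi_lt_d2; linarith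
  have hπ0 : (0:ℝ) < π := by linarith
  set θ₁ : ℝ := π/2 * (1 - z) with hθ₁
  have hθ₁0 : 0 ≤ θ₁ := by
    have : (0:ℝ) ≤ 1 - z := by linarith
    positivity
  have hθ₁π : θ₁ ≤ π/2 := by nlinarith
  set f : ℝ → ℝ := fun θ => 1 / Real.sqrt (1 - Real.sqrt (1-z^2)^2 * Real.sin θ ^ 2) with hf
  have hfc : Continuous f := cont_integrand hpos
  have hsplit : K (Real.sqrt (1 - z^2))
      = (∫ θ in (0:ℝ)..θ₁, f θ) + ∫ θ in θ₁..(π/2), f θ := by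
    rw [K]
    exact (intervalIntegral.integral_add_adjacent_intervals
      (hfc.intervalIntegrable _ _) (hfc.intervalIntegrable _ _)).symm
  have hf_le : ∀ θ : ℝ, f θ ≤ 1/z := by
    intro θ
    apply one_div_le_one_div_of_le h0
    have hs : Real.sqrt (z^2) ≤ Real.sqrt (1 - Real.sqrt (1-z^2)^2 * Real.sin θ ^ 2) := by
      apply Real.sqrt_le_sqrt
      rw [hw2]
      nlinarith [Real.sin_sq_le_one θ, sq_nonneg (Real.sin θ)]
    rwa [Real.sqrt_sq h0.le] at hs
  have hpiece2 : ∫ θ in θ₁..(π/2), f θ ≤ π/2 := by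
    have h2 : ∫ θ in θ₁..(π/2), f θ ≤ ∫ _θ in θ₁..(π/2), (1/z : ℝ) := by
      apply intervalIntegral.integral_mono_on hθ₁π (hfc.intervalIntegrable _ _)
        intervalIntegrable_const
      intro θ _; exact hf_le θ
    rw [intervalIntegral.integral_const, smul_eq_mul] at h2
    have : (π/2 - θ₁) * (1/z) = π/2 := by
      rw [hθ₁]; field_simp; ring
    linarith [h2, this.le, this.ge]
  have hden : ∀ t ∈ Icc (0:ℝ) θ₁, z ≤ 1 - 2/π * t := by
    intro t ht
    have h2 : t ≤ θ₁ := ht.2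
    have : 2/π * t ≤ 2/π * θ₁ := by
      apply mul_le_mul_of_nonneg_left h2 (by positivity)
    have he : 2/π * θ₁ = 1 - z := by
      rw [hθ₁]; field_simp
    linarith
  have hgcont : ContinuousOn (fun θ : ℝ => 1/(1 - 2/π * θ)) (uIcc (0:ℝ) θ₁) := by
    apply ContinuousOn.div continuousOn_const (by fun_prop)
    intro t ht
    rw [uIcc_of_le hθ₁0] at ht
    have := hden t ht; linarith [h0]
  have hgint : IntervalIntegrable (fun θ : ℝ => 1/(1 - 2/π * θ)) MeasureTheory.volume 0 θ₁ :=
    hgcont.intervalIntegrable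
  have hpiece1 : ∫ θ in (0:ℝ)..θ₁, f θ ≤ π/2 * Real.log (1/z) := by
    have hmono : ∫ θ in (0:ℝ)..θ₁, f θ ≤ ∫ θ in (0:ℝ)..θ₁, 1/(1 - 2/π * θ) := by
      apply intervalIntegral.integral_mono_on hθ₁0 (hfc.intervalIntegrable _ _) hgint
      intro θ hθ
      have hz' := hden θ hθ
      apply one_div_le_one_div_of_le (by linarith)
      have hθπ : θ ≤ π/2 := le_trans hθ.2 hθ₁π
      have hcos : 1 - 2/π * θ ≤ Real.cos θ := Real.one_sub_mul_le_cos hθ.1 hθπ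
      have hsq : (1 - 2/π * θ)^2 ≤ 1 - Real.sqrt (1-z^2)^2 * Real.sin θ ^ 2 := by
        rw [hw2]
        nlinarith [Real.sin_sq_add_cos_sq θ, sq_nonneg (Real.sin θ), sq_nonneg z,
          sq_nonneg (z * Real.sin θ)]
      calc 1 - 2/π * θ = Real.sqrt ((1 - 2/π * θ)^2) := (Real.sqrt_sq (by linarith)).symm
        _ ≤ Real.sqrt (1 - Real.sqrt (1-z^2)^2 * Real.sin θ ^ 2) := Real.sqrt_le_sqrt hsq
    have hval : ∫ θ in (0:ℝ)..θ₁, 1/(1 - 2/π * θ) = π/2 * Real.log (1/z) := by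
      have hd : ∀ t ∈ uIcc (0:ℝ) θ₁,
          HasDerivAt (fun s => -(π/2) * Real.log (1 - 2/π * s)) (1/(1 - 2/π * t)) t := by
        intro t ht
        rw [uIcc_of_le hθ₁0] at ht
        have hne : 1 - 2/π * t ≠ 0 := by have := hden t ht; linarith [h0]
        have h1 : HasDerivAt (fun s : ℝ => 1 - 2/π * s) (-(2/π)) t := by
          simpa using ((hasDerivAt_id t).const_mul (2/π)).const_sub 1
        have h2 := (h1.log hne).const_mul (-(π/2))
        have hd0 : 0 < 1 - 2/π * t := lt_of_lt_of_le h0 (hden t ht)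
        refine h2.congr_deriv ?_
        rw [show -(π/2) * (-(2/π) / (1 - 2/π*t)) = (π/2 * (2/π)) / (1 - 2/π*t) by ring,
          show π/2 * (2/π) = 1 by field_simp]
      rw [intervalIntegral.integral_eq_sub_of_hasDerivAt hd hgint]
      have he : 1 - 2/π * θ₁ = z := by rw [hθ₁]; field_simp; ring
      rw [he]
      rw [one_div, Real.log_inv]
      simp
    linarith [hmono, hval.le]
  have hlogz : 0 ≤ Real.log (1/z) := Real.log_nonneg (by rw [le_div_iff₀ h0, one_mul]; linarith)
  calc K (Real.sqrt (1 - z^2)) = _ := hsplit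
    _ ≤ π/2 * Real.log (1/z) + π/2 := by linarith [hpiece1, hpiece2]
    _ ≤ 2 * (1 + Real.log (1/z)) := by nlinarith

lemma m_nonneg {r : ℝ} (h0 : 0 ≤ r) (h1 : r ≤ 1) : 0 ≤ m r := by
  rw [m, K']
  have hK := K_nonneg r
  have hK' := K_nonneg (Real.sqrt (1 - r^2))
  have : (0:ℝ) ≤ 1 - r^2 := by nlinarith
  have hπ : (0:ℝ) < π := Real.pi_pos
  apply mul_nonneg (mul_nonneg (mul_nonneg (by positivity) this) hK) hK'

lemma m_lower {y : ℝ} (h0 : 0 < y) (h1 : y ≤ 1/2) : 3/4 * Real.log (1/y) ≤ m y := by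
  have hK : π/2 ≤ K y := K_ge (by nlinarith)
  have hK' : Real.log (1/y) ≤ K (Real.sqrt (1-y^2)) := Kp_ge h0 h1
  have hlog0 : 0 ≤ Real.log (1/y) := Real.log_nonneg (by rw [le_div_iff₀ h0, one_mul]; linarith)
  have hK0 : 0 ≤ K y := K_nonneg y
  have hπ : (0:ℝ) < π := Real.pi_pos
  have hmy : m y = 2 * (1-y^2) * (K y * K (Real.sqrt (1-y^2))) / π := by
    rw [m, K']; ring
  rw [hmy, le_div_iff₀ hπ]
  have p1 : (π/2) * Real.log (1/y) ≤ K y * K (Real.sqrt (1-y^2)) :=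
    mul_le_mul hK hK' hlog0 hK0
  have h34 : (3:ℝ)/4 ≤ 1 - y^2 := by nlinarith
  have q0 : 0 ≤ K y * K (Real.sqrt (1-y^2)) := le_trans (by positivity) p1
  nlinarith [p1, q0, mul_nonneg q0 (sub_nonneg.mpr h34)]

lemma m_upper {z : ℝ} (h0 : 0 < z) (h1 : z ≤ 1/2) : m z ≤ 3 * (1 + Real.log (1/z)) := by
  have hK : K z ≤ 2 := K_le_two (by nlinarith)
  have hK' : K (Real.sqrt (1-z^2)) ≤ 2 * (1 + Real.log (1/z)) := Kp_le h0 h1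
  have hK0 : 0 ≤ K z := K_nonneg z
  have hK'0 : 0 ≤ K (Real.sqrt (1-z^2)) := K_nonneg _
  have hlog0 : 0 ≤ Real.log (1/z) := Real.log_nonneg (by rw [le_div_iff₀ h0, one_mul]; linarith)
  have hπ : (3:ℝ) < π := Real.pi_gt_three
  have hmz : m z = 2 * (1-z^2) * (K z * K (Real.sqrt (1-z^2))) / π := by
    rw [m, K']; ring
  rw [hmz, div_le_iff₀ (by linarith : (0:ℝ) < π)]
  have p1 : K z * K (Real.sqrt (1-z^2)) ≤ 2 * (2 * (1 + Real.log (1/z))) :=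
    mul_le_mul hK hK' hK'0 (by norm_num)
  have h1z : (1:ℝ) - z^2 ≤ 1 := by nlinarith
  have h0z : (0:ℝ) ≤ 1 - z^2 := by nlinarith
  nlinarith [p1, hlog0, mul_nonneg hK0 hK'0,
    mul_le_mul_of_nonneg_left p1 h0z]

end Aux

set_option maxHeartbeats 1000000 in
theorem stmt_1 (lam : ℝ)
    (h : ∀ x ∈ Set.Ioo (0:ℝ) 1, ∀ y ∈ Set.Ioo (0:ℝ) 1,
      pmean lam (m x) (m y) ≤ m (pmean lam x y)) :
    lam ≤ 0 := by
  by_contra hc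
  push_neg at hc
  have hlamne : lam ≠ 0 := ne_of_gt hc
  set B : ℝ := (2:ℝ) ^ (1/lam) with hB
  have hB0 : 0 < B := Real.rpow_pos_of_pos two_pos _
  have hB1 : 1 ≤ B := Real.one_le_rpow one_le_two (by positivity)
  have hlogB : 0 ≤ Real.log B := Real.log_nonneg hB1
  set L : ℝ := 2 + Real.log B with hL
  have hL2 : 2 ≤ L := by rw [hL]; linarith
  have hL0 : 0 < L := by linarith
  set a : ℝ := 13 * B with ha
  have ha1 : 13 ≤ a := by nlinarith
  set x : ℝ := Real.exp (-L) with hx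
  set y : ℝ := Real.exp (-(a*L)) with hy
  have hx0 : 0 < x := Real.exp_pos _
  have hy0 : 0 < y := Real.exp_pos _
  have hx1 : x < 1 := Real.exp_lt_one_iff.mpr (by linarith)
  have haL : L ≤ a * L := by nlinarith
  have hy1 : y < 1 := Real.exp_lt_one_iff.mpr (by nlinarith)
  have hyx : y ≤ x := Real.exp_le_exp.mpr (by linarith)
  have hxhalf : x ≤ 1/2 := by
    have h3 : (3:ℝ) ≤ Real.exp 2 := by nlinarith [Real.add_one_le_exp (2:ℝ)]
    calc x ≤ Real.exp (-2) := Real.exp_le_exp.mpr (by linarith)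
      _ = (Real.exp 2)⁻¹ := by rw [Real.exp_neg]
      _ ≤ 1/2 := by
          rw [inv_le_comm₀ (by linarith) (by norm_num)]
          linarith
  have hyhalf : y ≤ 1/2 := le_trans hyx hxhalf
  -- basic rpow computations
  have hxlam : x ^ lam = Real.exp (-(L * lam)) := by
    rw [Real.rpow_def_of_pos hx0, hx, Real.log_exp]
    ring_nf
  have hylam : y ^ lam = Real.exp (-(a * L * lam)) := by
    rw [Real.rpow_def_of_pos hy0, hy, Real.log_exp]
    ring_nf
  have hhalf_rpow : ((1:ℝ)/2) ^ (1/lam) = B⁻¹ := by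
    rw [one_div (2:ℝ), Real.inv_rpow (by norm_num : (0:ℝ) ≤ 2)]
  -- z = pmean lam x y and its bounds
  have hz : pmean lam x y = ((x ^ lam + y ^ lam)/2) ^ (1/lam) := if_neg hlamne
  have hyxlam : y ^ lam ≤ x ^ lam := by
    rw [hxlam, hylam]
    apply Real.exp_le_exp.mpr
    nlinarith
  have hz_le_x : pmean lam x y ≤ x := by
    rw [hz]
    have h1 : (x ^ lam + y ^ lam)/2 ≤ x ^ lam := by linarith
    calc ((x ^ lam + y ^ lam)/2) ^ (1/lam) ≤ (x ^ lam) ^ (1/lam) :=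
        Real.rpow_le_rpow (by positivity) h1 (by positivity)
      _ = x := by
          rw [← Real.rpow_mul hx0.le, mul_one_div_cancel hlamne, Real.rpow_one]
  have hz_ge : x / B ≤ pmean lam x y := by
    rw [hz]
    have hy_nn : 0 ≤ y ^ lam := Real.rpow_nonneg hy0.le lam
    have h1 : x ^ lam * (1/2) ≤ (x ^ lam + y ^ lam)/2 := by linarith
    calc x / B = (x ^ lam * (1/2)) ^ (1/lam) := by
          rw [Real.mul_rpow (Real.rpow_nonneg hx0.le _) (by norm_num),
            ← Real.rpow_mul hx0.le, mul_one_div_cancel hlamne, Real.rpow_one, hhalf_rpow]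
          rw [div_eq_mul_inv]
      _ ≤ ((x ^ lam + y ^ lam)/2) ^ (1/lam) :=
          Real.rpow_le_rpow (by positivity) h1 (by positivity)
  have hz0 : 0 < pmean lam x y := lt_of_lt_of_le (by positivity) hz_ge
  have hzhalf : pmean lam x y ≤ 1/2 := le_trans hz_le_x hxhalf
  -- apply the hypothesis
  have hstep := h x ⟨hx0, hx1⟩ y ⟨hy0, hy1⟩
  -- lower bound for the LHS
  have hmx0 : 0 ≤ m x := m_nonneg hx0.le (by linarith)
  have hmy0 : 0 ≤ m y := m_nonneg hy0.le (by linarith)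
  have hlhs : m y / B ≤ pmean lam (m x) (m y) := by
    rw [pmean, if_neg hlamne]
    have hmx_nn : 0 ≤ (m x) ^ lam := Real.rpow_nonneg hmx0 lam
    have h1 : (m y) ^ lam * (1/2) ≤ ((m x) ^ lam + (m y) ^ lam)/2 := by linarith
    calc m y / B = ((m y) ^ lam * (1/2)) ^ (1/lam) := by
          rw [Real.mul_rpow (Real.rpow_nonneg hmy0 _) (by norm_num),
            ← Real.rpow_mul hmy0, mul_one_div_cancel hlamne, Real.rpow_one, hhalf_rpow]
          rw [div_eq_mul_inv]
      _ ≤ (((m x) ^ lam + (m y) ^ lam)/2) ^ (1/lam) :=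
          Real.rpow_le_rpow (by positivity) h1 (by positivity)
  -- bounds on m y and m (pmean lam x y)
  have hyb : Real.log (1/y) = a * L := by
    rw [hy, one_div, ← Real.exp_neg, neg_neg, Real.log_exp]
  have hmylb : 3/4 * (a * L) ≤ m y := by
    have := m_lower hy0 hyhalf
    rwa [hyb] at this
  have hmz_ub : m (pmean lam x y) ≤ 3 * (1 + Real.log (1/pmean lam x y)) :=
    m_upper hz0 hzhalf
  have hlogz : Real.log (1/pmean lam x y) ≤ Real.log B + L := by
    have h1z : 1/pmean lam x y ≤ B/x := by
      rw [show B/x = 1/(x/B) by rw [one_div_div]]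
      exact one_div_le_one_div_of_le (by positivity) hz_ge
    calc Real.log (1/pmean lam x y) ≤ Real.log (B/x) :=
        Real.log_le_log (by positivity) h1z
      _ = Real.log B - Real.log x := Real.log_div hB0.ne' hx0.ne'
      _ = Real.log B + L := by rw [hx, Real.log_exp]; ring
  -- combine
  have hchain : 3/4 * (a * L) / B ≤ 3 * (1 + (Real.log B + L)) := by
    calc 3/4 * (a * L) / B ≤ m y / B := by
          gcongr
      _ ≤ pmean lam (m x) (m y) := hlhs
      _ ≤ m (pmean lam x y) := hstep
      _ ≤ 3 * (1 + Real.log (1/pmean lam x y)) := hmz_ub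
      _ ≤ 3 * (1 + (Real.log B + L)) := by linarith
  have hsimp : 3/4 * (a * L) / B = 39/4 * L := by
    rw [ha]; field_simp; ring
  rw [hsimp] at hchain
  have hLB : Real.log B = L - 2 := by rw [hL]; ring
  rw [hLB] at hchain
  nlinarith [hchain, hL0, hL2]
end

section
/- Let λ ≤ 0 be a real number. Then for all x, y ∈ (0,1) with x ≠ y, the strict inequality M_λ(m(x), m(y)) < m(M_λ(x, y)) holds; equality M_λ(m(x), m(y)) = m(M_λ(x, y)) holds if and only if x = y. -/
open Real Set Filter

open MeasureTheory intervalIntegral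

namespace Ell
lemma delta_pos {r : ℝ} (hr : r^2 < 1) (θ : ℝ) : 0 < 1 - r^2 * Real.sin θ ^ 2 := by
  nlinarith [Real.sin_sq_le_one θ, sq_nonneg r, sq_nonneg (Real.sin θ)]
lemma contE {r : ℝ} : Continuous fun θ : ℝ => Real.sqrt (1 - r^2 * Real.sin θ ^ 2) := by
  fun_prop
lemma contK {r : ℝ} (hr : r^2 < 1) :
    Continuous fun θ : ℝ => 1 / Real.sqrt (1 - r^2 * Real.sin θ ^ 2) :=
  Continuous.div continuous_const contE (fun θ => (Real.sqrt_pos.2 (delta_pos hr θ)).ne')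

lemma E_pos {r : ℝ} (hr : r^2 < 1) : 0 < E r := by
  apply intervalIntegral.integral_pos (by positivity) ((contE).continuousOn)
  · intro x _; positivity
  · exact ⟨0, ⟨le_rfl, by positivity⟩, Real.sqrt_pos.2 (delta_pos hr 0)⟩

lemma K_pos {r : ℝ} (hr : r^2 < 1) : 0 < K r := by
  apply intervalIntegral.integral_pos (by positivity) ((contK hr).continuousOn)
  · intro x _
    have := delta_pos hr x; positivity
  · refine ⟨0, ⟨le_rfl, by positivity⟩, ?_⟩
    have := delta_pos hr 0; positivity

lemma E_le_K {r : ℝ} (hr : r^2 < 1) : E r ≤ K r := by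
  apply intervalIntegral.integral_mono_on (by positivity)
    ((contE).intervalIntegrable _ _) ((contK hr).intervalIntegrable _ _)
  intro θ _
  have h1 : 0 < 1 - r^2 * Real.sin θ ^ 2 := delta_pos hr θ
  have h2 : 1 - r^2 * Real.sin θ ^ 2 ≤ 1 := by nlinarith [sq_nonneg (r * Real.sin θ)]
  have hs : 0 < Real.sqrt (1 - r^2 * Real.sin θ ^ 2) := Real.sqrt_pos.2 h1
  rw [le_div_iff₀ hs, Real.mul_self_sqrt h1.le]
  linarith

lemma sq_lt_one_of_ball {r x : ℝ} (h0 : 0 < r) (h1 : r < 1)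
    (hx : x ∈ Metric.ball r ((1-r)/2)) : |x| < (1+r)/2 := by
  rw [Metric.mem_ball, Real.dist_eq] at hx
  rw [abs_lt] at hx ⊢
  constructor <;> nlinarith [hx.1, hx.2]

lemma hasDerivAt_E {r : ℝ} (h0 : 0 < r) (h1 : r < 1) :
    HasDerivAt E ((E r - K r) / r) r := by
  have hr2 : r^2 < 1 := by nlinarith
  set ρ : ℝ := (1+r)/2 with hρ
  have hρ1 : ρ < 1 := by simp [hρ]; linarith
  have hρ0 : 0 < ρ := by simp [hρ]; linarith
  have hρ2 : ρ^2 < 1 := by nlinarith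
  set C : ℝ := ρ / Real.sqrt (1 - ρ^2) with hC
  have key : ∀ (t : ℝ), ∀ x ∈ Metric.ball r ((1-r)/2),
      HasDerivAt (fun y : ℝ => Real.sqrt (1 - y^2 * Real.sin t ^ 2))
        (-(x * Real.sin t ^ 2) / Real.sqrt (1 - x^2 * Real.sin t ^ 2)) x := by
    intro t x hx
    have hxρ : |x| < ρ := sq_lt_one_of_ball h0 h1 hx
    have hx2 : x^2 < 1 := by nlinarith [abs_nonneg x, sq_abs x]
    have hd : 0 < 1 - x^2 * Real.sin t ^ 2 := delta_pos hx2 t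
    have hu : HasDerivAt (fun y : ℝ => 1 - y^2 * Real.sin t ^ 2)
        (-(2 * x * Real.sin t ^ 2)) x := by
      simpa using ((hasDerivAt_pow 2 x).mul_const (Real.sin t ^ 2)).const_sub 1
    have := (Real.hasDerivAt_sqrt hd.ne').comp x hu
    refine this.congr_deriv (Eq.symm ?_)
    have hs : Real.sqrt (1 - x^2 * Real.sin t ^ 2) ≠ 0 := (Real.sqrt_pos.2 hd).ne'
    field_simp
  have hderiv := intervalIntegral.hasDerivAt_integral_of_dominated_loc_of_deriv_le
    (F := fun x θ => Real.sqrt (1 - x^2 * Real.sin θ ^ 2))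
    (F' := fun x θ => -(x * Real.sin θ ^ 2) / Real.sqrt (1 - x^2 * Real.sin θ ^ 2))
    (x₀ := r) (a := 0) (b := π/2) (μ := volume) (bound := fun _ => C)
    (Metric.ball_mem_nhds r (by linarith : (0:ℝ) < (1-r)/2))
    (Eventually.of_forall fun x => (contE).aestronglyMeasurable)
    (contE.intervalIntegrable _ _)
    ((Continuous.div (by fun_prop) contE
      (fun θ => (Real.sqrt_pos.2 (delta_pos hr2 θ)).ne')).aestronglyMeasurable)
    (Eventually.of_forall ?_)
    (intervalIntegrable_const)
    (Eventually.of_forall fun t _ => key t)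
  · have h2 := hderiv.2
    have heq : (∫ θ in (0:ℝ)..(π/2),
        -(r * Real.sin θ ^ 2) / Real.sqrt (1 - r^2 * Real.sin θ ^ 2)) = (E r - K r)/r := by
      have hptwise : ∀ θ : ℝ,
          -(r * Real.sin θ ^ 2) / Real.sqrt (1 - r^2 * Real.sin θ ^ 2)
          = (1/r) * (Real.sqrt (1 - r^2 * Real.sin θ ^ 2)
              - 1 / Real.sqrt (1 - r^2 * Real.sin θ ^ 2)) := by
        intro θ
        have hd := delta_pos hr2 θ
        have hs : Real.sqrt (1 - r^2 * Real.sin θ ^ 2) ≠ 0 := (Real.sqrt_pos.2 hd).ne'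
        have hsq : Real.sqrt (1 - r^2 * Real.sin θ ^ 2) ^ 2 = 1 - r^2 * Real.sin θ ^ 2 :=
          Real.sq_sqrt hd.le
        field_simp
        nlinarith [hsq]
      rw [intervalIntegral.integral_congr (g :=
        fun θ => (1/r) * (Real.sqrt (1 - r^2 * Real.sin θ ^ 2)
          - 1 / Real.sqrt (1 - r^2 * Real.sin θ ^ 2))) (fun θ _ => hptwise θ)]
      rw [intervalIntegral.integral_const_mul,
        intervalIntegral.integral_sub (contE.intervalIntegrable _ _)
          ((contK hr2).intervalIntegrable _ _)]
      show (1/r) * (E r - K r) = _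
      ring
    rw [heq] at h2
    exact h2
  · -- bound
    intro t _ x hx
    have hxρ : |x| < ρ := sq_lt_one_of_ball h0 h1 hx
    have hx2 : x^2 < 1 := by nlinarith [abs_nonneg x, sq_abs x]
    have hd : 0 < 1 - x^2 * Real.sin t ^ 2 := delta_pos hx2 t
    have hdd : 1 - ρ^2 ≤ 1 - x^2 * Real.sin t ^ 2 := by
      nlinarith [Real.sin_sq_le_one t, sq_nonneg x, sq_abs x, abs_nonneg x,
        Real.sin_sq_le_one t]
    have hsl : Real.sqrt (1 - ρ^2) ≤ Real.sqrt (1 - x^2 * Real.sin t ^ 2) :=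
      Real.sqrt_le_sqrt hdd
    have hsp : 0 < Real.sqrt (1 - ρ^2) := Real.sqrt_pos.2 (by nlinarith)
    rw [Real.norm_eq_abs, abs_div, abs_neg, abs_mul, abs_of_nonneg (Real.sqrt_nonneg _),
      abs_of_nonneg (sq_nonneg (Real.sin t))]
    rw [hC]
    apply div_le_div₀ (le_of_lt hρ0) _ hsp hsl
    calc |x| * Real.sin t ^ 2 ≤ ρ * 1 := by
          apply mul_le_mul hxρ.le (Real.sin_sq_le_one t) (sq_nonneg _) hρ0.le
      _ = ρ := mul_one ρ

lemma hasDerivAt_K {r : ℝ} (h0 : 0 < r) (h1 : r < 1) :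
    HasDerivAt K ((E r - (1-r^2) * K r) / (r * (1-r^2))) r := by
  have hr2 : r^2 < 1 := by nlinarith
  have hr'2 : (0:ℝ) < 1 - r^2 := by nlinarith
  set ρ : ℝ := (1+r)/2 with hρ
  have hρ1 : ρ < 1 := by rw [hρ]; linarith
  have hρ0 : 0 < ρ := by rw [hρ]; linarith
  have hρ2 : ρ^2 < 1 := by nlinarith
  set C : ℝ := ρ / (Real.sqrt (1 - ρ^2))^3 with hC
  have key : ∀ (t : ℝ), ∀ x ∈ Metric.ball r ((1-r)/2),
      HasDerivAt (fun y : ℝ => 1 / Real.sqrt (1 - y^2 * Real.sin t ^ 2))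
        ((x * Real.sin t ^ 2) / (Real.sqrt (1 - x^2 * Real.sin t ^ 2))^3) x := by
    intro t x hx
    have hxρ : |x| < ρ := sq_lt_one_of_ball h0 h1 hx
    have hx2 : x^2 < 1 := by nlinarith [abs_nonneg x, sq_abs x]
    have hd : 0 < 1 - x^2 * Real.sin t ^ 2 := delta_pos hx2 t
    have hs : Real.sqrt (1 - x^2 * Real.sin t ^ 2) ≠ 0 := (Real.sqrt_pos.2 hd).ne'
    have hu : HasDerivAt (fun y : ℝ => 1 - y^2 * Real.sin t ^ 2)
        (-(2 * x * Real.sin t ^ 2)) x := by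
      simpa using ((hasDerivAt_pow 2 x).mul_const (Real.sin t ^ 2)).const_sub 1
    have hsq : HasDerivAt (fun y : ℝ => Real.sqrt (1 - y^2 * Real.sin t ^ 2))
        (1 / (2 * Real.sqrt (1 - x^2 * Real.sin t ^ 2)) * (-(2 * x * Real.sin t ^ 2))) x :=
      (Real.hasDerivAt_sqrt hd.ne').comp x hu
    have hinv := hsq.inv hs
    have heqf : (fun y : ℝ => Real.sqrt (1 - y^2 * Real.sin t ^ 2))⁻¹
        = fun y : ℝ => 1 / Real.sqrt (1 - y^2 * Real.sin t ^ 2) := by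
      funext y; rw [Pi.inv_apply, one_div]
    rw [heqf] at hinv
    refine hinv.congr_deriv (Eq.symm ?_)
    have hsqv : Real.sqrt (1 - x^2 * Real.sin t ^ 2) ^ 2 = 1 - x^2 * Real.sin t ^ 2 :=
      Real.sq_sqrt hd.le
    field_simp
  have hFmeas : ∀ᶠ x in nhds r, AEStronglyMeasurable
      ((fun (x : ℝ) (θ : ℝ) => 1 / Real.sqrt (1 - x^2 * Real.sin θ ^ 2)) x)
      (MeasureTheory.volume.restrict (Set.uIoc (0:ℝ) (π/2))) := by
    filter_upwards [Metric.ball_mem_nhds r (by linarith : (0:ℝ) < (1-r)/2)] with x hx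
    have hxρ : |x| < ρ := sq_lt_one_of_ball h0 h1 hx
    have hx2 : x^2 < 1 := by nlinarith [abs_nonneg x, sq_abs x]
    exact (contK hx2).aestronglyMeasurable
  have hF'meas : AEStronglyMeasurable
      ((fun (x : ℝ) (θ : ℝ) => (x * Real.sin θ ^ 2) / (Real.sqrt (1 - x^2 * Real.sin θ ^ 2))^3) r)
      (MeasureTheory.volume.restrict (Set.uIoc (0:ℝ) (π/2))) := by
    apply Continuous.aestronglyMeasurable
    apply Continuous.div (by fun_prop) (by fun_prop)
    intro θ
    have := Real.sqrt_pos.2 (delta_pos hr2 θ)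
    positivity
  have hbound : ∀ t : ℝ, t ∈ Set.uIoc (0:ℝ) (π/2) → ∀ x ∈ Metric.ball r ((1-r)/2),
      ‖(x * Real.sin t ^ 2) / (Real.sqrt (1 - x^2 * Real.sin t ^ 2))^3‖ ≤ C := by
    intro t _ x hx
    have hxρ : |x| < ρ := sq_lt_one_of_ball h0 h1 hx
    have hx2 : x^2 < 1 := by nlinarith [abs_nonneg x, sq_abs x]
    have hd : 0 < 1 - x^2 * Real.sin t ^ 2 := delta_pos hx2 t
    have hdd : 1 - ρ^2 ≤ 1 - x^2 * Real.sin t ^ 2 := by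
      nlinarith [Real.sin_sq_le_one t, sq_abs x, abs_nonneg x]
    have hsl : Real.sqrt (1 - ρ^2) ≤ Real.sqrt (1 - x^2 * Real.sin t ^ 2) :=
      Real.sqrt_le_sqrt hdd
    have hsp : 0 < Real.sqrt (1 - ρ^2) := Real.sqrt_pos.2 (by nlinarith)
    rw [Real.norm_eq_abs, abs_div, abs_mul, abs_of_nonneg (sq_nonneg (Real.sin t)),
      abs_of_nonneg (pow_nonneg (Real.sqrt_nonneg _) 3)]
    rw [hC]
    apply div_le_div₀ hρ0.le _ (by positivity) (pow_le_pow_left₀ hsp.le hsl 3)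
    calc |x| * Real.sin t ^ 2 ≤ ρ * 1 :=
          mul_le_mul hxρ.le (Real.sin_sq_le_one t) (sq_nonneg _) hρ0.le
      _ = ρ := mul_one ρ
  have hderiv := intervalIntegral.hasDerivAt_integral_of_dominated_loc_of_deriv_le
    (F := fun x θ => 1 / Real.sqrt (1 - x^2 * Real.sin θ ^ 2))
    (F' := fun x θ => (x * Real.sin θ ^ 2) / (Real.sqrt (1 - x^2 * Real.sin θ ^ 2))^3)
    (x₀ := r) (a := 0) (b := π/2) (μ := MeasureTheory.volume) (bound := fun _ => C)
    (Metric.ball_mem_nhds r (by linarith : (0:ℝ) < (1-r)/2))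
    hFmeas ((contK hr2).intervalIntegrable _ _) hF'meas
    (Eventually.of_forall hbound)
    (intervalIntegrable_const)
    (Eventually.of_forall fun t _ => key t)
  have h2 := hderiv.2
  have heq : (∫ θ in (0:ℝ)..(π/2),
      (r * Real.sin θ ^ 2) / (Real.sqrt (1 - r^2 * Real.sin θ ^ 2))^3)
      = (E r - (1-r^2) * K r) / (r * (1-r^2)) := by
    set g : ℝ → ℝ := fun θ => (r * Real.sin θ ^ 2) / (Real.sqrt (1 - r^2 * Real.sin θ ^ 2))^3
      - (1/(r*(1-r^2))) * (Real.sqrt (1 - r^2 * Real.sin θ ^ 2)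
          - (1-r^2) * (1 / Real.sqrt (1 - r^2 * Real.sin θ ^ 2))) with hg
    set G : ℝ → ℝ := fun θ => -(r * (Real.sin θ * Real.cos θ))
        / ((1-r^2) * Real.sqrt (1 - r^2 * Real.sin θ ^ 2)) with hGdef
    have contI : Continuous fun θ : ℝ =>
        (r * Real.sin θ ^ 2) / (Real.sqrt (1 - r^2 * Real.sin θ ^ 2))^3 := by
      apply Continuous.div (by fun_prop) (by fun_prop)
      intro θ
      have := Real.sqrt_pos.2 (delta_pos hr2 θ)
      positivity
    have contg : Continuous g := by
      apply Continuous.sub contI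
      exact continuous_const.mul (Continuous.sub contE (continuous_const.mul (contK hr2)))
    have hGd : ∀ θ ∈ uIcc (0:ℝ) (π/2), HasDerivAt G (g θ) θ := by
      intro θ _
      have hd : 0 < 1 - r^2 * Real.sin θ ^ 2 := delta_pos hr2 θ
      have hs : Real.sqrt (1 - r^2 * Real.sin θ ^ 2) ≠ 0 := (Real.sqrt_pos.2 hd).ne'
      have hsqv : Real.sqrt (1 - r^2 * Real.sin θ ^ 2) ^ 2 = 1 - r^2 * Real.sin θ ^ 2 :=
        Real.sq_sqrt hd.le
      have hN : HasDerivAt (fun y : ℝ => -(r * (Real.sin y * Real.cos y)))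
          (-(r * (Real.cos θ * Real.cos θ + Real.sin θ * -Real.sin θ))) θ :=
        (((Real.hasDerivAt_sin θ).mul (Real.hasDerivAt_cos θ)).const_mul r).neg
      have hΔ : HasDerivAt (fun θ : ℝ => 1 - r^2 * Real.sin θ ^ 2)
          (-(r^2 * (2 * Real.sin θ * Real.cos θ))) θ := by
        have hs2 : HasDerivAt (fun θ : ℝ => Real.sin θ ^ 2)
            (2 * Real.sin θ * Real.cos θ) θ := by
          simpa using (Real.hasDerivAt_sin θ).fun_pow 2
        simpa using (hs2.const_mul (r^2)).const_sub 1
      have hD : HasDerivAt (fun θ : ℝ => (1-r^2) * Real.sqrt (1 - r^2 * Real.sin θ ^ 2))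
          ((1-r^2) * (1 / (2 * Real.sqrt (1 - r^2 * Real.sin θ ^ 2))
            * (-(r^2 * (2 * Real.sin θ * Real.cos θ))))) θ :=
        ((Real.hasDerivAt_sqrt hd.ne').comp θ hΔ).const_mul _
      have hDne : (1-r^2) * Real.sqrt (1 - r^2 * Real.sin θ ^ 2) ≠ 0 := by positivity
      have hdiv := hN.div hD hDne
      refine hdiv.congr_deriv (Eq.symm ?_)
      rw [hg]
      have hc2 : Real.cos θ ^ 2 = 1 - Real.sin θ ^ 2 := by
        nlinarith [Real.sin_sq_add_cos_sq θ]
      field_simp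
      rw [hsqv, hc2]
      ring
    have hint : (∫ θ in (0:ℝ)..(π/2), g θ) = G (π/2) - G 0 :=
      intervalIntegral.integral_eq_sub_of_hasDerivAt hGd
        (contg.intervalIntegrable _ _)
    have hG0 : G 0 = 0 := by simp [hGdef]
    have hGpi : G (π/2) = 0 := by simp [hGdef]
    have hsplit : (∫ θ in (0:ℝ)..(π/2), g θ)
        = (∫ θ in (0:ℝ)..(π/2),
            (r * Real.sin θ ^ 2) / (Real.sqrt (1 - r^2 * Real.sin θ ^ 2))^3)
          - (1/(r*(1-r^2))) * (E r - (1-r^2) * K r) := by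
      rw [hg]
      beta_reduce
      rw [intervalIntegral.integral_sub (g := fun θ => (1/(r*(1-r^2))) * (Real.sqrt (1 - r^2 * Real.sin θ ^ 2)
            - (1-r^2) * (1 / Real.sqrt (1 - r^2 * Real.sin θ ^ 2)))) (contI.intervalIntegrable _ _)
        (((continuous_const.mul (Continuous.sub contE
          (continuous_const.mul (contK hr2))))).intervalIntegrable _ _)]
      congr 1
      rw [intervalIntegral.integral_const_mul]
      congr 1
      rw [intervalIntegral.integral_sub (g := fun θ => (1-r^2) * (1 / Real.sqrt (1 - r^2 * Real.sin θ ^ 2)))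
        (contE.intervalIntegrable _ _)
        ((continuous_const.mul (contK hr2)).intervalIntegrable _ _)]
      rw [intervalIntegral.integral_const_mul]
      rfl
    rw [hint, hG0, hGpi] at hsplit
    have hne1 : r * (1 - r^2) ≠ 0 := by positivity
    have hfin : (∫ θ in (0:ℝ)..(π/2),
        (r * Real.sin θ ^ 2) / (Real.sqrt (1 - r^2 * Real.sin θ ^ 2))^3)
        = (1/(r*(1-r^2))) * (E r - (1-r^2) * K r) := by linarith
    rw [hfin]
    ring
  rw [heq] at h2
  exact h2


lemma r'_mem {r : ℝ} (h0 : 0 < r) (h1 : r < 1) :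
    Real.sqrt (1 - r^2) ∈ Ioo (0:ℝ) 1 := by
  constructor
  · apply Real.sqrt_pos.2; nlinarith
  · rw [Real.sqrt_lt' one_pos]
    nlinarith

lemma sq_r' {r : ℝ} (h1 : r^2 < 1) : (Real.sqrt (1 - r^2))^2 = 1 - r^2 :=
  Real.sq_sqrt (by nlinarith)

lemma hasDerivAt_r' {r : ℝ} (h0 : 0 < r) (h1 : r < 1) :
    HasDerivAt (fun r : ℝ => Real.sqrt (1 - r^2)) (-r / Real.sqrt (1 - r^2)) r := by
  have hA : (0:ℝ) < 1 - r^2 := by nlinarith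
  have hu : HasDerivAt (fun y : ℝ => 1 - y^2) (-(2*r)) r := by
    simpa using (hasDerivAt_pow 2 r).const_sub 1
  have := (Real.hasDerivAt_sqrt hA.ne').comp r hu
  refine this.congr_deriv (Eq.symm ?_)
  have hs : Real.sqrt (1 - r^2) ≠ 0 := (Real.sqrt_pos.2 hA).ne'
  field_simp

lemma hasDerivAt_K' {r : ℝ} (h0 : 0 < r) (h1 : r < 1) :
    HasDerivAt K' (-((E' r - r^2 * K' r) / (r * (1-r^2)))) r := by
  have hA : (0:ℝ) < 1 - r^2 := by nlinarith
  obtain ⟨hs0, hs1⟩ := r'_mem h0 h1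
  have hK := hasDerivAt_K hs0 hs1
  have := hK.comp r (hasDerivAt_r' h0 h1)
  refine this.congr_deriv (Eq.symm ?_)
  have hsq : (Real.sqrt (1 - r^2))^2 = 1 - r^2 := sq_r' (by nlinarith)
  generalize hu : Real.sqrt (1 - r^2) = u at hsq hs0 hs1 ⊢
  rw [show E' r = E u from by rw [← hu]; rfl, show K' r = K u from by rw [← hu]; rfl]
  rw [show (1:ℝ) - r^2 = u^2 from hsq.symm,
    show (1:ℝ) - u^2 = r^2 from by linear_combination -hsq]
  have hr : r ≠ 0 := h0.ne'
  field_simp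

lemma hasDerivAt_m {r : ℝ} (h0 : 0 < r) (h1 : r < 1) :
    HasDerivAt m ((2/(π*r)) * (E r * K' r - E' r * K r - K r * K' r)) r := by
  have hA : (0:ℝ) < 1 - r^2 := by nlinarith
  have h1' : HasDerivAt (fun r : ℝ => (2/π) * (1-r^2)) ((2/π) * (-(2*r))) r := by
    have hu : HasDerivAt (fun y : ℝ => 1 - y^2) (-(2*r)) r := by
      simpa using (hasDerivAt_pow 2 r).const_sub 1
    exact hu.const_mul _
  have h2' := (h1'.mul (hasDerivAt_K h0 h1)).mul (hasDerivAt_K' h0 h1)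
  have hm : m = fun r => (2/π) * (1-r^2) * K r * K' r := rfl
  rw [hm]
  refine h2'.congr_deriv (Eq.symm ?_)
  simp only [Pi.mul_apply]
  have hπ : (π:ℝ) ≠ 0 := Real.pi_ne_zero
  have hr : r ≠ 0 := h0.ne'
  field_simp
  ring

lemma K'_pos {r : ℝ} (h0 : 0 < r) (h1 : r < 1) : 0 < K' r := by
  obtain ⟨hs0, hs1⟩ := r'_mem h0 h1
  exact K_pos (by nlinarith [sq_r' (show r^2 < 1 by nlinarith)])

lemma E'_pos {r : ℝ} (h0 : 0 < r) (h1 : r < 1) : 0 < E' r := by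
  obtain ⟨hs0, hs1⟩ := r'_mem h0 h1
  exact E_pos (by nlinarith [sq_r' (show r^2 < 1 by nlinarith)])

lemma m_pos {r : ℝ} (h0 : 0 < r) (h1 : r < 1) : 0 < m r := by
  have hA : (0:ℝ) < 1 - r^2 := by nlinarith
  have := K_pos (show r^2 < 1 by nlinarith)
  have := K'_pos h0 h1
  have : (0:ℝ) < 2/π := by positivity
  unfold m
  positivity

lemma m_deriv_neg {r : ℝ} (h0 : 0 < r) (h1 : r < 1) :
    (2/(π*r)) * (E r * K' r - E' r * K r - K r * K' r) < 0 := by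
  have hr2 : r^2 < 1 := by nlinarith
  have hK := K_pos hr2
  have hK' := K'_pos h0 h1
  have hE' := E'_pos h0 h1
  have hEK := E_le_K hr2
  have hc : (0:ℝ) < 2/(π*r) := by positivity
  apply mul_neg_of_pos_of_neg hc
  nlinarith

lemma m_strictAnti : StrictAntiOn m (Ioo (0:ℝ) 1) := by
  have : interior (Ioo (0:ℝ) 1) = Ioo 0 1 := interior_Ioo
  apply strictAntiOn_of_deriv_neg (convex_Ioo 0 1)
  · intro x hx
    exact (hasDerivAt_m hx.1 hx.2).differentiableAt.continuousAt.continuousWithinAt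
  · intro x hx
    rw [this] at hx
    rw [(hasDerivAt_m hx.1 hx.2).deriv]
    exact m_deriv_neg hx.1 hx.2

lemma ratio_strictAnti : StrictAntiOn (fun r => E r / K r) (Ioo (0:ℝ) 1) := by
  apply strictAntiOn_of_deriv_neg (convex_Ioo 0 1)
  · intro x hx
    have hr2 : x^2 < 1 := by nlinarith [hx.1, hx.2]
    exact (((hasDerivAt_E hx.1 hx.2).div (hasDerivAt_K hx.1 hx.2)
      (K_pos hr2).ne')).differentiableAt.continuousAt.continuousWithinAt
  · intro x hx
    rw [interior_Ioo] at hx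
    obtain ⟨h0, h1⟩ := hx
    have hr2 : x^2 < 1 := by nlinarith
    have hK := K_pos hr2
    have hE := E_pos hr2
    have hd := (hasDerivAt_E h0 h1).div (hasDerivAt_K h0 h1) hK.ne'
    rw [show deriv (fun r => E r / K r) x = _ from hd.deriv]
    have hA : (0:ℝ) < 1 - x^2 := by nlinarith
    apply div_neg_of_neg_of_pos _ (by positivity)
    -- (E-K)/x * K - E * ((E - (1-x²)K)/(x(1-x²))) < 0
    have hw0 : 0 < Real.sqrt (1 - x^2) := Real.sqrt_pos.2 hA
    have hw1 : Real.sqrt (1 - x^2) < 1 := by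
      rw [Real.sqrt_lt' one_pos]; nlinarith
    have hw2 : (Real.sqrt (1 - x^2))^2 = 1 - x^2 := sq_r' hr2
    have hkey : (1-x^2) * ((E x - K x) * K x) - E x * (E x - (1-x^2)*K x) < 0 := by
      rw [← hw2]
      nlinarith [sq_nonneg (Real.sqrt (1 - x^2) * K x - E x),
        mul_pos (mul_pos hw0 (mul_pos hK hE)) (sub_pos.2 hw1)]
    have hexp : (E x - K x)/x * K x - E x * ((E x - (1-x^2)*K x)/(x*(1-x^2)))
        = ((1-x^2) * ((E x - K x) * K x) - E x * (E x - (1-x^2)*K x)) / (x*(1-x^2)) := by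
      field_simp
    rw [hexp]
    exact div_neg_of_neg_of_pos hkey (by positivity)

lemma ratio_lt_one {r : ℝ} (hr2 : r^2 < 1) : E r / K r ≤ 1 :=
  (div_le_one (K_pos hr2)).2 (E_le_K hr2)

noncomputable def phi (r : ℝ) : ℝ := (1/(1-r^2)) * (1 + E' r / K' r - E r / K r)

lemma comp_ratio_mono : ∀ a ∈ Ioo (0:ℝ) 1, ∀ b ∈ Ioo (0:ℝ) 1, a < b →
    E' a / K' a < E' b / K' b := by
  intro a ha b hb hab
  have h1 : Real.sqrt (1 - b^2) < Real.sqrt (1 - a^2) := by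
    apply Real.sqrt_lt_sqrt (by nlinarith [hb.1, hb.2])
    nlinarith [ha.1, hb.2]
  exact ratio_strictAnti (r'_mem hb.1 hb.2) (r'_mem ha.1 ha.2) h1

lemma q_pos {r : ℝ} (h0 : 0 < r) (h1 : r < 1) :
    0 < 1 + E' r / K' r - E r / K r := by
  have h2 := ratio_lt_one (show r^2 < 1 by nlinarith)
  have h3 : 0 < E' r / K' r := div_pos (E'_pos h0 h1) (K'_pos h0 h1)
  linarith

lemma phi_pos {r : ℝ} (h0 : 0 < r) (h1 : r < 1) : 0 < phi r := by
  have hA : (0:ℝ) < 1 - r^2 := by nlinarith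
  exact mul_pos (by positivity) (q_pos h0 h1)

lemma phi_strictMono : StrictMonoOn phi (Ioo (0:ℝ) 1) := by
  intro a ha b hb hab
  have hAa : (0:ℝ) < 1 - a^2 := by nlinarith [ha.1, ha.2]
  have hAb : (0:ℝ) < 1 - b^2 := by nlinarith [hb.1, hb.2]
  have hp : 1/(1-a^2) < 1/(1-b^2) := by
    apply one_div_lt_one_div_of_lt hAb
    nlinarith [ha.1, hb.1]
  have hq : 1 + E' a / K' a - E a / K a < 1 + E' b / K' b - E b / K b := by
    have h1 := comp_ratio_mono a ha b hb hab
    have h2 := ratio_strictAnti ha hb hab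
    simp only at h2
    linarith
  have hqa := q_pos ha.1 ha.2
  have hpa : (0:ℝ) < 1/(1-a^2) := by positivity
  unfold phi
  calc 1/(1-a^2) * (1 + E' a / K' a - E a / K a)
      < 1/(1-b^2) * (1 + E' a / K' a - E a / K a) := by
        exact mul_lt_mul_of_pos_right hp hqa
    _ ≤ 1/(1-b^2) * (1 + E' b / K' b - E b / K b) := by
        apply mul_le_mul_of_nonneg_left hq.le (by positivity)

lemma hasDerivAt_logm_exp {t : ℝ} (ht : t < 0) :
    HasDerivAt (fun t => Real.log (m (Real.exp t))) (-phi (Real.exp t)) t := by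
  set r := Real.exp t with hr
  have h0 : 0 < r := Real.exp_pos t
  have h1 : r < 1 := by rw [hr, ← Real.exp_zero]; exact Real.exp_lt_exp.2 ht
  have hm := (hasDerivAt_m h0 h1).comp t (Real.hasDerivAt_exp t)
  have hmp := m_pos h0 h1
  have hlog := (Real.hasDerivAt_log hmp.ne').comp t hm
  refine hlog.congr_deriv (Eq.symm ?_)
  have hr2 : r^2 < 1 := by nlinarith
  have hA : (0:ℝ) < 1 - r^2 := by nlinarith
  have hK := K_pos hr2
  have hK' := K'_pos h0 h1
  have hπ : (0:ℝ) < π := Real.pi_pos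
  show -phi r = (m r)⁻¹ * ((2/(π*r)) * (E r * K' r - E' r * K r - K r * K' r) * r)
  unfold phi m
  field_simp
  ring

lemma logm_strictConcave :
    StrictConcaveOn ℝ (Iio (0:ℝ)) (fun t => Real.log (m (Real.exp t))) := by
  apply StrictAntiOn.strictConcaveOn_of_deriv (convex_Iio 0)
  · intro t ht
    exact (hasDerivAt_logm_exp ht).differentiableAt.continuousAt.continuousWithinAt
  · rw [interior_Iio]
    intro s hs t ht hst
    rw [(hasDerivAt_logm_exp hs).deriv, (hasDerivAt_logm_exp ht).deriv]
    have hmem : ∀ u : ℝ, u < 0 → Real.exp u ∈ Ioo (0:ℝ) 1 := by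
      intro u hu
      exact ⟨Real.exp_pos u, by rw [← Real.exp_zero]; exact Real.exp_lt_exp.2 hu⟩
    have := phi_strictMono (hmem s hs) (hmem t ht) (Real.exp_lt_exp.2 hst)
    linarith


lemma m_gm {x y : ℝ} (hx : x ∈ Ioo (0:ℝ) 1) (hy : y ∈ Ioo (0:ℝ) 1) (hxy : x ≠ y) :
    Real.sqrt (m x * m y) < m (Real.sqrt (x*y)) := by
  have hmx := m_pos hx.1 hx.2
  have hmy := m_pos hy.1 hy.2
  have hlx : Real.log x < 0 := Real.log_neg hx.1 hx.2
  have hly : Real.log y < 0 := Real.log_neg hy.1 hy.2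
  have hne : Real.log x ≠ Real.log y := by
    intro h
    apply hxy
    rw [← Real.exp_log hx.1, ← Real.exp_log hy.1, h]
  have hconc := logm_strictConcave.2 (mem_Iio.2 hlx) (mem_Iio.2 hly) hne
    (by norm_num : (0:ℝ) < 1/2) (by norm_num : (0:ℝ) < 1/2) (by norm_num)
  simp only [smul_eq_mul] at hconc
  rw [Real.exp_log hx.1, Real.exp_log hy.1] at hconc
  have hxy0 : 0 < x * y := mul_pos hx.1 hy.1
  have hexp : Real.exp (1/2 * Real.log x + 1/2 * Real.log y) = Real.sqrt (x*y) := by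
    rw [show 1/2 * Real.log x + 1/2 * Real.log y = Real.log (x*y) / 2 from by
      rw [Real.log_mul hx.1.ne' hy.1.ne']; ring]
    rw [← Real.log_sqrt hxy0.le]
    exact Real.exp_log (Real.sqrt_pos.2 hxy0)
  rw [hexp] at hconc
  have hlhs : 1/2 * Real.log (m x) + 1/2 * Real.log (m y)
      = Real.log (Real.sqrt (m x * m y)) := by
    rw [Real.log_sqrt (by positivity), Real.log_mul hmx.ne' hmy.ne']
    ring
  rw [hlhs] at hconc
  have h1 : (0:ℝ) < Real.sqrt (m x * m y) := by positivity
  calc Real.sqrt (m x * m y) = Real.exp (Real.log (Real.sqrt (m x * m y))) :=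
        (Real.exp_log h1).symm
    _ < Real.exp (Real.log (m (Real.sqrt (x*y)))) := Real.exp_lt_exp.2 hconc
    _ = m (Real.sqrt (x*y)) := by
        apply Real.exp_log
        apply m_pos (Real.sqrt_pos.2 hxy0)
        rw [Real.sqrt_lt' one_pos]
        nlinarith [hx.1, hx.2, hy.1, hy.2]

lemma pmean_self {lam x : ℝ} (hx : 0 < x) : pmean lam x x = x := by
  unfold pmean
  split_ifs with h
  · exact Real.sqrt_mul_self hx.le
  · rw [show (x^lam + x^lam)/2 = x^lam from by ring]
    rw [← Real.rpow_mul hx.le]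
    rw [show lam * (1/lam) = 1 from by field_simp]
    exact Real.rpow_one x

lemma pmean_pos {lam x y : ℝ} (hx : 0 < x) (hy : 0 < y) : 0 < pmean lam x y := by
  unfold pmean
  split_ifs with h
  · positivity
  · have h1 := Real.rpow_pos_of_pos hx lam
    have h2 := Real.rpow_pos_of_pos hy lam
    apply Real.rpow_pos_of_pos
    linarith

lemma sqrt_am_gm {a b : ℝ} (ha : 0 ≤ a) (hb : 0 ≤ b) : Real.sqrt (a*b) ≤ (a+b)/2 := by
  have h : a*b ≤ ((a+b)/2)^2 := by nlinarith [sq_nonneg (a-b)]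
  calc Real.sqrt (a*b) ≤ Real.sqrt (((a+b)/2)^2) := Real.sqrt_le_sqrt h
    _ = (a+b)/2 := Real.sqrt_sq (by positivity)

lemma sqrt_am_gm_strict {a b : ℝ} (ha : 0 ≤ a) (hb : 0 ≤ b) (hab : a ≠ b) :
    Real.sqrt (a*b) < (a+b)/2 := by
  have h : a*b < ((a+b)/2)^2 := by
    rcases lt_or_gt_of_ne hab with h | h <;> nlinarith
  calc Real.sqrt (a*b) ≤ Real.sqrt (a*b) := le_rfl
    _ < Real.sqrt (((a+b)/2)^2) := Real.sqrt_lt_sqrt (by positivity) h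
    _ = (a+b)/2 := Real.sqrt_sq (by positivity)

lemma sqrt_rpow_aux {lam x y : ℝ} (hlam : lam ≠ 0) (hx : 0 < x) (hy : 0 < y) :
    (Real.sqrt (x^lam * y^lam))^(1/lam) = Real.sqrt (x*y) := by
  rw [← Real.mul_rpow hx.le hy.le, Real.sqrt_eq_rpow, Real.sqrt_eq_rpow,
    ← Real.rpow_mul (by positivity : (0:ℝ) ≤ x*y),
    ← Real.rpow_mul (by positivity : (0:ℝ) ≤ x*y)]
  congr 1
  field_simp

lemma pmean_le_sqrt {lam x y : ℝ} (hlam : lam ≤ 0) (hx : 0 < x) (hy : 0 < y) :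
    pmean lam x y ≤ Real.sqrt (x*y) := by
  unfold pmean
  split_ifs with h
  · exact le_rfl
  · have hlam' : lam < 0 := lt_of_le_of_ne hlam h
    have h1 := Real.rpow_pos_of_pos hx lam
    have h2 := Real.rpow_pos_of_pos hy lam
    have hg : Real.sqrt (x^lam * y^lam) ≤ (x^lam + y^lam)/2 := sqrt_am_gm h1.le h2.le
    have hs : (0:ℝ) < Real.sqrt (x^lam * y^lam) := by positivity
    have := Real.rpow_le_rpow_of_nonpos hs hg
      (show (1:ℝ)/lam ≤ 0 from div_nonpos_of_nonneg_of_nonpos (by norm_num) hlam)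
    calc ((x^lam + y^lam)/2)^(1/lam) ≤ (Real.sqrt (x^lam * y^lam))^(1/lam) := this
      _ = Real.sqrt (x*y) := sqrt_rpow_aux h hx hy

lemma pmean_lt_sqrt {lam x y : ℝ} (hlam : lam < 0) (hx : 0 < x) (hy : 0 < y)
    (hxy : x ≠ y) : pmean lam x y < Real.sqrt (x*y) := by
  unfold pmean
  rw [if_neg hlam.ne]
  have h1 := Real.rpow_pos_of_pos hx lam
  have h2 := Real.rpow_pos_of_pos hy lam
  have hne : x^lam ≠ y^lam := by
    rcases lt_or_gt_of_ne hxy with h | h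
    · exact (Real.rpow_lt_rpow_of_neg hx h hlam).ne'
    · exact (Real.rpow_lt_rpow_of_neg hy h hlam).ne
  have hg : Real.sqrt (x^lam * y^lam) < (x^lam + y^lam)/2 :=
    sqrt_am_gm_strict h1.le h2.le hne
  have hs : (0:ℝ) < Real.sqrt (x^lam * y^lam) := by positivity
  have := Real.rpow_lt_rpow_of_neg hs hg
    (show (1:ℝ)/lam < 0 from div_neg_of_pos_of_neg one_pos hlam)
  calc ((x^lam + y^lam)/2)^(1/lam) < (Real.sqrt (x^lam * y^lam))^(1/lam) := this
    _ = Real.sqrt (x*y) := sqrt_rpow_aux hlam.ne hx hy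

lemma main_ineq {lam : ℝ} (hlam : lam ≤ 0) {x y : ℝ} (hx : x ∈ Ioo (0:ℝ) 1)
    (hy : y ∈ Ioo (0:ℝ) 1) (hxy : x ≠ y) :
    pmean lam (m x) (m y) < m (pmean lam x y) := by
  have hmx := m_pos hx.1 hx.2
  have hmy := m_pos hy.1 hy.2
  have hxy0 : 0 < x * y := mul_pos hx.1 hy.1
  have hsq_mem : Real.sqrt (x*y) ∈ Ioo (0:ℝ) 1 := by
    refine ⟨Real.sqrt_pos.2 hxy0, ?_⟩
    rw [Real.sqrt_lt' one_pos]
    nlinarith [hx.1, hx.2, hy.1, hy.2]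
  have hple : pmean lam x y ≤ Real.sqrt (x*y) := pmean_le_sqrt hlam hx.1 hy.1
  have hpm_mem : pmean lam x y ∈ Ioo (0:ℝ) 1 :=
    ⟨pmean_pos hx.1 hy.1, lt_of_le_of_lt hple hsq_mem.2⟩
  calc pmean lam (m x) (m y) ≤ Real.sqrt (m x * m y) := pmean_le_sqrt hlam hmx hmy
    _ < m (Real.sqrt (x*y)) := m_gm hx hy hxy
    _ ≤ m (pmean lam x y) := by
        rcases eq_or_lt_of_le hple with he | hl
        · rw [he]
        · exact (m_strictAnti hpm_mem hsq_mem hl).le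

end Ell

theorem stmt_2 (lam : ℝ) (hlam : lam ≤ 0) :
    ∀ x ∈ Set.Ioo (0:ℝ) 1, ∀ y ∈ Set.Ioo (0:ℝ) 1,
      (x ≠ y → pmean lam (m x) (m y) < m (pmean lam x y)) ∧
      (pmean lam (m x) (m y) = m (pmean lam x y) ↔ x = y) := by
  intro x hx y hy
  refine ⟨fun hxy => Ell.main_ineq hlam hx hy hxy, ?_, ?_⟩
  · intro heq
    by_contra hne
    exact absurd heq (ne_of_lt (Ell.main_ineq hlam hx hy hne))
  · rintro rfl
    rw [Ell.pmean_self hx.1, Ell.pmean_self (Ell.m_pos hx.1 hx.2)]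
end

section
/- The function f₂(r) = (E(r) − r'² K(r)) / r² is strictly increasing and convex on (0,1), and it maps (0,1) onto (π/4, 1). -/
open Real Set Filter

noncomputable def F2 (r : ℝ) : ℝ :=
  ∫ θ in (0:ℝ)..(π/2), Real.cos θ ^ 2 / Real.sqrt (1 - r^2 * Real.sin θ ^ 2)


lemma psi_convex {c : ℝ} (hc0 : 0 ≤ c) (hc1 : c < 1) :
    ConvexOn ℝ (Set.Ioo (0:ℝ) 1) (fun r => 1 / Real.sqrt (1 - c * r ^ 2)) := by
  have hu : ∀ r ∈ Set.Ioo (0:ℝ) 1, 0 < 1 - c * r ^ 2 := by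
    intro r hr
    nlinarith [hr.1, hr.2, sq_nonneg r]
  have hu' : ∀ r : ℝ, HasDerivAt (fun r : ℝ => 1 - c * r ^ 2) (-(2 * c * r)) r := by
    intro r
    have := ((hasDerivAt_pow 2 r).const_mul c).const_sub 1
    refine HasDerivAt.congr_deriv this (Eq.symm ?_)
    simp; ring
  have hsq : ∀ r ∈ Set.Ioo (0:ℝ) 1, HasDerivAt (fun r : ℝ => Real.sqrt (1 - c * r ^ 2))
      (-(2 * c * r) / (2 * Real.sqrt (1 - c * r ^ 2))) r := by
    intro r hr
    exact (hu' r).sqrt (hu r hr).ne'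
  have hpsi : ∀ r ∈ Set.Ioo (0:ℝ) 1, HasDerivAt (fun r => 1 / Real.sqrt (1 - c * r ^ 2))
      (c * r / (Real.sqrt (1 - c * r ^ 2) * (1 - c * r ^ 2))) r := by
    intro r hr
    have h0 : Real.sqrt (1 - c * r ^ 2) ≠ 0 := (Real.sqrt_pos.2 (hu r hr)).ne'
    have := (hasDerivAt_const r (1:ℝ)).div (hsq r hr) h0
    refine HasDerivAt.congr_deriv this (Eq.symm ?_)
    rw [Real.sq_sqrt (hu r hr).le]
    field_simp [h0, (hu r hr).ne']
    ring
  have hD : ∀ r ∈ Set.Ioo (0:ℝ) 1, HasDerivAt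
      (fun r : ℝ => Real.sqrt (1 - c * r ^ 2) * (1 - c * r ^ 2))
      (-(3 * c * r * Real.sqrt (1 - c * r ^ 2))) r := by
    intro r hr
    have hs0 : Real.sqrt (1 - c * r ^ 2) ≠ 0 := (Real.sqrt_pos.2 (hu r hr)).ne'
    have hs2 : Real.sqrt (1 - c * r ^ 2) ^ 2 = 1 - c * r ^ 2 := Real.sq_sqrt (hu r hr).le
    have := (hsq r hr).mul (hu' r)
    refine HasDerivAt.congr_deriv this (Eq.symm ?_)
    field_simp
    linear_combination (-c * r) * hs2
  have hpsi2 : ∀ r ∈ Set.Ioo (0:ℝ) 1, HasDerivAt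
      (fun r : ℝ => c * r / (Real.sqrt (1 - c * r ^ 2) * (1 - c * r ^ 2)))
      ((c * 1 * (Real.sqrt (1 - c * r ^ 2) * (1 - c * r ^ 2)) -
        c * r * -(3 * c * r * Real.sqrt (1 - c * r ^ 2))) /
        (Real.sqrt (1 - c * r ^ 2) * (1 - c * r ^ 2)) ^ 2) r := by
    intro r hr
    have hD0 : Real.sqrt (1 - c * r ^ 2) * (1 - c * r ^ 2) ≠ 0 :=
      (mul_pos (Real.sqrt_pos.2 (hu r hr)) (hu r hr)).ne'
    exact ((hasDerivAt_id r).const_mul c).div (hD r hr) hD0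
  refine convexOn_of_hasDerivWithinAt2_nonneg (convex_Ioo 0 1)
    (f' := fun r : ℝ => c * r / (Real.sqrt (1 - c * r ^ 2) * (1 - c * r ^ 2)))
    (f'' := fun r : ℝ => (c * 1 * (Real.sqrt (1 - c * r ^ 2) * (1 - c * r ^ 2)) -
        c * r * -(3 * c * r * Real.sqrt (1 - c * r ^ 2))) /
        (Real.sqrt (1 - c * r ^ 2) * (1 - c * r ^ 2)) ^ 2) ?_ ?_ ?_ ?_
  · intro r hr
    exact ((hpsi r hr).differentiableAt.continuousAt).continuousWithinAt
  · rw [interior_Ioo]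
    intro r hr
    exact (hpsi r hr).hasDerivWithinAt
  · rw [interior_Ioo]
    intro r hr
    exact (hpsi2 r hr).hasDerivWithinAt
  · rw [interior_Ioo]
    intro r hr
    apply div_nonneg _ (sq_nonneg _)
    have hs : 0 ≤ Real.sqrt (1 - c * r ^ 2) := Real.sqrt_nonneg _
    have h1 : 0 ≤ c * (Real.sqrt (1 - c * r ^ 2) * (1 - c * r ^ 2)) :=
      mul_nonneg hc0 (mul_nonneg hs (hu r hr).le)
    have h2 : 0 ≤ c ^ 2 * r ^ 2 * Real.sqrt (1 - c * r ^ 2) :=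
      mul_nonneg (mul_nonneg (sq_nonneg c) (sq_nonneg r)) hs
    nlinarith [h1, h2]

lemma denom_pos {r : ℝ} (hr2 : r^2 < 1) (θ : ℝ) : 0 < 1 - r^2 * Real.sin θ ^ 2 := by
  nlinarith [Real.sin_sq_le_one θ, sq_nonneg (r * Real.sin θ), sq_nonneg r]

lemma cont_sqrt {r : ℝ} : Continuous (fun θ : ℝ => Real.sqrt (1 - r^2 * Real.sin θ ^ 2)) :=
  Real.continuous_sqrt.comp (by continuity)

lemma F2_eq {r : ℝ} (hr : r ∈ Set.Ioo (0:ℝ) 1) : (E r - (1 - r^2) * K r) / r^2 = F2 r := by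
  have hr2 : r^2 < 1 := by nlinarith [hr.1, hr.2]
  have hpos := fun θ => denom_pos hr2 θ
  have hsne : ∀ θ : ℝ, Real.sqrt (1 - r^2 * Real.sin θ ^ 2) ≠ 0 :=
    fun θ => (Real.sqrt_pos.2 (hpos θ)).ne'
  have c1 : Continuous fun θ : ℝ => Real.sqrt (1 - r^2 * Real.sin θ ^ 2) := cont_sqrt
  have c2 : Continuous fun θ : ℝ => (1 - r^2) * (1 / Real.sqrt (1 - r^2 * Real.sin θ ^ 2)) :=
    continuous_const.mul (continuous_const.div c1 hsne)
  have key : E r - (1 - r^2) * K r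
      = ∫ θ in (0:ℝ)..(π/2), r^2 * (Real.cos θ ^ 2 / Real.sqrt (1 - r^2 * Real.sin θ ^ 2)) := by
    rw [E, K, ← intervalIntegral.integral_const_mul,
      ← intervalIntegral.integral_sub (c1.intervalIntegrable _ _) (c2.intervalIntegrable _ _)]
    apply intervalIntegral.integral_congr
    intro θ _
    have hms : Real.sqrt (1 - r^2 * Real.sin θ ^ 2) * Real.sqrt (1 - r^2 * Real.sin θ ^ 2)
        = 1 - r^2 * Real.sin θ ^ 2 := Real.mul_self_sqrt (hpos θ).le
    have hsc : Real.sin θ ^ 2 + Real.cos θ ^ 2 = 1 := Real.sin_sq_add_cos_sq θ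
    field_simp [hsne θ]
    nlinarith [hms, hsc, sq_nonneg (Real.sin θ)]
  rw [key, intervalIntegral.integral_const_mul, F2, mul_comm,
    mul_div_assoc, div_self (pow_ne_zero 2 hr.1.ne'), mul_one]

lemma integrand_one : (fun θ : ℝ => Real.cos θ ^ 2 / Real.sqrt (1 - 1^2 * Real.sin θ ^ 2))
    = fun θ => |Real.cos θ| := by
  funext θ
  rw [show (1 : ℝ) - 1^2 * Real.sin θ ^ 2 = Real.cos θ ^ 2 by
      nlinarith [Real.sin_sq_add_cos_sq θ], Real.sqrt_sq_eq_abs]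
  rcases eq_or_ne (Real.cos θ) 0 with h | h
  · simp [h]
  · rw [← sq_abs, sq, mul_div_assoc, div_self (abs_ne_zero.2 h), mul_one]

lemma integrand_cont {r : ℝ} (hr2 : r^2 < 1) :
    Continuous (fun θ : ℝ => Real.cos θ ^ 2 / Real.sqrt (1 - r^2 * Real.sin θ ^ 2)) := by
  apply Continuous.div (by continuity) (Real.continuous_sqrt.comp (by continuity))
  exact fun θ => (Real.sqrt_pos.2 (denom_pos hr2 θ)).ne'

lemma integrand_integrable {r : ℝ} (hr : r ∈ Set.Icc (0:ℝ) 1) :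
    IntervalIntegrable (fun θ : ℝ => Real.cos θ ^ 2 / Real.sqrt (1 - r^2 * Real.sin θ ^ 2))
      MeasureTheory.volume 0 (π/2) := by
  rcases hr.2.lt_or_eq with h | h
  · have hr2 : r^2 < 1 := by nlinarith [hr.1]
    exact (integrand_cont hr2).intervalIntegrable _ _
  · rw [h, integrand_one]
    exact (continuous_abs.comp Real.continuous_cos).intervalIntegrable _ _

lemma F2_mono : StrictMonoOn F2 (Set.Icc (0:ℝ) 1) := by
  intro a ha b hb hab
  have ia := integrand_integrable ha
  have ib := integrand_integrable hb
  have key : F2 b - F2 a = ∫ θ in (0:ℝ)..(π/2),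
      (Real.cos θ ^ 2 / Real.sqrt (1 - b^2 * Real.sin θ ^ 2)
        - Real.cos θ ^ 2 / Real.sqrt (1 - a^2 * Real.sin θ ^ 2)) := by
    rw [F2, F2, intervalIntegral.integral_sub ib ia]
  have hpos : 0 < F2 b - F2 a := by
    rw [key]
    apply intervalIntegral.intervalIntegral_pos_of_pos_on (ib.sub ia)
    · intro θ hθ
      have hsin : 0 < Real.sin θ := Real.sin_pos_of_pos_of_lt_pi hθ.1
        (hθ.2.trans (by linarith [Real.pi_pos]))
      have hcos : 0 < Real.cos θ := Real.cos_pos_of_mem_Ioo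
        ⟨by linarith [Real.pi_pos, hθ.1], hθ.2⟩
      have hsc : Real.sin θ ^ 2 + Real.cos θ ^ 2 = 1 := Real.sin_sq_add_cos_sq θ
      have hb2 : b^2 ≤ 1 := by nlinarith [hb.1, hb.2]
      have hs1 : Real.sin θ ^ 2 < 1 := by nlinarith
      have hbs : b^2 * Real.sin θ ^ 2 ≤ 1 * Real.sin θ ^ 2 :=
        mul_le_mul_of_nonneg_right hb2 (sq_nonneg _)
      have hub : 0 < 1 - b^2 * Real.sin θ ^ 2 := by nlinarith
      have hab2 : a^2 < b^2 := by nlinarith [ha.1]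
      have hlt : 1 - b^2 * Real.sin θ ^ 2 < 1 - a^2 * Real.sin θ ^ 2 := by
        have := mul_lt_mul_of_pos_right hab2 (by positivity : (0:ℝ) < Real.sin θ ^ 2)
        linarith
      have hua : 0 < 1 - a^2 * Real.sin θ ^ 2 := by linarith
      have hslt : Real.sqrt (1 - b^2 * Real.sin θ ^ 2)
          < Real.sqrt (1 - a^2 * Real.sin θ ^ 2) := Real.sqrt_lt_sqrt hub.le hlt
      have h1 : 0 < Real.sqrt (1 - b^2 * Real.sin θ ^ 2) := Real.sqrt_pos.2 hub
      have := div_lt_div_of_pos_left (by positivity : (0:ℝ) < Real.cos θ ^ 2) h1 hslt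
      linarith
    · linarith [Real.pi_pos]
  linarith

lemma F2_zero : F2 0 = π/4 := by
  rw [F2]
  simp only [ne_eq, OfNat.ofNat_ne_zero, not_false_eq_true, zero_pow, zero_mul, sub_zero,
    Real.sqrt_one, div_one]
  rw [integral_cos_sq]
  simp [Real.cos_pi_div_two, Real.sin_pi_div_two]
  ring

lemma F2_one : F2 1 = 1 := by
  rw [F2, integrand_one]
  rw [intervalIntegral.integral_congr (g := Real.cos) ?_, integral_cos]
  · simp
  · intro θ hθ
    rw [Set.uIcc_of_le (by linarith [Real.pi_pos])] at hθ
    exact abs_of_nonneg (Real.cos_nonneg_of_mem_Icc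
      ⟨by linarith [Real.pi_pos, hθ.1], hθ.2⟩)


lemma F2_contOn : ContinuousOn F2 (Set.Icc (0:ℝ) 1) := by
  have hle : (0:ℝ) ≤ π/2 := by linarith [Real.pi_pos]
  have h : F2 = fun r => ∫ θ in Set.Ioc (0:ℝ) (π/2),
      Real.cos θ ^ 2 / Real.sqrt (1 - r^2 * Real.sin θ ^ 2) := by
    funext r
    rw [F2, intervalIntegral.integral_of_le hle]
  rw [h]
  apply MeasureTheory.continuousOn_of_dominated (bound := fun _ => (1:ℝ))
  · intro r _
    apply Measurable.aestronglyMeasurable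
    fun_prop
  · intro r hr
    apply MeasureTheory.ae_of_all
    intro θ
    have h1 : Real.cos θ ^ 2 ≤ 1 - r^2 * Real.sin θ ^ 2 := by
      nlinarith [Real.sin_sq_add_cos_sq θ, hr.1, hr.2, sq_nonneg (Real.sin θ),
        mul_le_mul_of_nonneg_right (show r^2 ≤ 1 by nlinarith [hr.1, hr.2]) (sq_nonneg (Real.sin θ))]
    have hnn : (0:ℝ) ≤ Real.cos θ ^ 2 / Real.sqrt (1 - r^2 * Real.sin θ ^ 2) := by positivity
    rw [Real.norm_eq_abs, abs_of_nonneg hnn]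
    rcases eq_or_lt_of_le (Real.sqrt_nonneg (1 - r^2 * Real.sin θ ^ 2)) with hs | hs
    · rw [← hs, div_zero]; norm_num
    · rw [div_le_one hs]
      calc Real.cos θ ^ 2 ≤ |Real.cos θ| := by
            nlinarith [abs_nonneg (Real.cos θ), abs_cos_le_one θ, sq_abs (Real.cos θ)]
        _ = Real.sqrt (Real.cos θ ^ 2) := (Real.sqrt_sq_eq_abs _).symm
        _ ≤ Real.sqrt (1 - r^2 * Real.sin θ ^ 2) := Real.sqrt_le_sqrt h1
  · exact MeasureTheory.integrableOn_const measure_Ioc_lt_top.ne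
  · have h1 : ∀ᵐ θ : ℝ, θ ≠ π/2 := by
      rw [MeasureTheory.ae_iff]
      have : {θ : ℝ | ¬ θ ≠ π/2} = {π/2} := by ext θ; simp
      rw [this, Real.volume_singleton]
    filter_upwards [MeasureTheory.ae_restrict_of_ae h1,
      MeasureTheory.ae_restrict_mem measurableSet_Ioc] with θ hne hθ
    have hθlt : θ < π/2 := lt_of_le_of_ne hθ.2 hne
    have hcos : 0 < Real.cos θ := Real.cos_pos_of_mem_Ioo
      ⟨by linarith [Real.pi_pos, hθ.1], hθlt⟩
    apply ContinuousOn.div continuousOn_const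
    · exact (Real.continuous_sqrt.comp (by continuity)).continuousOn
    · intro r hr
      have h2 : 0 < 1 - r^2 * Real.sin θ ^ 2 := by
        nlinarith [Real.sin_sq_add_cos_sq θ,
          mul_le_mul_of_nonneg_right (show r^2 ≤ 1 by nlinarith [hr.1, hr.2]) (sq_nonneg (Real.sin θ))]
      exact (Real.sqrt_pos.2 h2).ne'


lemma F2_convex : ConvexOn ℝ (Set.Ioo (0:ℝ) 1) F2 := by
  refine ⟨convex_Ioo 0 1, ?_⟩
  intro x hx y hy p q hp hq hpq
  have hz : p • x + q • y ∈ Set.Ioo (0:ℝ) 1 := (convex_Ioo 0 1) hx hy hp hq hpq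
  simp only [smul_eq_mul] at *
  have sq1 : ∀ {t : ℝ}, t ∈ Set.Ioo (0:ℝ) 1 → t^2 < 1 := fun ht => by nlinarith [ht.1, ht.2]
  have ix := (integrand_cont (sq1 hx)).intervalIntegrable (μ := MeasureTheory.volume) (0:ℝ) (π/2)
  have iy := (integrand_cont (sq1 hy)).intervalIntegrable (μ := MeasureTheory.volume) (0:ℝ) (π/2)
  have iz := (integrand_cont (sq1 hz)).intervalIntegrable (μ := MeasureTheory.volume) (0:ℝ) (π/2)
  have hrhs : p * F2 x + q * F2 y = ∫ θ in (0:ℝ)..(π/2),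
      (p * (Real.cos θ ^ 2 / Real.sqrt (1 - x^2 * Real.sin θ ^ 2))
       + q * (Real.cos θ ^ 2 / Real.sqrt (1 - y^2 * Real.sin θ ^ 2))) := by
    rw [F2, F2, ← intervalIntegral.integral_const_mul, ← intervalIntegral.integral_const_mul,
      ← intervalIntegral.integral_add (ix.const_mul p) (iy.const_mul q)]
  rw [hrhs, F2]
  apply intervalIntegral.integral_mono_on (by linarith [Real.pi_pos])
    iz ((ix.const_mul p).add (iy.const_mul q))
  intro θ hθ
  rcases eq_or_ne (Real.cos θ) 0 with h | h
  · simp [h]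
  · have hc1 : Real.sin θ ^ 2 < 1 := by nlinarith [Real.sin_sq_add_cos_sq θ, pow_pos (abs_pos.2 h) 2, sq_abs (Real.cos θ)]
    have key := (psi_convex (sq_nonneg (Real.sin θ)) hc1).2 hx hy hp hq hpq
    simp only [smul_eq_mul] at key
    have key2 := mul_le_mul_of_nonneg_left key (sq_nonneg (Real.cos θ))
    have e1 : ∀ t : ℝ, 1 - Real.sin θ ^ 2 * t ^ 2 = 1 - t^2 * Real.sin θ ^ 2 := fun t => by ring
    rw [e1] at key2
    calc Real.cos θ ^ 2 / Real.sqrt (1 - (p*x+q*y)^2 * Real.sin θ ^ 2)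
        = Real.cos θ ^ 2 * (1 / Real.sqrt (1 - (p*x+q*y)^2 * Real.sin θ ^ 2)) := by
          rw [mul_one_div]
      _ ≤ Real.cos θ ^ 2 * (p * (1 / Real.sqrt (1 - Real.sin θ ^ 2 * x ^ 2))
            + q * (1 / Real.sqrt (1 - Real.sin θ ^ 2 * y ^ 2))) := key2
      _ = p * (Real.cos θ ^ 2 / Real.sqrt (1 - x^2 * Real.sin θ ^ 2))
            + q * (Real.cos θ ^ 2 / Real.sqrt (1 - y^2 * Real.sin θ ^ 2)) := by
          rw [e1 x, e1 y]; ring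


theorem stmt_9 :
    StrictMonoOn (fun r : ℝ => (E r - (1 - r^2) * K r) / r^2) (Set.Ioo (0:ℝ) 1) ∧
    ConvexOn ℝ (Set.Ioo (0:ℝ) 1) (fun r : ℝ => (E r - (1 - r^2) * K r) / r^2) ∧
    (fun r : ℝ => (E r - (1 - r^2) * K r) / r^2) '' Set.Ioo (0:ℝ) 1 = Set.Ioo (π/4) 1 := by
  have heq : ∀ r ∈ Set.Ioo (0:ℝ) 1, (E r - (1 - r^2) * K r) / r^2 = F2 r :=
    fun r hr => F2_eq hr
  refine ⟨?_, ?_, ?_⟩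
  · intro a ha b hb hab
    show (E a - (1 - a^2) * K a) / a^2 < (E b - (1 - b^2) * K b) / b^2
    rw [heq a ha, heq b hb]
    exact F2_mono (Set.Ioo_subset_Icc_self ha) (Set.Ioo_subset_Icc_self hb) hab
  · refine ⟨convex_Ioo 0 1, ?_⟩
    intro x hx y hy p q hp hq hpq
    have hz := (convex_Ioo (0:ℝ) 1) hx hy hp hq hpq
    simp only [smul_eq_mul] at *
    show (E (p*x+q*y) - (1 - (p*x+q*y)^2) * K (p*x+q*y)) / (p*x+q*y)^2
      ≤ p * ((E x - (1 - x^2) * K x) / x^2) + q * ((E y - (1 - y^2) * K y) / y^2)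
    rw [heq _ hz, heq _ hx, heq _ hy]
    have := F2_convex.2 hx hy hp hq hpq
    simpa using this
  · rw [Set.image_congr heq]
    apply Set.Subset.antisymm
    · rintro _ ⟨x, hx, rfl⟩
      have h0 : (0:ℝ) ∈ Set.Icc (0:ℝ) 1 := ⟨le_refl 0, zero_le_one⟩
      have h1 : (1:ℝ) ∈ Set.Icc (0:ℝ) 1 := ⟨zero_le_one, le_refl 1⟩
      constructor
      · have := F2_mono h0 (Set.Ioo_subset_Icc_self hx) hx.1
        rwa [F2_zero] at this
      · have := F2_mono (Set.Ioo_subset_Icc_self hx) h1 hx.2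
        rwa [F2_one] at this
    · have := intermediate_value_Ioo zero_le_one F2_contOn
      rwa [F2_zero, F2_one] at this
end

section
/- For each real number c ≥ 1/2, the function f₃(r) = r'^c K(r) is decreasing on [0,1), and it maps [0,1) onto (0, π/2]. -/
open Real Set Filter

open MeasureTheory
open scoped ENNReal Topology

namespace Stmt10

/-- Wallis ratios: W n = (2n-1)!!/(2n)!!. -/
noncomputable def W : ℕ → ℝ
  | 0 => 1
  | (n+1) => W n * (2*n+1) / (2*n+2)

lemma W_pos (n : ℕ) : 0 < W n := by
  induction n with
  | zero => norm_num [W]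
  | succ n ih => rw [W]; positivity

lemma W_le_one (n : ℕ) : W n ≤ 1 := by
  induction n with
  | zero => norm_num [W]
  | succ n ih =>
    rw [W, div_le_one (by positivity)]
    nlinarith [W_pos n]

lemma W_succ (n : ℕ) : (2*(n:ℝ)+2) * W (n+1) = (2*n+1) * W n := by
  rw [W]; field_simp

/-- squares of Wallis ratios. -/
noncomputable def a (n : ℕ) : ℝ := (W n)^2

lemma a_pos (n : ℕ) : 0 < a n := pow_pos (W_pos n) 2
lemma a_le_one (n : ℕ) : a n ≤ 1 := by
  have h1 := W_pos n; have h2 := W_le_one n; simp only [a]; nlinarith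
lemma a_succ (n : ℕ) : (2*(n:ℝ)+2)^2 * a (n+1) = (2*n+1)^2 * a n := by
  have h := W_succ n; simp only [a]
  have : ((2*(n:ℝ)+2) * W (n+1))^2 = ((2*n+1) * W n)^2 := by rw [h]
  nlinarith [this]

lemma a_mul_le (n : ℕ) : a n * (n+1 : ℝ) ≤ 1 := by
  induction n with
  | zero => norm_num [a, W]
  | succ n ih =>
    have h := a_succ n
    have hp := a_pos (n+1)
    have hp2 := a_pos n
    push_cast
    nlinarith [h, ih, hp, hp2, sq_nonneg ((n:ℝ)+1)]

lemma a_le_inv (n : ℕ) : a n ≤ 1/(n+1 : ℝ) := by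
  have h := a_mul_le n
  rw [le_div_iff₀ (by positivity)]
  linarith



lemma W_zero : W 0 = 1 := rfl

lemma a_def (n : ℕ) : a n = (W n)^2 := rfl

lemma a_zero : a 0 = 1 := by rw [a_def, W_zero]; norm_num

lemma abs_a_le (n : ℕ) : |a n| ≤ 1 := by
  rw [abs_of_pos (a_pos n)]; exact a_le_one n

lemma summable_coef {b : ℕ → ℝ} (hb : ∀ n, |b n| ≤ 1) {x : ℝ} (hx : |x| < 1) :
    Summable (fun n => b n * x^n) := by
  refine Summable.of_norm_bounded
    (summable_geometric_of_lt_one (abs_nonneg x) hx) (fun n => ?_)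
  rw [norm_mul, norm_pow, Real.norm_eq_abs, Real.norm_eq_abs]
  calc |b n| * |x|^n ≤ 1 * |x|^n :=
        mul_le_mul_of_nonneg_right (hb n) (by positivity)
    _ = |x|^n := one_mul _

lemma summable_nat_mul_geom {ρ : ℝ} (h0 : 0 ≤ ρ) (hρ : ρ < 1) :
    Summable (fun n : ℕ => (n:ℝ) * ρ^(n-1)) := by
  have h1 : Summable (fun n : ℕ => (n:ℝ) * ρ^n) := by
    simpa using summable_pow_mul_geometric_of_norm_lt_one 1
      (by rwa [Real.norm_eq_abs, abs_of_nonneg h0])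
  have h2 : Summable (fun n : ℕ => ((n:ℝ)+1) * ρ^n) := by
    refine (h1.add (summable_geometric_of_lt_one h0 hρ)).congr (fun n => ?_)
    ring
  rw [← summable_nat_add_iff 1]
  refine h2.congr (fun n => ?_)
  push_cast
  simp

lemma summable_deriv_coef {b : ℕ → ℝ} (hb : ∀ n, |b n| ≤ 1) {x : ℝ} (hx : |x| < 1) :
    Summable (fun n => b n * ((n:ℝ) * x^(n-1))) := by
  refine Summable.of_norm_bounded (g := fun n => (n:ℝ) * |x|^(n-1))
    (summable_nat_mul_geom (abs_nonneg x) hx) (fun n => ?_)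
  simp only [norm_mul, Real.norm_eq_abs, abs_pow, Nat.abs_cast]
  calc |b n| * ((n:ℝ) * |x|^(n-1)) ≤ 1 * ((n:ℝ) * |x|^(n-1)) :=
        mul_le_mul_of_nonneg_right (hb n) (by positivity)
    _ = _ := one_mul _

/-- derivative of a power series with bounded coefficients, within radius 1. -/
lemma hasDerivAt_psum {b : ℕ → ℝ} (hb : ∀ n, |b n| ≤ 1) {x : ℝ} (hx : |x| < 1) :
    HasDerivAt (fun y => ∑' n, b n * y^n) (∑' n, b n * ((n:ℝ) * x^(n-1))) x := by
  set ρ : ℝ := (1 + |x|)/2 with hρdef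
  have hρ0 : 0 ≤ ρ := by positivity
  have hxρ : |x| < ρ := by rw [hρdef]; linarith
  have hρ1 : ρ < 1 := by rw [hρdef]; linarith
  refine hasDerivAt_tsum_of_isPreconnected (summable_nat_mul_geom hρ0 hρ1)
    (Metric.isOpen_ball (x := (0:ℝ)) (ε := ρ)) (convex_ball (0:ℝ) ρ).isPreconnected
    (g' := fun n y => b n * ((n:ℝ) * y^(n-1)))
    (fun n y _ => (hasDerivAt_pow n y).const_mul (b n)) (fun n y hy => ?_)
    (by simpa [Real.dist_eq] using hxρ : x ∈ Metric.ball (0:ℝ) ρ)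
    (summable_coef hb hx) (by simpa [Real.dist_eq] using hxρ)
  have hyρ : |y| ≤ ρ := by
    rw [Metric.mem_ball, Real.dist_eq, sub_zero] at hy; exact hy.le
  simp only [norm_mul, Real.norm_eq_abs, abs_pow, Nat.abs_cast]
  calc |b n| * ((n:ℝ) * |y|^(n-1)) ≤ 1 * ((n:ℝ) * ρ^(n-1)) := by
        apply mul_le_mul (hb n) _ (by positivity) one_pos.le
        exact mul_le_mul_of_nonneg_left (pow_le_pow_left₀ (abs_nonneg y) hyρ _) (Nat.cast_nonneg n)
    _ = _ := one_mul _

/-- index shift for the derivative sum. -/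
lemma deriv_psum_shift {b : ℕ → ℝ} (hb : ∀ n, |b n| ≤ 1) {x : ℝ} (hx : |x| < 1) :
    (∑' n, b n * ((n:ℝ) * x^(n-1))) = ∑' (n : ℕ), ((n:ℝ)+1) * b (n+1) * x^n := by
  rw [Summable.tsum_eq_zero_add (summable_deriv_coef hb hx)]
  simp only [Nat.cast_zero, pow_zero, zero_mul, mul_zero, zero_add, Nat.add_sub_cancel]
  exact tsum_congr (fun n => by push_cast [Nat.add_sub_cancel]; ring)


lemma abs_W_le (n : ℕ) : |W n| ≤ 1 := by
  rw [abs_of_pos (W_pos n)]; exact W_le_one n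

lemma psum_apply_zero (b : ℕ → ℝ) : ∑' n, b n * (0:ℝ)^n = b 0 := by
  rw [tsum_eq_single 0 (fun n hn => ?_)]
  · norm_num
  · simp [zero_pow hn]

lemma summable_n_coef {b : ℕ → ℝ} (hb : ∀ n, |b n| ≤ 1) {x : ℝ} (hx : |x| < 1) :
    Summable (fun n : ℕ => (n:ℝ) * b n * x^n) := by
  have h1 : Summable (fun n : ℕ => (n:ℝ) * |x|^n) := by
    simpa using summable_pow_mul_geometric_of_norm_lt_one 1
      (by rwa [Real.norm_eq_abs, abs_abs])
  refine Summable.of_norm_bounded h1 (fun n => ?_)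
  simp only [norm_mul, Real.norm_eq_abs, abs_pow, Nat.abs_cast]
  calc (n:ℝ) * |b n| * |x|^n ≤ (n:ℝ) * 1 * |x|^n := by
        apply mul_le_mul_of_nonneg_right _ (by positivity)
        exact mul_le_mul_of_nonneg_left (hb n) (Nat.cast_nonneg n)
    _ = (n:ℝ) * |x|^n := by ring

lemma summable_n1_coef {b : ℕ → ℝ} (hb : ∀ n, |b n| ≤ 1) {x : ℝ} (hx : |x| < 1) :
    Summable (fun n : ℕ => ((n:ℝ)+1) * b (n+1) * x^n) := by
  have h1 : Summable (fun n : ℕ => ((n:ℝ)+1) * |x|^n) := by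
    have h2 : Summable (fun n : ℕ => (n:ℝ) * |x|^n) := by
      simpa using summable_pow_mul_geometric_of_norm_lt_one 1
        (by rwa [Real.norm_eq_abs, abs_abs])
    refine (h2.add (summable_geometric_of_lt_one (abs_nonneg x) hx)).congr (fun n => ?_)
    ring
  refine Summable.of_norm_bounded h1 (fun n => ?_)
  simp only [norm_mul, Real.norm_eq_abs, abs_pow]
  have : |((n:ℝ)+1)| = (n:ℝ)+1 := abs_of_pos (by positivity)
  rw [this]
  calc ((n:ℝ)+1) * |b (n+1)| * |x|^n ≤ ((n:ℝ)+1) * 1 * |x|^n := by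
        apply mul_le_mul_of_nonneg_right _ (by positivity)
        exact mul_le_mul_of_nonneg_left (hb (n+1)) (by positivity)
    _ = ((n:ℝ)+1) * |x|^n := by ring

lemma x_mul_deriv {b : ℕ → ℝ} (hb : ∀ n, |b n| ≤ 1) {x : ℝ} (hx : |x| < 1) :
    x * (∑' n, b n * ((n:ℝ) * x^(n-1))) = ∑' (n : ℕ), (n:ℝ) * b n * x^n := by
  rw [deriv_psum_shift hb hx, ← tsum_mul_left,
    Summable.tsum_eq_zero_add (summable_n_coef hb hx)]
  simp only [Nat.cast_zero, zero_mul, zero_add]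
  exact tsum_congr (fun n => by push_cast; ring)

/-- The binomial series for `1/√(1-t)`. -/
lemma hasSum_W {t : ℝ} (ht0 : 0 ≤ t) (ht1 : t < 1) :
    HasSum (fun n => W n * t^n) (1 / Real.sqrt (1-t)) := by
  set u : ℝ → ℝ := fun y => ∑' n, W n * y^n with hu
  have key : ∀ y : ℝ, |y| < 1 →
      2*(1-y) * (∑' n, W n * ((n:ℝ) * y^(n-1))) = u y := by
    intro y hy
    have expand : 2*(1-y) * (∑' n, W n * ((n:ℝ) * y^(n-1)))
        = 2 * (∑' (n:ℕ), ((n:ℝ)+1) * W (n+1) * y^n) - 2 * (y * (∑' n, W n * ((n:ℝ) * y^(n-1)))) := by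
      rw [← deriv_psum_shift abs_W_le hy]; ring
    rw [expand, x_mul_deriv abs_W_le hy, ← tsum_mul_left, ← tsum_mul_left,
      ← Summable.tsum_sub ((summable_n1_coef abs_W_le hy).mul_left 2)
        ((summable_n_coef abs_W_le hy).mul_left 2)]
    exact tsum_congr (fun n => by
      have h := W_succ n
      linear_combination y^n * h)
  have hderiv0 : ∀ y : ℝ, |y| < 1 → HasDerivAt (fun z => (1-z) * (u z)^2) 0 y := by
    intro y hy
    have hd := hasDerivAt_psum abs_W_le hy
    have h1 : HasDerivAt (fun z : ℝ => 1 - z) (-1) y := by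
      simpa using (hasDerivAt_id y).const_sub 1
    have h2 : HasDerivAt (fun z => (u z)^2)
        (2 * u y ^ 1 * (∑' n, W n * ((n:ℝ) * y^(n-1)))) y := by
      simpa using hd.fun_pow 2
    have := h1.fun_mul h2
    refine this.congr_deriv (Eq.symm ?_)
    have hk := key y hy
    simp only [pow_one]
    linear_combination (-(u y)) * hk
  have hconst : (1-t) * (u t)^2 = 1 := by
    have habs : ∀ x : ℝ, x ∈ Icc 0 t → |x| < 1 := by
      intro x hx
      rw [abs_of_nonneg hx.1]
      exact lt_of_le_of_lt hx.2 ht1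
    have h := constant_of_has_deriv_right_zero
      (f := fun z => (1-z) * (u z)^2) (a := 0) (b := t)
      (fun x hx => ((hderiv0 x (habs x hx)).continuousAt).continuousWithinAt)
      (fun x hx => ((hderiv0 x (habs x ⟨hx.1, hx.2.le⟩)).hasDerivWithinAt))
      t (right_mem_Icc.mpr ht0)
    have h' : (1-t) * (u t)^2 = (1-(0:ℝ)) * (u 0)^2 := h
    have h0 : u 0 = 1 := by
      have := psum_apply_zero W
      simp only [hu]
      rw [this, W_zero]
    rw [h', h0]; norm_num
  have habs_t : |t| < 1 := by rwa [abs_of_nonneg ht0]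
  have hsum := summable_coef abs_W_le habs_t
  have hu_ge : 1 ≤ u t := by
    have hle := Summable.le_tsum hsum 0 (fun n hn => mul_nonneg (W_pos n).le (pow_nonneg ht0 n))
    simp only [pow_zero, mul_one, W_zero] at hle
    exact hle
  have h1t : 0 < 1 - t := by linarith
  have huval : u t = 1 / Real.sqrt (1-t) := by
    have hsq : (u t)^2 = 1/(1-t) := by
      field_simp at hconst ⊢
      linarith
    have : u t = Real.sqrt ((u t)^2) := (Real.sqrt_sq (by linarith)).symm
    rw [this, hsq, one_div, one_div, Real.sqrt_inv]
  simp only [hu] at huval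
  exact huval ▸ hsum.hasSum


lemma integral_sin_pow_even' (n : ℕ) :
    ∫ θ in (0:ℝ)..(π/2), sin θ ^ (2*n) = π/2 * W n := by
  induction n with
  | zero => simp [W_zero]
  | succ n ih =>
    have h := integral_sin_pow (a := 0) (b := π/2) (2*n)
    have h2 : 2*(n+1) = 2*n+2 := by ring
    rw [h2, h, ih]
    simp only [Real.sin_zero, Real.cos_pi_div_two, mul_zero, zero_mul, sub_zero, zero_div]
    have hW := W_succ n
    have h3 : (0:ℝ) < 2*(n:ℝ)+2 := by positivity
    rw [zero_pow (by omega), zero_mul, zero_div, zero_add]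
    push_cast
    rw [div_mul_eq_mul_div, eq_comm, eq_div_iff (by positivity)]
    linear_combination (π/2) * hW

lemma K_series {r : ℝ} (hr0 : 0 ≤ r) (hr1 : r < 1) :
    K r = π/2 * ∑' n, a n * (r^2)^n := by
  have hr2 : r^2 < 1 := by nlinarith
  have hpi : (0:ℝ) ≤ π/2 := by positivity
  have ht : ∀ θ : ℝ, 0 ≤ r^2 * sin θ^2 ∧ r^2 * sin θ^2 < 1 := by
    intro θ
    constructor
    · positivity
    · nlinarith [sin_sq_le_one θ, sq_nonneg (sin θ), sq_nonneg r]
  have step1 : K r = ∫ θ in (0:ℝ)..(π/2), ∑' n, W n * (r^2 * sin θ^2)^n := by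
    unfold K
    refine intervalIntegral.integral_congr (fun θ _ => ?_)
    exact ((hasSum_W (ht θ).1 (ht θ).2).tsum_eq).symm
  rw [step1, intervalIntegral.integral_of_le hpi]
  have hmeas : ∀ n : ℕ, AEStronglyMeasurable (fun θ : ℝ => W n * (r^2 * sin θ^2)^n)
      (volume.restrict (Ioc 0 (π/2))) := by
    intro n
    exact (Continuous.aestronglyMeasurable (by continuity))
  have hbound : ∀ n : ℕ, (∫⁻ θ in Ioc (0:ℝ) (π/2), ‖W n * (r^2 * sin θ^2)^n‖₊)
      ≤ ENNReal.ofReal ((r^2)^n) * ENNReal.ofReal (π/2) := by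
    intro n
    have hple : ∀ θ : ℝ, (‖W n * (r^2 * sin θ^2)^n‖₊ : ℝ≥0∞) ≤ ENNReal.ofReal ((r^2)^n) := by
      intro θ
      rw [← enorm_eq_nnnorm, ← ofReal_norm]
      apply ENNReal.ofReal_le_ofReal
      rw [Real.norm_eq_abs, abs_mul, abs_pow]
      have h1 : |W n| ≤ 1 := by rw [abs_of_pos (W_pos n)]; exact W_le_one n
      have h2 : |r^2 * sin θ^2| ≤ r^2 := by
        rw [abs_of_nonneg (ht θ).1]
        nlinarith [sin_sq_le_one θ, sq_nonneg r]
      calc |W n| * |r^2*sin θ^2|^n ≤ 1 * (r^2)^n := by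
            apply mul_le_mul h1 (pow_le_pow_left₀ (abs_nonneg _) h2 n) (by positivity) one_pos.le
        _ = (r^2)^n := one_mul _
    calc (∫⁻ θ in Ioc (0:ℝ) (π/2), ‖W n * (r^2 * sin θ^2)^n‖₊)
        ≤ ∫⁻ _ in Ioc (0:ℝ) (π/2), ENNReal.ofReal ((r^2)^n) :=
          lintegral_mono (fun θ => hple θ)
      _ = ENNReal.ofReal ((r^2)^n) * volume (Ioc (0:ℝ) (π/2)) := setLIntegral_const _ _
      _ = ENNReal.ofReal ((r^2)^n) * ENNReal.ofReal (π/2) := by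
          rw [Real.volume_Ioc]; norm_num
  have hfin : (∑' n : ℕ, ∫⁻ θ in Ioc (0:ℝ) (π/2), ‖W n * (r^2 * sin θ^2)^n‖₊) ≠ ⊤ := by
    apply ne_top_of_le_ne_top _ (ENNReal.tsum_le_tsum hbound)
    rw [ENNReal.tsum_mul_right]
    apply ENNReal.mul_ne_top _ ENNReal.ofReal_ne_top
    have : ∀ n : ℕ, ENNReal.ofReal ((r^2)^n) = (ENNReal.ofReal (r^2))^n := by
      intro n; rw [ENNReal.ofReal_pow (by positivity)]
    rw [tsum_congr this, ENNReal.tsum_geometric]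
    simp only [ne_eq, ENNReal.inv_eq_top]
    rw [tsub_eq_zero_iff_le]
    intro hcon
    have : ENNReal.ofReal (r^2) < 1 := by
      rw [← ENNReal.ofReal_one]
      exact ENNReal.ofReal_lt_ofReal_iff_of_nonneg (by positivity) |>.mpr hr2
    exact absurd hcon (not_le.mpr this)
  rw [MeasureTheory.integral_tsum hmeas hfin]
  have hterm : ∀ n : ℕ, (∫ θ in Ioc (0:ℝ) (π/2), W n * (r^2 * sin θ^2)^n)
      = π/2 * (a n * (r^2)^n) := by
    intro n
    rw [← intervalIntegral.integral_of_le hpi]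
    have : ∀ θ : ℝ, W n * (r^2 * sin θ^2)^n = (W n * (r^2)^n) * sin θ^(2*n) := by
      intro θ; rw [mul_pow, pow_mul]; ring
    rw [intervalIntegral.integral_congr (fun θ _ => this θ),
      intervalIntegral.integral_const_mul, integral_sin_pow_even' n, a_def]
    ring
  rw [tsum_congr hterm, tsum_mul_left]


/-- `S x = (2/π) K (√x)`. -/
noncomputable def S (x : ℝ) : ℝ := ∑' n, a n * x^n
/-- derivative of `S`. -/
noncomputable def D (x : ℝ) : ℝ := ∑' n, a n * ((n:ℝ) * x^(n-1))

lemma S_ge_one {x : ℝ} (h0 : 0 ≤ x) (h1 : x < 1) : 1 ≤ S x := by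
  have habs : |x| < 1 := by rwa [abs_of_nonneg h0]
  have hle := Summable.le_tsum (summable_coef abs_a_le habs) 0
    (fun n _ => mul_nonneg (a_pos n).le (pow_nonneg h0 n))
  simpa [a_zero, S] using hle

lemma S_pos {x : ℝ} (h0 : 0 ≤ x) (h1 : x < 1) : 0 < S x :=
  lt_of_lt_of_le one_pos (S_ge_one h0 h1)

lemma hasDerivAt_S {x : ℝ} (hx : |x| < 1) : HasDerivAt S (D x) x :=
  hasDerivAt_psum abs_a_le hx

lemma S_cont {x : ℝ} (hx : |x| < 1) : ContinuousAt S x :=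
  (hasDerivAt_S hx).continuousAt

lemma key_ineq {x : ℝ} (h0 : 0 ≤ x) (h1 : x < 1) : 4*(1-x)*D x ≤ S x := by
  have habs : |x| < 1 := by rwa [abs_of_nonneg h0]
  have s1 := summable_coef abs_a_le habs
  have s2 := summable_n1_coef abs_a_le habs
  have s3 := summable_n_coef abs_a_le habs
  have e : S x - 4*(1-x)*D x
      = ∑' (n:ℕ), (a n * x^n - 4*(((n:ℝ)+1) * a (n+1) * x^n) + 4*((n:ℝ) * a n * x^n)) := by
    have e1 : S x - 4*(1-x)*D x
        = S x - 4*(∑' (n:ℕ), ((n:ℝ)+1) * a (n+1) * x^n) + 4*(∑' (n:ℕ), (n:ℝ) * a n * x^n) := by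
      rw [← deriv_psum_shift abs_a_le habs, ← x_mul_deriv abs_a_le habs]
      unfold S D; ring
    rw [e1, Summable.tsum_add (s1.sub (s2.mul_left 4)) (s3.mul_left 4),
      Summable.tsum_sub s1 (s2.mul_left 4), tsum_mul_left, tsum_mul_left]
    rfl
  have hterm : ∀ n : ℕ,
      0 ≤ a n * x^n - 4*(((n:ℝ)+1) * a (n+1) * x^n) + 4*((n:ℝ) * a n * x^n) := by
    intro n
    have hcoef : 4*((n:ℝ)+1)*a (n+1) ≤ (1+4*(n:ℝ))*a n := by
      have ha := a_succ n
      have hp := a_pos n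
      have hp1 := a_pos (n+1)
      have hn : (0:ℝ) ≤ n := Nat.cast_nonneg n
      nlinarith [ha, hp, hp1, hn]
    have hxn : (0:ℝ) ≤ x^n := pow_nonneg h0 n
    nlinarith [mul_le_mul_of_nonneg_right hcoef hxn]
  nlinarith [e, (tsum_nonneg hterm : (0:ℝ) ≤ ∑' (n:ℕ), (a n * x^n - 4*(((n:ℝ)+1) * a (n+1) * x^n) + 4*((n:ℝ) * a n * x^n)))]

/-- the auxiliary function `(1-x) S(x)^4`. -/
noncomputable def g (x : ℝ) : ℝ := (1-x) * (S x)^4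

lemma hasDerivAt_g {x : ℝ} (hx : |x| < 1) :
    HasDerivAt g (-(S x)^4 + (1-x)*(4*(S x)^3 * D x)) x := by
  have h1 : HasDerivAt (fun z : ℝ => 1 - z) (-1) x := by
    simpa using (hasDerivAt_id x).const_sub 1
  have h2 : HasDerivAt (fun z => (S z)^4) (4*(S x)^3 * D x) x := by
    simpa using (hasDerivAt_S hx).fun_pow 4
  have := h1.fun_mul h2
  refine this.congr_deriv ?_
  ring

lemma g_anti : AntitoneOn g (Ico (0:ℝ) 1) := by
  have habs : ∀ x : ℝ, x ∈ Ico (0:ℝ) 1 → |x| < 1 := by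
    intro x hx; rw [abs_of_nonneg hx.1]; exact hx.2
  apply antitoneOn_of_deriv_nonpos (convex_Ico 0 1)
  · exact fun x hx => (hasDerivAt_g (habs x hx)).continuousAt.continuousWithinAt
  · intro x hx
    rw [interior_Ico] at hx
    exact (hasDerivAt_g (habs x (Ioo_subset_Ico_self hx))).differentiableAt.differentiableWithinAt
  · intro x hx
    rw [interior_Ico] at hx
    have hx' := Ioo_subset_Ico_self hx
    rw [(hasDerivAt_g (habs x hx')).deriv]
    have hk := key_ineq hx'.1 hx'.2
    have hS := S_pos hx'.1 hx'.2
    have h3 : (0:ℝ) ≤ (S x)^3 := by positivity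
    have : (S x)^3 * (4*(1-x)*D x) ≤ (S x)^3 * S x := mul_le_mul_of_nonneg_left hk h3
    nlinarith [this]

lemma quarter_root {x : ℝ} (h0 : 0 ≤ x) (h1 : x < 1) :
    (g x) ^ ((1:ℝ)/4) = (1-x)^((1:ℝ)/4) * S x := by
  have hS := S_pos h0 h1
  unfold g
  rw [Real.mul_rpow (by linarith) (by positivity)]
  congr 1
  rw [← Real.rpow_natCast (S x) 4, ← Real.rpow_mul hS.le]
  norm_num

section Main
variable {c : ℝ} (hc : 1/2 ≤ c)

lemma sq_mem {r : ℝ} (h0 : 0 ≤ r) (h1 : r < 1) : 0 ≤ r^2 ∧ r^2 < 1 :=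
  ⟨by positivity, by nlinarith⟩

lemma f_eq {r : ℝ} (h0 : 0 ≤ r) (h1 : r < 1) :
    Real.sqrt (1-r^2) ^ c * K r = π/2 * ((1-r^2) ^ (c/2) * S (r^2)) := by
  obtain ⟨hx0, hx1⟩ := sq_mem h0 h1
  have h2 : (0:ℝ) < 1 - r^2 := by linarith
  rw [K_series h0 h1, Real.sqrt_eq_rpow, ← Real.rpow_mul h2.le]
  have h3 : 1/2 * c = c/2 := by ring
  rw [h3]
  unfold S
  ring

include hc in
lemma core_anti {x1 x2 : ℝ} (h0 : 0 ≤ x1) (h12 : x1 ≤ x2) (h2 : x2 < 1) :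
    (1-x2) ^ (c/2) * S x2 ≤ (1-x1) ^ (c/2) * S x1 := by
  have hx1 : x1 < 1 := lt_of_le_of_lt h12 h2
  have h1p : (0:ℝ) < 1 - x1 := by linarith
  have h2p : (0:ℝ) < 1 - x2 := by linarith
  have hsplit : ∀ y : ℝ, 0 < 1 - y →
      (1-y) ^ (c/2) = (1-y) ^ ((1:ℝ)/4) * (1-y) ^ ((2*c-1)/4) := by
    intro y hy
    rw [← Real.rpow_add hy]
    congr 1
    ring
  rw [hsplit x1 h1p, hsplit x2 h2p]
  have hA : (1-x2) ^ ((1:ℝ)/4) * S x2 ≤ (1-x1) ^ ((1:ℝ)/4) * S x1 := by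
    rw [← quarter_root (le_trans h0 h12) h2, ← quarter_root h0 hx1]
    apply Real.rpow_le_rpow _ (g_anti ⟨h0, hx1⟩ ⟨le_trans h0 h12, h2⟩ h12) (by norm_num)
    have hS := S_pos (le_trans h0 h12) h2
    unfold g
    positivity
  have hB : (1-x2) ^ ((2*c-1)/4) ≤ (1-x1) ^ ((2*c-1)/4) :=
    Real.rpow_le_rpow h2p.le (by linarith) (by linarith)
  calc (1-x2) ^ ((1:ℝ)/4) * (1-x2) ^ ((2*c-1)/4) * S x2
      = ((1-x2) ^ ((1:ℝ)/4) * S x2) * (1-x2) ^ ((2*c-1)/4) := by ring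
    _ ≤ ((1-x1) ^ ((1:ℝ)/4) * S x1) * (1-x1) ^ ((2*c-1)/4) := by
        apply mul_le_mul hA hB (Real.rpow_nonneg h2p.le _)
        have hS := S_pos h0 hx1
        positivity
    _ = (1-x1) ^ ((1:ℝ)/4) * (1-x1) ^ ((2*c-1)/4) * S x1 := by ring

include hc in
lemma f_anti : AntitoneOn (fun r : ℝ => Real.sqrt (1 - r^2) ^ c * K r) (Ico (0:ℝ) 1) := by
  intro r1 h1 r2 h2 h12
  simp only
  rw [f_eq h1.1 h1.2, f_eq h2.1 h2.2]
  apply mul_le_mul_of_nonneg_left _ (by positivity)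
  exact core_anti hc (by positivity) (by nlinarith [h1.1, h12]) (sq_mem h2.1 h2.2).2

lemma f_pos {r : ℝ} (h0 : 0 ≤ r) (h1 : r < 1) :
    0 < Real.sqrt (1 - r^2) ^ c * K r := by
  rw [f_eq h0 h1]
  obtain ⟨hx0, hx1⟩ := sq_mem h0 h1
  have hS := S_pos hx0 hx1
  have h2 : (0:ℝ) < 1 - r^2 := by linarith
  have := Real.rpow_pos_of_pos h2 (c/2)
  have hpi := Real.pi_pos
  apply mul_pos (by linarith) (mul_pos this hS)

lemma f_zero : Real.sqrt (1 - (0:ℝ)^2) ^ c * K 0 = π/2 := by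
  rw [f_eq (le_refl (0:ℝ)) one_pos]
  have hS0 : S ((0:ℝ)^2) = 1 := by
    have : ((0:ℝ)^2) = 0 := by norm_num
    rw [this]
    unfold S
    rw [psum_apply_zero a, a_zero]
  rw [hS0]
  norm_num

lemma S_le_log {x : ℝ} (h0 : 0 < x) (h1 : x < 1) : S x ≤ -Real.log (1-x) / x := by
  have habs : |x| < 1 := by rw [abs_of_nonneg h0.le]; exact h1
  have hlog : HasSum (fun n : ℕ => x^n / (n+1)) (-Real.log (1-x) / x) := by
    have h := (hasSum_pow_div_log_of_abs_lt_one habs).div_const x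
    have heq : (fun n : ℕ => x^(n+1) / (n+1) / x) = fun n : ℕ => x^n / (n+1) := by
      funext n
      rw [pow_succ]
      field_simp
    rwa [heq] at h
  have hle := Summable.tsum_le_tsum (f := fun n => a n * x^n) (g := fun n : ℕ => x^n / (n+1))
    (fun n => ?_) (summable_coef abs_a_le habs) hlog.summable
  · rw [hlog.tsum_eq] at hle
    exact hle
  · have := a_le_inv n
    have hxn : (0:ℝ) ≤ x^n := pow_nonneg h0.le n
    calc a n * x^n ≤ (1/((n:ℝ)+1)) * x^n := mul_le_mul_of_nonneg_right this hxn
      _ = x^n / ((n:ℝ)+1) := by ring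

lemma f_le_bound {r : ℝ} (h0 : 0 < r) (h1 : r < 1) :
    Real.sqrt (1 - r^2) ^ c * K r
      ≤ π/2 * ((1-r^2) ^ (c/2) * (-Real.log (1-r^2) / r^2)) := by
  rw [f_eq h0.le h1]
  have hx0 : (0:ℝ) < r^2 := by positivity
  have hx1 : r^2 < 1 := (sq_mem h0.le h1).2
  have hS := S_le_log hx0 hx1
  have hrp : (0:ℝ) ≤ (1-r^2) ^ (c/2) := Real.rpow_nonneg (by linarith) _
  have hpi : (0:ℝ) ≤ π/2 := by positivity
  exact mul_le_mul_of_nonneg_left (mul_le_mul_of_nonneg_left hS hrp) hpi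

include hc in
lemma tendsto_bound :
    Tendsto (fun r : ℝ => π/2 * ((1-r^2) ^ (c/2) * (-Real.log (1-r^2) / r^2)))
      (𝓝[<] (1:ℝ)) (𝓝 0) := by
  have hc0 : 0 < c/2 := by linarith
  have h1 : Tendsto (fun r:ℝ => 1 - r^2) (𝓝[<] (1:ℝ)) (𝓝[>] (0:ℝ)) := by
    apply tendsto_nhdsWithin_of_tendsto_nhds_of_eventually_within
    · have h := ((continuous_const (y := (1:ℝ))).sub (continuous_pow 2)).tendsto (1:ℝ)
      have h' := h.mono_left (nhdsWithin_le_nhds (s := Iio (1:ℝ)))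
      simpa using (show Tendsto (fun r:ℝ => 1 - r^2) (𝓝[<] (1:ℝ)) (𝓝 ((1:ℝ) - 1^2)) from h')
    · filter_upwards [Ioo_mem_nhdsLT (by norm_num : (0:ℝ) < 1)] with r hr
      simp only [mem_Ioi]
      nlinarith [hr.1, hr.2]
  have h2 := tendsto_log_mul_rpow_nhdsGT_zero hc0
  have h3 : Tendsto (fun r:ℝ => Real.log (1-r^2) * (1-r^2) ^ (c/2))
      (𝓝[<] (1:ℝ)) (𝓝 0) := h2.comp h1
  have h4 : Tendsto (fun r:ℝ => (r^2)⁻¹) (𝓝[<] (1:ℝ)) (𝓝 1) := by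
    have h := ((continuous_pow 2).tendsto (1:ℝ)).inv₀ (by norm_num)
    have h' := h.mono_left (nhdsWithin_le_nhds (s := Iio (1:ℝ)))
    simpa using h'
  have h5 := (h3.neg.mul h4).const_mul (π/2)
  simp only [neg_zero, zero_mul, mul_zero, mul_one] at h5
  refine h5.congr (fun r => ?_)
  ring

end Main
end Stmt10

open Stmt10 in
theorem stmt_10 (c : ℝ) (hc : 1/2 ≤ c) :
    AntitoneOn (fun r : ℝ => Real.sqrt (1 - r^2) ^ c * K r) (Set.Ico (0:ℝ) 1) ∧
    (fun r : ℝ => Real.sqrt (1 - r^2) ^ c * K r) '' Set.Ico (0:ℝ) 1 = Set.Ioc (0:ℝ) (π/2) := by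
  have hc0 : 0 < c/2 := by linarith
  refine ⟨f_anti hc, Subset.antisymm ?_ ?_⟩
  · rintro y ⟨r, hr, rfl⟩
    refine ⟨f_pos hr.1 hr.2, ?_⟩
    have h := f_anti hc (c := c) (left_mem_Ico.mpr one_pos) hr hr.1
    simp only at h
    calc Real.sqrt (1 - r^2) ^ c * K r ≤ Real.sqrt (1 - (0:ℝ)^2) ^ c * K 0 := h
      _ = π/2 := f_zero
  · rintro y ⟨hy0, hy2⟩
    rcases eq_or_lt_of_le hy2 with heq | hlt
    · refine ⟨0, left_mem_Ico.mpr one_pos, ?_⟩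
      show Real.sqrt (1 - (0:ℝ)^2) ^ c * K 0 = y
      rw [f_zero (c := c), heq]
    · -- find r₁ with small value
      have ht := tendsto_bound hc
      have hev1 : ∀ᶠ r in 𝓝[<] (1:ℝ),
          π/2 * ((1-r^2) ^ (c/2) * (-Real.log (1-r^2) / r^2)) < y :=
        ht.eventually (eventually_lt_nhds hy0)
      have hev2 : ∀ᶠ r in 𝓝[<] (1:ℝ), r ∈ Ioo (0:ℝ) 1 :=
        eventually_mem_set.2 (Ioo_mem_nhdsLT (by norm_num : (0:ℝ) < 1))
      obtain ⟨r₁, hby, hr₁mem⟩ := (hev1.and hev2).exists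
      have hr₁0 : (0:ℝ) < r₁ := hr₁mem.1
      have hr₁1 : r₁ < 1 := hr₁mem.2
      have hfr₁ : Real.sqrt (1 - r₁^2) ^ c * K r₁ < y :=
        lt_of_le_of_lt (f_le_bound hr₁0 hr₁1) hby
      -- continuity on Icc 0 r₁
      have hconth : ContinuousOn (fun r : ℝ => π/2 * ((1-r^2) ^ (c/2) * S (r^2)))
          (Icc 0 r₁) := by
        intro t ht'
        apply ContinuousAt.continuousWithinAt
        have hrpow : ContinuousAt (fun r : ℝ => (1-r^2) ^ (c/2)) t :=
          (Real.continuousAt_rpow_const _ _ (Or.inr hc0.le)).comp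
            ((continuous_const.sub (continuous_pow 2)).continuousAt)
        have ht2 : |t^2| < 1 := by
          rw [abs_of_nonneg (by positivity)]
          nlinarith [ht'.1, ht'.2, hr₁1]
        have hSc : ContinuousAt (fun r : ℝ => S (r^2)) t :=
          ContinuousAt.comp (x := t) (g := S) (f := fun r : ℝ => r^2) (S_cont ht2)
            ((continuous_pow 2).continuousAt)
        exact continuousAt_const.mul (hrpow.mul hSc)
      have hcont : ContinuousOn (fun r : ℝ => Real.sqrt (1 - r^2) ^ c * K r)
          (Icc 0 r₁) :=
        hconth.congr (fun t ht' => f_eq ht'.1 (lt_of_le_of_lt ht'.2 hr₁1))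
      have hy_mem : y ∈ Icc (Real.sqrt (1 - r₁^2) ^ c * K r₁)
          (Real.sqrt (1 - (0:ℝ)^2) ^ c * K 0) := by
        constructor
        · exact hfr₁.le
        · rw [f_zero (c := c)]; exact hy2
      obtain ⟨r, hrIcc, hfr⟩ := intermediate_value_Icc' hr₁0.le hcont hy_mem
      exact ⟨r, ⟨hrIcc.1, lt_of_le_of_lt hrIcc.2 hr₁1⟩, hfr⟩
end

section
/- The function g satisfies g(r) → 0 as r → 0⁺. -/
open Real Set Filter

/-- The function `g` from Lemma 2.2. -/
noncomputable def g (r : ℝ) : ℝ :=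
  K r * K' r * (E r * E' r + r^2 * K r * K' r - K r * E' r) / (4 * E' r * K r - π)^2

namespace Stmt13Aux

lemma pos_aux {s : ℝ} (hs : s^2 < 1) (θ : ℝ) : 0 < 1 - s^2 * Real.sin θ ^ 2 := by
  nlinarith [Real.sin_sq_le_one θ, sq_nonneg s, sq_nonneg (Real.sin θ)]

lemma contE (s : ℝ) : Continuous (fun θ : ℝ => Real.sqrt (1 - s^2 * Real.sin θ ^ 2)) :=
  Real.continuous_sqrt.comp (by continuity)

lemma contK {s : ℝ} (hs : s^2 < 1) :
    Continuous (fun θ : ℝ => 1 / Real.sqrt (1 - s^2 * Real.sin θ ^ 2)) :=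
  Continuous.div continuous_const (contE s)
    (fun θ => (Real.sqrt_pos.2 (pos_aux hs θ)).ne')

lemma K_ge {s : ℝ} (hs : s^2 < 1) : π/2 ≤ K s := by
  have h := intervalIntegral.integral_mono_on (a := 0) (b := π/2) (μ := MeasureTheory.volume)
    (f := fun _ : ℝ => (1:ℝ)) (g := fun θ => 1 / Real.sqrt (1 - s^2 * Real.sin θ ^ 2))
    (by positivity) intervalIntegrable_const ((contK hs).intervalIntegrable _ _) ?_
  · simpa [K] using h
  · intro x hx
    have h1 : 1 - s^2 * Real.sin x ^ 2 ≤ 1 := by nlinarith [sq_nonneg (s * Real.sin x)]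
    have h2 : Real.sqrt (1 - s^2 * Real.sin x ^ 2) ≤ 1 := Real.sqrt_le_one.2 h1
    have h3 : 0 < Real.sqrt (1 - s^2 * Real.sin x ^ 2) := Real.sqrt_pos.2 (pos_aux hs x)
    show (1:ℝ) ≤ 1 / Real.sqrt (1 - s^2 * Real.sin x ^ 2)
    rw [le_div_iff₀ h3]; linarith

lemma sqrt_ge_pi4 {s : ℝ} (hs : s^2 ≤ 1/4) (x : ℝ) :
    π/4 ≤ Real.sqrt (1 - s^2 * Real.sin x ^ 2) := by
  have hs1 : s^2 < 1 := lt_of_le_of_lt hs (by norm_num)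
  rw [Real.le_sqrt (by positivity) (pos_aux hs1 x).le]
  nlinarith [Real.pi_lt_d2, Real.pi_pos, Real.sin_sq_le_one x, sq_nonneg s,
    sq_nonneg (Real.sin x)]

lemma K_le_two {r : ℝ} (hr2 : r^2 ≤ 1/4) : K r ≤ 2 := by
  have h := intervalIntegral.norm_integral_le_of_norm_le_const (a := 0) (b := π/2) (C := 4/π)
    (f := fun θ => 1 / Real.sqrt (1 - r^2 * Real.sin θ ^ 2)) ?_
  · have hpi : |π/2 - 0| = π/2 := by
      rw [sub_zero, abs_of_nonneg (by positivity)]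
    rw [hpi] at h
    have : 4/π * (π/2) = 2 := by field_simp; ring
    calc K r ≤ |K r| := le_abs_self _
      _ ≤ 4/π * (π/2) := h
      _ = 2 := this
  · intro x hx
    rw [Real.norm_eq_abs, abs_of_nonneg (by positivity)]
    have h4 := sqrt_ge_pi4 hr2 x
    have h5 : 1 / Real.sqrt (1 - r^2 * Real.sin x ^ 2) ≤ 1 / (π/4) :=
      one_div_le_one_div_of_le (by positivity) h4
    rwa [one_div_div] at h5

lemma E_le_pi2 (s : ℝ) : E s ≤ π/2 := by
  have h := intervalIntegral.norm_integral_le_of_norm_le_const (a := 0) (b := π/2) (C := 1)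
    (f := fun θ => Real.sqrt (1 - s^2 * Real.sin θ ^ 2)) ?_
  · have hpi : |π/2 - 0| = π/2 := by
      rw [sub_zero, abs_of_nonneg (by positivity)]
    rw [hpi, one_mul] at h
    calc E s ≤ |E s| := le_abs_self _
      _ ≤ π/2 := h
  · intro x hx
    rw [Real.norm_eq_abs, abs_of_nonneg (Real.sqrt_nonneg _)]
    exact Real.sqrt_le_one.2 (by nlinarith [sq_nonneg (s * Real.sin x)])

lemma E'_ge_one {r : ℝ} (hr : 0 < r) (hr1 : r < 1) : 1 ≤ E' r := by
  have h0 : (0:ℝ) ≤ 1 - r^2 := by nlinarith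
  have hsq : (Real.sqrt (1 - r^2))^2 = 1 - r^2 := Real.sq_sqrt h0
  unfold E' E
  rw [show (∫ θ in (0:ℝ)..(π/2),
        Real.sqrt (1 - (Real.sqrt (1 - r^2))^2 * Real.sin θ ^ 2))
      = ∫ θ in (0:ℝ)..(π/2), Real.sqrt (1 - (1 - r^2) * Real.sin θ ^ 2) by
    simp only [hsq]]
  have hcont : Continuous (fun θ : ℝ => Real.sqrt (1 - (1 - r^2) * Real.sin θ ^ 2)) :=
    Real.continuous_sqrt.comp (by continuity)
  have h := intervalIntegral.integral_mono_on (a := 0) (b := π/2) (μ := MeasureTheory.volume)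
    (f := fun θ : ℝ => Real.cos θ)
    (g := fun θ => Real.sqrt (1 - (1 - r^2) * Real.sin θ ^ 2))
    (by positivity) (Real.continuous_cos.intervalIntegrable _ _)
    (hcont.intervalIntegrable _ _) ?_
  · have hc : (∫ θ in (0:ℝ)..(π/2), Real.cos θ) = 1 := by
      simp [integral_cos]
    linarith [hc ▸ h]
  · intro x hx
    have hcos : 0 ≤ Real.cos x := Real.cos_nonneg_of_mem_Icc
      ⟨by linarith [hx.1, Real.pi_pos], hx.2⟩
    show Real.cos x ≤ Real.sqrt (1 - (1 - r^2) * Real.sin x ^ 2)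
    rw [show Real.cos x = Real.sqrt (Real.cos x ^ 2) by
      rw [Real.sqrt_sq hcos]]
    apply Real.sqrt_le_sqrt
    nlinarith [Real.sin_sq_add_cos_sq x, sq_nonneg (r * Real.sin x)]

lemma EK_diff {r : ℝ} (hr2 : r^2 ≤ 1/4) : |E r - K r| ≤ 2 * r^2 := by
  have hs1 : r^2 < 1 := lt_of_le_of_lt hr2 (by norm_num)
  have hEK : E r - K r = ∫ θ in (0:ℝ)..(π/2),
      (Real.sqrt (1 - r^2 * Real.sin θ ^ 2) - 1 / Real.sqrt (1 - r^2 * Real.sin θ ^ 2)) := by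
    rw [intervalIntegral.integral_sub ((contE r).intervalIntegrable _ _)
      ((contK hs1).intervalIntegrable _ _)]
    rfl
  rw [hEK]
  have h := intervalIntegral.norm_integral_le_of_norm_le_const (a := 0) (b := π/2)
    (C := 4/π * r^2)
    (f := fun θ => Real.sqrt (1 - r^2 * Real.sin θ ^ 2)
      - 1 / Real.sqrt (1 - r^2 * Real.sin θ ^ 2)) ?_
  · have hpi : |π/2 - 0| = π/2 := by
      rw [sub_zero, abs_of_nonneg (by positivity)]
    rw [hpi] at h
    have heq : 4/π * r^2 * (π/2) = 2 * r^2 := by field_simp; ring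
    calc |∫ θ in (0:ℝ)..(π/2),
        (Real.sqrt (1 - r^2 * Real.sin θ ^ 2) - 1 / Real.sqrt (1 - r^2 * Real.sin θ ^ 2))|
        ≤ 4/π * r^2 * (π/2) := h
      _ = 2 * r^2 := heq
  · intro x hx
    show ‖Real.sqrt (1 - r^2 * Real.sin x ^ 2)
      - 1 / Real.sqrt (1 - r^2 * Real.sin x ^ 2)‖ ≤ 4/π * r^2
    set u := 1 - r^2 * Real.sin x ^ 2 with hu_def
    have hu : 0 < u := pos_aux hs1 x
    have hu1 : u ≤ 1 := by simp only [hu_def]; nlinarith [sq_nonneg (r * Real.sin x)]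
    have h4 : π/4 ≤ Real.sqrt u := sqrt_ge_pi4 hr2 x
    have hsu : 0 < Real.sqrt u := Real.sqrt_pos.2 hu
    have hmul : Real.sqrt u * Real.sqrt u = u := Real.mul_self_sqrt hu.le
    have hd : Real.sqrt u - 1 / Real.sqrt u = (u - 1) / Real.sqrt u := by
      rw [eq_div_iff hsu.ne', sub_mul, hmul, one_div, inv_mul_cancel₀ hsu.ne']
    rw [Real.norm_eq_abs, hd, abs_div, abs_of_nonneg (Real.sqrt_nonneg _),
      abs_of_nonpos (by linarith : u - 1 ≤ 0)]
    rw [div_le_iff₀ hsu]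
    have h1u : 1 - u ≤ r^2 := by
      simp only [hu_def]; nlinarith [Real.sin_sq_le_one x, sq_nonneg r]
    have hkey : r^2 ≤ 4/π * r^2 * Real.sqrt u := by
      have h1 : (1:ℝ) ≤ 4/π * Real.sqrt u := by
        rw [div_mul_eq_mul_div, le_div_iff₀ Real.pi_pos]
        linarith
      nlinarith [sq_nonneg r]
    linarith

set_option maxHeartbeats 1000000 in
lemma K'_le {r : ℝ} (hr : 0 < r) (hr2 : r ≤ 1/2) : K' r ≤ 4 / Real.sqrt r := by
  set t := Real.sqrt r with ht_def
  have ht : 0 < t := Real.sqrt_pos.2 hr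
  have ht2 : t^2 = r := Real.sq_sqrt hr.le
  have htle : t ≤ 1 := by
    rw [ht_def]; exact Real.sqrt_le_one.2 (by linarith)
  have htpi : t ≤ π/2 := by nlinarith [Real.pi_gt_three]
  have h0 : (0:ℝ) ≤ 1 - r^2 := by nlinarith
  have hsq : (Real.sqrt (1 - r^2))^2 = 1 - r^2 := Real.sq_sqrt h0
  have hpos : ∀ θ : ℝ, 0 < 1 - (1 - r^2) * Real.sin θ ^ 2 := by
    intro θ
    nlinarith [Real.sin_sq_le_one θ, sq_nonneg (Real.sin θ)]
  set f : ℝ → ℝ := fun θ => 1 / Real.sqrt (1 - (1 - r^2) * Real.sin θ ^ 2) with hf_def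
  have hcont : Continuous f := by
    apply Continuous.div continuous_const (Real.continuous_sqrt.comp (by continuity))
    exact fun θ => (Real.sqrt_pos.2 (hpos θ)).ne'
  have hKK : K' r = ∫ θ in (0:ℝ)..(π/2), f θ := by
    unfold K' K
    simp only [hsq, hf_def]
  rw [hKK]
  have hsplit : (∫ θ in (0:ℝ)..(π/2 - t), f θ) + (∫ θ in (π/2 - t)..(π/2), f θ)
      = ∫ θ in (0:ℝ)..(π/2), f θ :=
    intervalIntegral.integral_add_adjacent_intervals
      (hcont.intervalIntegrable _ _) (hcont.intervalIntegrable _ _)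
  rw [← hsplit]
  -- bound on first piece
  have hb1 : (∫ θ in (0:ℝ)..(π/2 - t), f θ) ≤ π/(2*t) * (π/2) := by
    have h := intervalIntegral.norm_integral_le_of_norm_le_const (a := 0) (b := π/2 - t)
      (C := π/(2*t)) (f := f) ?_
    · have habs : |π/2 - t - 0| ≤ π/2 := by
        rw [sub_zero, abs_of_nonneg (by linarith)]
        linarith
      calc (∫ θ in (0:ℝ)..(π/2 - t), f θ) ≤ |∫ θ in (0:ℝ)..(π/2 - t), f θ| := le_abs_self _
        _ ≤ π/(2*t) * |π/2 - t - 0| := h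
        _ ≤ π/(2*t) * (π/2) := by
            apply mul_le_mul_of_nonneg_left habs (by positivity)
    · intro x hx
      rw [Set.uIoc_of_le (by linarith : (0:ℝ) ≤ π/2 - t)] at hx
      have hx1 : 0 < x := hx.1
      have hx2 : x ≤ π/2 - t := hx.2
      have hcos1 : Real.cos (π/2 - t) ≤ Real.cos x :=
        Real.cos_le_cos_of_nonneg_of_le_pi hx1.le (by linarith [Real.pi_pos]) hx2
      rw [Real.cos_pi_div_two_sub] at hcos1
      have hsin : 2/π * t ≤ Real.sin t := Real.mul_le_sin ht.le htpi
      have hcosx : 2/π * t ≤ Real.cos x := le_trans hsin hcos1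
      have hcospos : 0 < Real.cos x := lt_of_lt_of_le (by positivity) hcosx
      have hden : Real.cos x ≤ Real.sqrt (1 - (1 - r^2) * Real.sin x ^ 2) := by
        rw [show Real.cos x = Real.sqrt (Real.cos x ^ 2) by rw [Real.sqrt_sq hcospos.le]]
        apply Real.sqrt_le_sqrt
        nlinarith [Real.sin_sq_add_cos_sq x, sq_nonneg (r * Real.sin x)]
      have hden2 : 2/π * t ≤ Real.sqrt (1 - (1 - r^2) * Real.sin x ^ 2) :=
        le_trans hcosx hden
      rw [Real.norm_eq_abs, hf_def]
      rw [abs_of_nonneg (by positivity)]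
      have h5 : 1 / Real.sqrt (1 - (1 - r^2) * Real.sin x ^ 2) ≤ 1 / (2/π * t) :=
        one_div_le_one_div_of_le (by positivity) hden2
      have h6 : 1 / (2/π * t) = π/(2*t) := by
        rw [div_mul_eq_mul_div, one_div_div]
      linarith [h6 ▸ h5]
  -- bound on second piece
  have hb2 : (∫ θ in (π/2 - t)..(π/2), f θ) ≤ 4/(3*r) * t := by
    have h := intervalIntegral.norm_integral_le_of_norm_le_const (a := π/2 - t) (b := π/2)
      (C := 4/(3*r)) (f := f) ?_
    · have habs : |π/2 - (π/2 - t)| = t := by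
        rw [abs_of_nonneg (by linarith)]; ring
      calc (∫ θ in (π/2 - t)..(π/2), f θ) ≤ |∫ θ in (π/2 - t)..(π/2), f θ| := le_abs_self _
        _ ≤ 4/(3*r) * |π/2 - (π/2 - t)| := h
        _ = 4/(3*r) * t := by rw [habs]
    · intro x hx
      rw [Set.uIoc_of_le (by linarith : π/2 - t ≤ π/2)] at hx
      have hx1 : π/2 - t < x := hx.1
      have hx2 : x ≤ π/2 := hx.2
      have hcos1 : Real.cos t ≤ Real.cos (π/2 - x) :=
        Real.cos_le_cos_of_nonneg_of_le_pi (by linarith) (by linarith [Real.pi_pos]) (by linarith)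
      rw [Real.cos_pi_div_two_sub] at hcos1
      have hcost : 1 - t^2/2 ≤ Real.cos t := Real.one_sub_sq_div_two_le_cos
      have hsinx : 3/4 ≤ Real.sin x := by
        have : 1 - t^2/2 ≤ Real.sin x := le_trans hcost hcos1
        rw [ht2] at this
        linarith
      have hden : 3/4 * r ≤ Real.sqrt (1 - (1 - r^2) * Real.sin x ^ 2) := by
        rw [Real.le_sqrt (by positivity) (hpos x).le]
        nlinarith [Real.sin_sq_le_one x, hsinx]
      rw [Real.norm_eq_abs, hf_def]
      rw [abs_of_nonneg (by positivity)]
      have h5 : 1 / Real.sqrt (1 - (1 - r^2) * Real.sin x ^ 2) ≤ 1 / (3/4 * r) :=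
        one_div_le_one_div_of_le (by positivity) hden
      have h6 : 1 / (3/4 * r) = 4/(3*r) := by
        rw [show (3:ℝ)/4 * r = 3*r/4 by ring, one_div_div]
      linarith [h6 ▸ h5]
  have hfinal : π/(2*t) * (π/2) + 4/(3*r) * t ≤ 4 / t := by
    have hr' : r = t^2 := ht2.symm
    rw [hr']
    have e1 : π/(2*t) * (π/2) = π^2/(4*t) := by
      rw [div_mul_div_comm]
      ring
    have e2 : 4/(3*t^2) * t = 4/(3*t) := by
      rw [show (3:ℝ)*t^2 = 3*t*t by ring, ← div_div, div_mul_cancel₀ _ ht.ne']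
    rw [e1, e2]
    rw [div_add_div _ _ (by positivity) (by positivity), div_le_div_iff₀ (by positivity) ht]
    have hpi2 : π^2 < 10 := by nlinarith [Real.pi_lt_d2, Real.pi_pos]
    nlinarith [mul_pos ht ht, hpi2]
  linarith

set_option maxHeartbeats 1000000 in
lemma g_bound {r : ℝ} (hr : 0 < r) (hr2 : r ≤ 1/2) : |g r| ≤ 10 * r := by
  have hrsq : r^2 ≤ 1/4 := by nlinarith
  have hr1 : r < 1 := by linarith
  have hs1 : r^2 < 1 := by nlinarith
  set t := Real.sqrt r with ht_def
  have ht : 0 < t := Real.sqrt_pos.2 hr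
  have ht2 : t^2 = r := Real.sq_sqrt hr.le
  have htle : t ≤ 1 := Real.sqrt_le_one.2 (by linarith)
  set a := K r with ha_def
  set b := K' r with hb_def
  set c := E r with hc_def
  set d := E' r with hd_def
  have ha1 : π/2 ≤ a := K_ge hs1
  have ha2 : a ≤ 2 := K_le_two hrsq
  have hb1 : π/2 ≤ b := by
    rw [hb_def]
    unfold K'
    exact K_ge (by rw [Real.sq_sqrt (by nlinarith : (0:ℝ) ≤ 1 - r^2)]; nlinarith)
  have hb0 : 0 ≤ b := le_trans (by positivity) hb1
  have htb : t * b ≤ 4 := by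
    have := K'_le hr hr2
    rw [← hb_def, ← ht_def] at this
    calc t * b ≤ t * (4 / t) := by
          apply mul_le_mul_of_nonneg_left this ht.le
      _ = 4 := by field_simp
  have hd1 : 1 ≤ d := E'_ge_one hr hr1
  have hd2 : d ≤ π/2 := E_le_pi2 _
  have hcdiff : |c - a| ≤ 2 * r^2 := EK_diff hrsq
  have ha0 : 0 ≤ a := le_trans (by positivity) ha1
  -- denominator
  have hD : π^2 ≤ (4 * d * a - π)^2 := by
    have h2pi : 2 * π ≤ 4 * d * a := by nlinarith [Real.pi_pos]
    nlinarith [Real.pi_pos]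
  have hDpos : 0 < (4 * d * a - π)^2 := lt_of_lt_of_le (by positivity) hD
  -- numerator
  have hNeq : c * d + r^2 * a * b - a * d = (c - a) * d + r^2 * (a * b) := by ring
  have hab0 : (0:ℝ) ≤ r^2 * (a * b) := mul_nonneg (sq_nonneg r) (mul_nonneg ha0 hb0)
  have hinner : |c * d + r^2 * a * b - a * d| ≤ |c - a| * d + r^2 * (a * b) := by
    rw [hNeq]
    calc |(c - a) * d + r^2 * (a * b)| ≤ |(c - a) * d| + |r^2 * (a * b)| := abs_add_le _ _
      _ = |c - a| * d + r^2 * (a * b) := by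
          rw [abs_mul (c - a) d, abs_of_nonneg (show (0:ℝ) ≤ d by linarith),
            abs_of_nonneg hab0]
  have ht3r : t^3 ≤ r := by
    calc t^3 = t^2 * t := by ring
      _ ≤ t^2 * 1 := by nlinarith [sq_nonneg t]
      _ = r := by rw [mul_one, ht2]
  have hr2b : r^2 * b ≤ 4 * t^3 := by
    have h1 : r^2 * b = t^3 * (t * b) := by rw [← ht2]; ring
    rw [h1]
    nlinarith [pow_pos ht 3]
  set X := a * (r^2 * b) with hX_def
  have hX0 : 0 ≤ X := mul_nonneg ha0 (mul_nonneg (sq_nonneg r) hb0)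
  have hX : X ≤ 8 * t^3 := by
    calc X = a * (r^2 * b) := rfl
      _ ≤ 2 * (4 * t^3) := by
          apply mul_le_mul ha2 hr2b (mul_nonneg (sq_nonneg r) hb0) (by norm_num)
      _ = 8 * t^3 := by ring
  have hX2 : X^2 ≤ 64 * r^3 := by
    have h1 : X * X ≤ (8 * t^3) * (8 * t^3) := mul_self_le_mul_self hX0 hX
    calc X^2 = X * X := sq X
      _ ≤ (8 * t^3) * (8 * t^3) := h1
      _ = 64 * (t^2)^3 := by ring
      _ = 64 * r^3 := by rw [ht2]
  have hXr : π * r^2 * X ≤ 8 * π * r^3 := by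
    calc π * r^2 * X ≤ π * r^2 * (8 * t^3) :=
          mul_le_mul_of_nonneg_left hX (by positivity)
      _ ≤ π * r^2 * (8 * r) := by
          apply mul_le_mul_of_nonneg_left _ (by positivity)
          linarith
      _ = 8 * π * r^3 := by ring
  have hNbound : |a * b * (c * d + r^2 * a * b - a * d)| ≤ 90 * r := by
    rw [abs_mul, abs_mul, abs_of_nonneg ha0, abs_of_nonneg hb0]
    have h2 : |c * d + r^2 * a * b - a * d| ≤ π * r^2 + r^2 * (a * b) := by
      have h1 : |c - a| * d ≤ 2 * r^2 * (π/2) :=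
        mul_le_mul hcdiff hd2 (by linarith) (by positivity)
      calc |c * d + r^2 * a * b - a * d| ≤ |c - a| * d + r^2 * (a * b) := hinner
        _ ≤ 2 * r^2 * (π/2) + r^2 * (a * b) := by linarith
        _ = π * r^2 + r^2 * (a * b) := by ring
    have hab : a * b * (π * r^2 + r^2 * (a * b)) ≤ 90 * r := by
      have hexp : a * b * (π * r^2 + r^2 * (a * b)) * r^2
          = π * r^2 * X + X^2 := by rw [hX_def]; ring
      have hrpos : (0:ℝ) < r^2 := by positivity
      rw [← mul_le_mul_iff_of_pos_right hrpos, hexp]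
      have hfin : 8 * π * r^3 + 64 * r^3 ≤ 90 * r * r^2 := by
        nlinarith [Real.pi_lt_d2, pow_pos hr 3]
      linarith
    calc a * b * |c * d + r^2 * a * b - a * d|
        ≤ a * b * (π * r^2 + r^2 * (a * b)) :=
          mul_le_mul_of_nonneg_left h2 (mul_nonneg ha0 hb0)
      _ ≤ 90 * r := hab
  -- assemble
  have hg : g r = a * b * (c * d + r^2 * a * b - a * d) / (4 * d * a - π)^2 := rfl
  rw [hg, abs_div, abs_of_nonneg (sq_nonneg (4 * d * a - π))]
  have hstep : |a * b * (c * d + r^2 * a * b - a * d)| / (4 * d * a - π)^2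
      ≤ |a * b * (c * d + r^2 * a * b - a * d)| / π^2 := by
    apply div_le_div_of_nonneg_left (abs_nonneg _) (by positivity) hD
  calc |a * b * (c * d + r^2 * a * b - a * d)| / (4 * d * a - π)^2
      ≤ |a * b * (c * d + r^2 * a * b - a * d)| / π^2 := hstep
    _ ≤ 90 * r / π^2 := (div_le_div_iff_of_pos_right (by positivity)).2 hNbound
    _ ≤ 10 * r := by
        rw [div_le_iff₀ (by positivity : (0:ℝ) < π^2)]
        have hpi9 : (9:ℝ) ≤ π^2 := by nlinarith [Real.pi_gt_three]
        nlinarith [mul_le_mul_of_nonneg_left hpi9 (by linarith : (0:ℝ) ≤ 10 * r)]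

end Stmt13Aux

theorem stmt_13 : Filter.Tendsto g (nhdsWithin 0 (Set.Ioi (0:ℝ))) (nhds 0) := by
  apply squeeze_zero_norm' (a := fun r : ℝ => 10 * r)
  · filter_upwards [Ioo_mem_nhdsGT_of_mem (by norm_num : (0:ℝ) ∈ Ico (0:ℝ) (1/2))] with r hr
    exact Stmt13Aux.g_bound hr.1 hr.2.le
  · have : Filter.Tendsto (fun r : ℝ => 10 * r) (nhds 0) (nhds 0) := by
      simpa using (continuous_mul_left (10:ℝ)).tendsto (0:ℝ)
    exact this.mono_left nhdsWithin_le_nhds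
end

section
/- The function g satisfies g(r) → 0 as r → 1⁻. -/
open Real Set Filter

section Aux

lemma aux_pos {s : ℝ} (hs : s^2 < 1) (θ : ℝ) : 0 < 1 - s^2 * Real.sin θ ^ 2 := by
  nlinarith [Real.sin_sq_le_one θ, sq_nonneg s, sq_nonneg (Real.sin θ)]

lemma contK {s : ℝ} (hs : s^2 < 1) :
    Continuous (fun θ : ℝ => 1 / Real.sqrt (1 - s^2 * Real.sin θ ^ 2)) := by
  apply Continuous.div continuous_const
  · exact Real.continuous_sqrt.comp (by continuity)
  · exact fun θ => (Real.sqrt_pos.mpr (aux_pos hs θ)).ne'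

lemma contE (s : ℝ) :
    Continuous (fun θ : ℝ => Real.sqrt (1 - s^2 * Real.sin θ ^ 2)) :=
  Real.continuous_sqrt.comp (by continuity)

lemma K_ge_pi_div_two {s : ℝ} (hs : s^2 < 1) : π/2 ≤ K s := by
  have h : ∫ θ in (0:ℝ)..(π/2), (1:ℝ) ≤ K s := by
    apply intervalIntegral.integral_mono_on (by positivity)
      (intervalIntegrable_const) ((contK hs).intervalIntegrable _ _)
    intro θ _
    have h1 : Real.sqrt (1 - s^2 * Real.sin θ ^ 2) ≤ 1 :=
      Real.sqrt_le_one.mpr (by nlinarith [sq_nonneg s, sq_nonneg (Real.sin θ)])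
    have h2 : 0 < Real.sqrt (1 - s^2 * Real.sin θ ^ 2) := Real.sqrt_pos.mpr (aux_pos hs θ)
    rw [le_div_iff₀ h2]; linarith
  simpa using h

lemma K_le {s : ℝ} (hs : s^2 < 1) : K s ≤ (π/2) * (1 / Real.sqrt (1 - s^2)) := by
  have h : K s ≤ ∫ _ in (0:ℝ)..(π/2), 1 / Real.sqrt (1 - s^2) := by
    apply intervalIntegral.integral_mono_on (by positivity)
      ((contK hs).intervalIntegrable _ _) (intervalIntegrable_const)
    intro θ _
    apply one_div_le_one_div_of_le (Real.sqrt_pos.mpr (by linarith))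
    exact Real.sqrt_le_sqrt (by nlinarith [sq_nonneg s, Real.sin_sq_le_one θ])
  simpa [smul_eq_mul] using h

lemma E_le_pi_div_two (s : ℝ) : E s ≤ π/2 := by
  have h : E s ≤ ∫ _ in (0:ℝ)..(π/2), (1:ℝ) := by
    apply intervalIntegral.integral_mono_on (by positivity)
      ((contE s).intervalIntegrable _ _) (intervalIntegrable_const)
    intro θ _
    exact Real.sqrt_le_one.mpr (by nlinarith [sq_nonneg s, sq_nonneg (Real.sin θ)])
  simpa using h

lemma E_ge_sqrt {s : ℝ} (_hs : s^2 ≤ 1) : Real.sqrt (1 - s^2) * (π/2) ≤ E s := by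
  have h : ∫ _ in (0:ℝ)..(π/2), Real.sqrt (1 - s^2) ≤ E s := by
    apply intervalIntegral.integral_mono_on (by positivity)
      (intervalIntegrable_const) ((contE s).intervalIntegrable _ _)
    intro θ _
    exact Real.sqrt_le_sqrt (by nlinarith [sq_nonneg s, Real.sin_sq_le_one θ])
  simpa [smul_eq_mul, mul_comm] using h

lemma E_ge_one {r : ℝ} (hr : r^2 ≤ 1) : 1 ≤ E r := by
  have h : ∫ θ in (0:ℝ)..(π/2), Real.cos θ ≤ E r := by
    apply intervalIntegral.integral_mono_on (by positivity)
      (Real.continuous_cos.intervalIntegrable _ _) ((contE r).intervalIntegrable _ _)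
    intro θ hθ
    have hc : 0 ≤ Real.cos θ :=
      Real.cos_nonneg_of_mem_Icc ⟨by linarith [hθ.1, pi_pos], hθ.2⟩
    calc Real.cos θ = Real.sqrt (Real.cos θ ^ 2) := (Real.sqrt_sq hc).symm
      _ ≤ Real.sqrt (1 - r^2 * Real.sin θ ^ 2) := by
          apply Real.sqrt_le_sqrt
          nlinarith [Real.sin_sq_add_cos_sq θ, sq_nonneg (Real.sin θ)]
  simpa using h

lemma sqrt_integrand_le {r θ : ℝ} (h1 : r^2 ≤ 1) (hθ : θ ∈ Icc (0:ℝ) (π/2)) :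
    Real.sqrt (1 - r^2 * Real.sin θ ^ 2) ≤ Real.cos θ + Real.sqrt (1 - r^2) := by
  have hc : 0 ≤ Real.cos θ :=
    Real.cos_nonneg_of_mem_Icc ⟨by linarith [hθ.1, pi_pos], hθ.2⟩
  have hs : Real.sqrt (1 - r^2) ^ 2 = 1 - r^2 := Real.sq_sqrt (by linarith)
  have h2 : 1 - r^2 * Real.sin θ ^ 2 ≤ (Real.cos θ + Real.sqrt (1 - r^2))^2 := by
    nlinarith [Real.sin_sq_add_cos_sq θ, Real.sin_sq_le_one θ,
      mul_nonneg hc (Real.sqrt_nonneg (1 - r^2)),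
      mul_nonneg (by linarith : (0:ℝ) ≤ 1 - r^2)
        (by nlinarith [Real.sin_sq_le_one θ] : (0:ℝ) ≤ 1 - Real.sin θ ^ 2)]
  calc Real.sqrt (1 - r^2 * Real.sin θ ^ 2)
      ≤ Real.sqrt ((Real.cos θ + Real.sqrt (1 - r^2))^2) := Real.sqrt_le_sqrt h2
    _ = _ := Real.sqrt_sq (by positivity)

lemma E_le_one_add {r : ℝ} (h1 : r^2 ≤ 1) : E r ≤ 1 + Real.sqrt (1 - r^2) * (π/2) := by
  have h : E r ≤ ∫ θ in (0:ℝ)..(π/2), (Real.cos θ + Real.sqrt (1 - r^2)) := by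
    apply intervalIntegral.integral_mono_on (by positivity)
      ((contE r).intervalIntegrable _ _)
      ((Real.continuous_cos.add continuous_const).intervalIntegrable _ _)
    exact fun θ hθ => sqrt_integrand_le h1 hθ
  have heval : ∫ θ in (0:ℝ)..(π/2), (Real.cos θ + Real.sqrt (1 - r^2))
      = 1 + Real.sqrt (1 - r^2) * (π/2) := by
    rw [intervalIntegral.integral_add (Real.continuous_cos.intervalIntegrable _ _)
      (intervalIntegrable_const)]
    simp [integral_cos]
    ring
  linarith [h, heval.symm.le, heval.le]

lemma K_ge_log {r : ℝ} (h0 : 0 < r) (h1 : r < 1) :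
    Real.log ((Real.sqrt (1 - r^2) + π/2) / Real.sqrt (1 - r^2)) ≤ K r := by
  have hε : 0 < 1 - r^2 := by nlinarith
  set e := Real.sqrt (1 - r^2) with he
  have hepos : 0 < e := Real.sqrt_pos.mpr hε
  have hr2 : r^2 < 1 := by nlinarith
  have hmono : ∫ θ in (0:ℝ)..(π/2), (e + π/2 - θ)⁻¹ ≤ K r := by
    apply intervalIntegral.integral_mono_on (by positivity)
    · apply ContinuousOn.intervalIntegrable
      apply ContinuousOn.inv₀ (by fun_prop)
      intro x hx
      rw [uIcc_of_le (by positivity)] at hx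
      exact ne_of_gt (by linarith [hx.2, hepos])
    · exact (contK hr2).intervalIntegrable _ _
    · intro θ hθ
      have hd : Real.sqrt (1 - r^2 * Real.sin θ ^ 2) ≤ e + π/2 - θ := by
        have hcos : Real.cos θ ≤ π/2 - θ := by
          rw [← Real.sin_pi_div_two_sub]
          exact Real.sin_le (by linarith [hθ.2])
        have := sqrt_integrand_le hr2.le hθ
        linarith
      rw [one_div]
      exact inv_anti₀ (Real.sqrt_pos.mpr (aux_pos hr2 θ)) hd
  have heval : ∫ θ in (0:ℝ)..(π/2), (e + π/2 - θ)⁻¹ = Real.log ((e + π/2) / e) := by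
    have := intervalIntegral.integral_comp_sub_left (a := (0:ℝ)) (b := π/2)
      (fun x : ℝ => x⁻¹) (e + π/2)
    rw [this]
    rw [show e + π/2 - π/2 = e by ring, show e + π/2 - 0 = e + π/2 by ring]
    exact integral_inv_of_pos hepos (by positivity)
  rw [← heval]; exact hmono

end Aux

theorem stmt_14 : Filter.Tendsto g (nhdsWithin 1 (Set.Iio (1:ℝ))) (nhds 0) := by
  set l := nhdsWithin (1:ℝ) (Set.Iio (1:ℝ)) with hl
  have hmem : Ioo (1/2 : ℝ) 1 ∈ l :=
    Ioo_mem_nhdsLT_of_mem (by norm_num : (1:ℝ) ∈ Ioc (1/2 : ℝ) 1)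
  have hEvent : ∀ᶠ r in l, r ∈ Ioo (1/2 : ℝ) 1 := hmem
  -- basic facts for r ∈ Ioo (1/2) 1
  have hbasic : ∀ r ∈ Ioo (1/2 : ℝ) 1, (Real.sqrt (1 - r^2))^2 = 1 - r^2 ∧ r^2 < 1 := by
    intro r hr
    constructor
    · exact Real.sq_sqrt (by nlinarith [hr.1, hr.2])
    · nlinarith [hr.1, hr.2]
  -- sqrt(1-r^2) → 0
  have hsq0 : Tendsto (fun r : ℝ => Real.sqrt (1 - r^2)) l (nhds 0) := by
    have : Continuous (fun r : ℝ => Real.sqrt (1 - r^2)) :=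
      Real.continuous_sqrt.comp (by continuity)
    have h : Tendsto (fun r : ℝ => Real.sqrt (1 - r^2)) l (nhds (Real.sqrt (1 - 1^2))) :=
      (this.tendsto 1).mono_left nhdsWithin_le_nhds
    simpa using h
  -- K → atTop
  have hKtop : Tendsto K l atTop := by
    apply tendsto_atTop_mono' l (f₁ := fun r =>
      Real.log ((Real.sqrt (1 - r^2) + π/2) / Real.sqrt (1 - r^2)))
    · filter_upwards [hEvent] with r hr
      exact K_ge_log (by linarith [hr.1]) hr.2
    · have hsub : Tendsto (fun r : ℝ => Real.sqrt (1 - r^2)) l (nhdsWithin 0 (Ioi 0)) := by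
        rw [tendsto_nhdsWithin_iff]
        refine ⟨hsq0, ?_⟩
        filter_upwards [hEvent] with r hr
        have : (0:ℝ) < 1 - r^2 := by nlinarith [hr.1, hr.2]
        exact Real.sqrt_pos.mpr this
      have hlog : Tendsto (fun x : ℝ => Real.log ((x + π/2) / x)) (nhdsWithin 0 (Ioi 0)) atTop := by
        apply Real.tendsto_log_atTop.comp
        have h1 : Tendsto (fun x : ℝ => 1 + (π/2) * x⁻¹) (nhdsWithin 0 (Ioi 0)) atTop := by
          apply tendsto_atTop_add_const_left
          exact (tendsto_inv_nhdsGT_zero).const_mul_atTop (by positivity)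
        apply h1.congr'
        filter_upwards [self_mem_nhdsWithin] with x hx
        have hx0 : x ≠ 0 := ne_of_gt hx
        field_simp
      exact hlog.comp hsub
  have hKinv : Tendsto (fun r => (K r)⁻¹) l (nhds 0) := hKtop.inv_tendsto_atTop
  -- K' → π/2
  have hK' : Tendsto K' l (nhds (π/2)) := by
    apply tendsto_of_tendsto_of_tendsto_of_le_of_le' (g := fun _ => π/2)
      (h := fun r => (π/2) * (1/r))
    · exact tendsto_const_nhds
    · have : Tendsto (fun r : ℝ => (π/2) * (1/r)) l (nhds ((π/2) * (1/1))) := by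
        apply Tendsto.const_mul
        exact (Tendsto.div tendsto_const_nhds
          (tendsto_id.mono_right nhdsWithin_le_nhds) one_ne_zero)
      simpa using this
    · filter_upwards [hEvent] with r hr
      obtain ⟨hs, hr2⟩ := hbasic r hr
      have : (Real.sqrt (1 - r^2))^2 < 1 := by rw [hs]; nlinarith [hr.1]
      exact K_ge_pi_div_two this
    · filter_upwards [hEvent] with r hr
      obtain ⟨hs, hr2⟩ := hbasic r hr
      have h2 : (Real.sqrt (1 - r^2))^2 < 1 := by rw [hs]; nlinarith [hr.1]
      have := K_le h2
      have he : Real.sqrt (1 - (Real.sqrt (1 - r^2))^2) = r := by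
        rw [hs, show 1 - (1 - r^2) = r^2 by ring, Real.sqrt_sq (by linarith [hr.1])]
      rw [K'] at *
      calc K (Real.sqrt (1 - r^2)) ≤ (π/2) * (1 / Real.sqrt (1 - (Real.sqrt (1 - r^2))^2)) := this
        _ = (π/2) * (1/r) := by rw [he]
  -- E' → π/2
  have hE' : Tendsto E' l (nhds (π/2)) := by
    apply tendsto_of_tendsto_of_tendsto_of_le_of_le' (g := fun r => r * (π/2))
      (h := fun _ => π/2)
    · have : Tendsto (fun r : ℝ => r * (π/2)) l (nhds (1 * (π/2))) :=
        (tendsto_id.mono_right nhdsWithin_le_nhds).mul tendsto_const_nhds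
      simpa using this
    · exact tendsto_const_nhds
    · filter_upwards [hEvent] with r hr
      obtain ⟨hs, hr2⟩ := hbasic r hr
      have h2 : (Real.sqrt (1 - r^2))^2 ≤ 1 := by rw [hs]; nlinarith [hr.1]
      have := E_ge_sqrt h2
      have he : Real.sqrt (1 - (Real.sqrt (1 - r^2))^2) = r := by
        rw [hs, show 1 - (1 - r^2) = r^2 by ring, Real.sqrt_sq (by linarith [hr.1])]
      rw [E']
      calc r * (π/2) = Real.sqrt (1 - (Real.sqrt (1 - r^2))^2) * (π/2) := by rw [he]
        _ ≤ E (Real.sqrt (1 - r^2)) := this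
    · filter_upwards with r
      exact E_le_pi_div_two _
  -- E → 1
  have hE : Tendsto E l (nhds 1) := by
    apply tendsto_of_tendsto_of_tendsto_of_le_of_le' (g := fun _ => (1:ℝ))
      (h := fun r => 1 + Real.sqrt (1 - r^2) * (π/2))
    · exact tendsto_const_nhds
    · have : Tendsto (fun r : ℝ => 1 + Real.sqrt (1 - r^2) * (π/2)) l
        (nhds (1 + 0 * (π/2))) := tendsto_const_nhds.add (hsq0.mul tendsto_const_nhds)
      simpa using this
    · filter_upwards [hEvent] with r hr
      exact E_ge_one (hbasic r hr).2.le
    · filter_upwards [hEvent] with r hr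
      exact E_le_one_add (hbasic r hr).2.le
  -- r^2 → 1
  have hr2 : Tendsto (fun r : ℝ => r^2) l (nhds 1) := by
    have : Tendsto (fun r : ℝ => r^2) l (nhds (1^2)) :=
      (tendsto_id.mono_right nhdsWithin_le_nhds).pow 2
    simpa using this
  -- q = K/(4E'K - π) → 1/(2π)
  have hq : Tendsto (fun r => K r / (4 * E' r * K r - π)) l (nhds (1 / (4 * (π/2) - π * 0))) := by
    have hKne : ∀ᶠ r in l, K r ≠ 0 := by
      filter_upwards [hKtop.eventually (eventually_ge_atTop 1)] with r hr
      linarith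
    have hden : Tendsto (fun r => 4 * E' r - π * (K r)⁻¹) l (nhds (4 * (π/2) - π * 0)) :=
      (hE'.const_mul 4).sub (hKinv.const_mul π)
    have h2 : Tendsto (fun r => 1 / (4 * E' r - π * (K r)⁻¹)) l (nhds (1 / (4 * (π/2) - π * 0))) := by
      apply Tendsto.div tendsto_const_nhds hden
      exact ne_of_gt (by nlinarith [pi_pos])
    apply h2.congr'
    filter_upwards [hKne] with r hK0
    have : 4 * E' r - π * (K r)⁻¹ = (4 * E' r * K r - π) / K r := by
      field_simp
    rw [this, one_div_div]
  -- the rest factor → 0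
  have hrest : Tendsto (fun r => K' r * E r * E' r * (K r)⁻¹ + K' r * (r^2 * K' r - E' r)) l
      (nhds ((π/2) * 1 * (π/2) * 0 + (π/2) * (1 * (π/2) - π/2))) :=
    (((hK'.mul hE).mul hE').mul hKinv).add (hK'.mul ((hr2.mul hK').sub hE'))
  have hmain := (hq.pow 2).mul hrest
  have hzero : (1 / (4 * (π/2) - π * 0))^2 * ((π/2) * 1 * (π/2) * 0 + (π/2) * (1 * (π/2) - π/2)) = 0 := by
    ring
  rw [hzero] at hmain
  -- g agrees eventually with the product
  apply hmain.congr'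
  have hKbig : ∀ᶠ r in l, 1 ≤ K r := hKtop.eventually (eventually_ge_atTop 1)
  have hE'big : ∀ᶠ r in l, 1 < E' r := hE'.eventually (eventually_gt_nhds (by linarith [pi_gt_three]))
  filter_upwards [hKbig, hE'big] with r hK0 hE0
  have hKne : K r ≠ 0 := by linarith
  have hDpos : 0 < 4 * E' r * K r - π := by nlinarith [pi_lt_d2]
  have hDne : 4 * E' r * K r - π ≠ 0 := ne_of_gt hDpos
  rw [g]
  field_simp
  ring
end
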